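/- arXiv:1501.00577 — 5 statements merged into one kernel-verified Lean document; each statement's English description precedes it below -/
import Mathlib

section
/- The square root velocity map Q : AC₀(I,ℝᴺ) → L²(I,ℝᴺ) defined by Q(f) = V ∘ f′ is a bijection. Its inverse sends q ∈ L²(I,ℝᴺ) to the function f(t) = ∫₀ᵗ q(u)|q(u)| du, i.e. this f lies in AC₀(I,ℝᴺ) and satisfies Q(f) = q (almost everywhere), and it is the unique such element of AC₀(I,ℝᴺ). -/
open MeasureTheory Set Filter
open scoped Classical

noncomputable section

/-- Lebesgue measure restricted to the unit interval `I = [0,1]`. -/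
def μ01 : Measure ℝ := volume.restrict (Set.Icc (0:ℝ) 1)

/-- The map `V : ℝᴺ → ℝᴺ`, `V x = x / √|x|` for `x ≠ 0` and `V 0 = 0`. -/
def Vmap {E : Type*} [NormedAddCommGroup E] [NormedSpace ℝ E] (x : E) : E :=
  if x = 0 then 0 else (Real.sqrt ‖x‖)⁻¹ • x

/-- `f ∈ AC₀(I,ℝᴺ)`: `f 0 = 0`, `f` has an a.e. derivative `g` that is Lebesgue
integrable on `I`, and `f t = f 0 + ∫₀ᵗ g` for all `t ∈ I`. -/
def IsAC0 {E : Type*} [NormedAddCommGroup E] [NormedSpace ℝ E] (f : ℝ → E) : Prop :=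
  f 0 = 0 ∧ ∃ g : ℝ → E, IntegrableOn g (Set.Icc (0:ℝ) 1) volume ∧
    ∀ t ∈ Set.Icc (0:ℝ) 1, f t = ∫ u in (0:ℝ)..t, g u

/-- `Q f = q` in `L²`: for a(ny) a.e. derivative `g` of `f`, `V ∘ g = q` almost
everywhere on `I`. -/
def SRVFIs {E : Type*} [NormedAddCommGroup E] [NormedSpace ℝ E] (f q : ℝ → E) : Prop :=
  ∃ g : ℝ → E, IntegrableOn g (Set.Icc (0:ℝ) 1) volume ∧
    (∀ t ∈ Set.Icc (0:ℝ) 1, f t = ∫ u in (0:ℝ)..t, g u) ∧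
    (fun u => Vmap (g u)) =ᵐ[μ01] q

lemma Vmap_W {E : Type*} [NormedAddCommGroup E] [NormedSpace ℝ E] (x : E) :
    Vmap (‖x‖ • x) = x := by
  by_cases hx : x = 0
  · simp [hx, Vmap]
  have hn : ‖x‖ ≠ 0 := norm_ne_zero_iff.mpr hx
  have h0 : ‖x‖ • x ≠ 0 := smul_ne_zero hn hx
  have hnorm : ‖‖x‖ • x‖ = ‖x‖ * ‖x‖ := by
    rw [norm_smul, Real.norm_eq_abs, abs_of_nonneg (norm_nonneg x)]
  rw [Vmap, if_neg h0, hnorm, Real.sqrt_mul_self (norm_nonneg x), smul_smul,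
    inv_mul_cancel₀ hn, one_smul]

lemma W_Vmap {E : Type*} [NormedAddCommGroup E] [NormedSpace ℝ E] (x : E) :
    ‖Vmap x‖ • Vmap x = x := by
  by_cases hx : x = 0
  · simp [hx, Vmap]
  have hn : 0 < ‖x‖ := norm_pos_iff.mpr hx
  have hs : 0 < Real.sqrt ‖x‖ := Real.sqrt_pos.mpr hn
  have key : (Real.sqrt ‖x‖)⁻¹ * ‖x‖ = Real.sqrt ‖x‖ := by
    rw [inv_mul_eq_iff_eq_mul₀ hs.ne', Real.mul_self_sqrt hn.le]
  have hnorm : ‖Vmap x‖ = Real.sqrt ‖x‖ := by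
    rw [Vmap, if_neg hx, norm_smul, Real.norm_eq_abs,
      abs_of_nonneg (inv_nonneg.mpr hs.le), key]
  rw [hnorm, Vmap, if_neg hx, smul_smul, mul_inv_cancel₀ hs.ne', one_smul]

/-- the square root velocity map `Q : AC₀(I,ℝᴺ) → L²(I,ℝᴺ)` is a
bijection, with inverse `q ↦ (t ↦ ∫₀ᵗ q(u)|q(u)| du)`: for every `q ∈ L²(I,ℝᴺ)`,
the function `f₀ t = ∫₀ᵗ ‖q u‖ • q u du` lies in `AC₀(I,ℝᴺ)`, satisfies
`Q f₀ = q` a.e., and is the unique element of `AC₀(I,ℝᴺ)` with this property. -/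
theorem srvf_bijection (N : ℕ) (hN : 1 ≤ N)
    (q : ℝ → EuclideanSpace ℝ (Fin N)) (hq : MemLp q 2 μ01) :
    IsAC0 (fun t => ∫ u in (0:ℝ)..t, ‖q u‖ • q u) ∧
    SRVFIs (fun t => ∫ u in (0:ℝ)..t, ‖q u‖ • q u) q ∧
    ∀ f : ℝ → EuclideanSpace ℝ (Fin N), IsAC0 f → SRVFIs f q →
      ∀ t ∈ Set.Icc (0:ℝ) 1, f t = ∫ u in (0:ℝ)..t, ‖q u‖ • q u := by
  -- integrability of g := fun u => ‖q u‖ • q u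
  set g : ℝ → EuclideanSpace ℝ (Fin N) := fun u => ‖q u‖ • q u with hg
  have hqm : AEStronglyMeasurable q μ01 := hq.aestronglyMeasurable
  have hgm : AEStronglyMeasurable g μ01 := (hqm.norm.smul hqm)
  have hsq : Integrable (fun u => ‖q u‖ ^ 2) μ01 := by
    have h2 := hq.integrable_norm_rpow (by norm_num) (by norm_num)
    have : ∀ u : ℝ, ‖q u‖ ^ ((2:ENNReal).toReal) = ‖q u‖ * ‖q u‖ := by
      intro u
      rw [ENNReal.toReal_ofNat, Real.rpow_two]
      ring
    simpa [this, ← sq] using h2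
  have hgint : Integrable g μ01 := by
    refine hsq.mono' hgm ?_
    filter_upwards with u
    refine le_of_eq ?_
    rw [norm_smul, Real.norm_eq_abs, abs_of_nonneg (norm_nonneg _), sq]
  have hgon : IntegrableOn g (Set.Icc (0:ℝ) 1) volume := hgint
  have hVg : (fun u => Vmap (g u)) =ᵐ[μ01] q :=
    Filter.Eventually.of_forall (fun u => Vmap_W (q u))
  refine ⟨⟨by simp, g, hgon, fun t ht => rfl⟩, ⟨g, hgon, fun t ht => rfl, hVg⟩, ?_⟩
  rintro f hf ⟨g', hg'on, hg'rep, hg'ae⟩ t ht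
  have hae : g' =ᵐ[μ01] g := by
    filter_upwards [hg'ae] with u hu
    calc g' u = ‖Vmap (g' u)‖ • Vmap (g' u) := (W_Vmap _).symm
      _ = ‖q u‖ • q u := by rw [hu]
  have hae' : g' =ᵐ[volume.restrict (Set.Icc (0:ℝ) 1)] g := hae
  have hsub : Set.Ioc (0:ℝ) t ⊆ Set.Icc (0:ℝ) 1 := fun x hx => ⟨hx.1.le, hx.2.trans ht.2⟩
  have hae2 : g' =ᵐ[volume.restrict (Set.Ioc (0:ℝ) t)] g :=
    ae_restrict_of_ae_restrict_of_subset hsub hae'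
  rw [hg'rep t ht, intervalIntegral.integral_of_le ht.1, intervalIntegral.integral_of_le ht.1]
  exact integral_congr_ae hae2

end
end

section
/- For every γ ∈ Γ̃ and all q₁, q₂ ∈ L²(I,ℝᴺ), one has ⟨q₁*γ, q₂*γ⟩ = ⟨q₁, q₂⟩; in particular the right action of the semigroup Γ̃ (and hence of the group Γ) on L²(I,ℝᴺ) preserves the L² inner product and the L² distance. -/
open MeasureTheory Set Filter

noncomputable section

/-- An element of the reparametrization semigroup `Γ̃`: an absolutely continuous
`γ : I → I` with `γ 0 = 0`, `γ 1 = 1`, and `γ' ≥ 0` a.e.; absolute continuity is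
encoded by the data of an integrable a.e. derivative `deriv'` with
`γ t = ∫₀ᵗ deriv'`. -/
structure GammaTilde where
  toFun : ℝ → ℝ
  deriv' : ℝ → ℝ
  integrableOn : IntegrableOn deriv' (Set.Icc (0:ℝ) 1) volume
  nonneg : ∀ᵐ t ∂μ01, 0 ≤ deriv' t
  map_zero : toFun 0 = 0
  map_one : toFun 1 = 1
  eq_integral : ∀ t ∈ Set.Icc (0:ℝ) 1, toFun t = ∫ u in (0:ℝ)..t, deriv' u

/-- `γ ∈ Γ` iff moreover `γ' > 0` almost everywhere. -/
def GammaTilde.IsInGamma (γ : GammaTilde) : Prop := ∀ᵐ t ∂μ01, 0 < γ.deriv' t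

variable {E : Type*} [NormedAddCommGroup E] [InnerProductSpace ℝ E]

/-- The right action `(q*γ)(t) = √(γ'(t)) • q(γ(t))`. -/
def act (q : ℝ → E) (γ : GammaTilde) : ℝ → E :=
  fun t => Real.sqrt (γ.deriv' t) • q (γ.toFun t)

/-- The `L²(I)` inner product `⟨f,g⟩ = ∫₀¹ f·g`. -/
def L2inner (f g : ℝ → E) : ℝ := ∫ t in Set.Icc (0:ℝ) 1, (inner ℝ (f t) (g t) : ℝ)

/-- The `L²(I)` distance. -/
def L2dist (f g : ℝ → E) : ℝ := Real.sqrt (∫ t in Set.Icc (0:ℝ) 1, ‖f t - g t‖^2)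

/-- The orbit `qΓ` of `q` under `Γ` (up to a.e. equality, as befits `L²`). -/
def orbit (q : ℝ → E) : Set (ℝ → E) :=
  {p | ∃ γ : GammaTilde, γ.IsInGamma ∧ p =ᵐ[μ01] act q γ}

/-- The orbit `qΓ̃` of `q` under the semigroup `Γ̃` (up to a.e. equality). -/
def orbitTilde (q : ℝ → E) : Set (ℝ → E) :=
  {p | ∃ γ : GammaTilde, p =ᵐ[μ01] act q γ}

/-- The closure `[q]` of `qΓ` in `L²(I)`. -/
def orbitClosure (q : ℝ → E) : Set (ℝ → E) :=
  {p | MemLp p 2 μ01 ∧ ∀ ε > 0, ∃ r ∈ orbit q, L2dist r p < ε}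


lemma key (γ : GammaTilde) (g : ℝ → ℝ) (hg : AEStronglyMeasurable g μ01) :
    ∫ t, γ.deriv' t * g (γ.toFun t) ∂μ01 = ∫ s, g s ∂μ01 := by
  set f := γ.deriv' with hf
  have hint : IntegrableOn f (Set.Icc (0:ℝ) 1) volume := γ.integrableOn
  have hnn : ∀ᵐ t ∂μ01, 0 ≤ f t := γ.nonneg
  -- the projection onto [0,1]
  set π : ℝ → ℝ := fun t => min (max t 0) 1 with hπdef
  have hπcont : Continuous π := (continuous_id.max continuous_const).min continuous_const
  have hπmem : ∀ t, π t ∈ Set.Icc (0:ℝ) 1 :=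
    fun t => ⟨le_min (le_max_right t 0) zero_le_one, min_le_right _ _⟩
  have hπmono : Monotone π := fun a b h => min_le_min (max_le_max h le_rfl) le_rfl
  have hπid : ∀ t ∈ Set.Icc (0:ℝ) 1, π t = t := by
    intro t ht
    simp [hπdef, max_eq_left ht.1, min_eq_left ht.2]
  -- the primitive
  set P : ℝ → ℝ := fun x => ∫ u in (0:ℝ)..x, f u with hPdef
  have hP0 : P 0 = 0 := intervalIntegral.integral_same
  have hP1 : P 1 = 1 := by
    have := γ.eq_integral 1 ⟨zero_le_one, le_rfl⟩
    rw [γ.map_one] at this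
    exact this.symm
  have hPcont : ContinuousOn P (Set.Icc (0:ℝ) 1) := by
    have h := intervalIntegral.continuousOn_primitive_interval (a := (0:ℝ)) (b := 1) (μ := volume) (f := f)
      (by rwa [uIcc_of_le zero_le_one])
    rwa [uIcc_of_le zero_le_one] at h
  have hPle : ∀ a b : ℝ, a ∈ Set.Icc (0:ℝ) 1 → b ∈ Set.Icc (0:ℝ) 1 → a ≤ b → P a ≤ P b := by
    intro a b ha hb hab
    have i1 : IntervalIntegrable f volume 0 a := by
      refine (hint.mono_set ?_).intervalIntegrable
      rw [uIcc_of_le ha.1]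
      exact Icc_subset_Icc_right ha.2
    have i2 : IntervalIntegrable f volume a b := by
      refine (hint.mono_set ?_).intervalIntegrable
      rw [uIcc_of_le hab]
      exact Icc_subset_Icc ha.1 hb.2
    have hadd : P a + ∫ u in a..b, f u = P b :=
      intervalIntegral.integral_add_adjacent_intervals i1 i2
    have hnonneg : 0 ≤ ∫ u in a..b, f u := by
      refine intervalIntegral.integral_nonneg_of_ae_restrict hab ?_
      exact ae_restrict_of_ae_restrict_of_subset (Icc_subset_Icc ha.1 hb.2) hnn
    linarith
  -- the continuous monotone extension G of γ
  set G : ℝ → ℝ := fun t => P (π t) with hGdef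
  have hGcont : Continuous G := hPcont.comp_continuous hπcont hπmem
  have hGmono : Monotone G := fun a b hab => hPle _ _ (hπmem a) (hπmem b) (hπmono hab)
  have hGmem : ∀ t, G t ∈ Set.Icc (0:ℝ) 1 := by
    intro t
    constructor
    · have := hPle 0 (π t) ⟨le_rfl, zero_le_one⟩ (hπmem t) (hπmem t).1
      simpa [hP0] using this
    · have := hPle (π t) 1 (hπmem t) ⟨zero_le_one, le_rfl⟩ (hπmem t).2
      simpa [hP1] using this
  have hG0 : G 0 = 0 := by
    rw [hGdef]; simp only []
    rw [hπid 0 ⟨le_rfl, zero_le_one⟩, hP0]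
  have hG1 : ∀ t, 1 ≤ t → G t = 1 := by
    intro t ht
    have : π t = 1 := by
      simp [hπdef, min_eq_right, le_max_of_le_left ht]
    rw [hGdef]; simp only []
    rw [this, hP1]
  have hGeq : ∀ t ∈ Set.Icc (0:ℝ) 1, G t = γ.toFun t := by
    intro t ht
    rw [hGdef]; simp only []
    rw [hπid t ht, γ.eq_integral t ht]
  have hGmeas : Measurable G := hGcont.measurable
  -- the weighted measure ν
  set ν : Measure ℝ := μ01.withDensity (fun t => ENNReal.ofReal (f t)) with hνdef
  have hintμ : Integrable f μ01 := hint
  have hνIic : ∀ c : ℝ, c ∈ Set.Icc (0:ℝ) 1 → ν (Iic c) = ENNReal.ofReal (P c) := by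
    intro c hc
    have hinter : Iic c ∩ Set.Icc (0:ℝ) 1 = Set.Icc 0 c := by
      ext t
      constructor
      · rintro ⟨h1, h2, _⟩; exact ⟨h2, h1⟩
      · rintro ⟨h1, h2⟩; exact ⟨h2, h1, h2.trans hc.2⟩
    have hIOn : Integrable f (volume.restrict (Set.Icc 0 c)) :=
      hint.mono_set (Icc_subset_Icc_right hc.2)
    have hnn' : 0 ≤ᵐ[volume.restrict (Set.Icc 0 c)] f :=
      ae_restrict_of_ae_restrict_of_subset (Icc_subset_Icc_right hc.2) hnn
    calc ν (Iic c) = ∫⁻ t in Iic c, ENNReal.ofReal (f t) ∂μ01 :=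
          withDensity_apply _ measurableSet_Iic
      _ = ∫⁻ t in Set.Icc 0 c, ENNReal.ofReal (f t) ∂volume := by
          rw [μ01, Measure.restrict_restrict measurableSet_Iic, hinter]
      _ = ENNReal.ofReal (∫ t in Set.Icc 0 c, f t) :=
          (ofReal_integral_eq_lintegral_ofReal hIOn hnn').symm
      _ = ENNReal.ofReal (P c) := by
          rw [integral_Icc_eq_integral_Ioc, ← intervalIntegral.integral_of_le hc.1]
  have hν_univ : ν Set.univ = 1 := by
    calc ν Set.univ = ∫⁻ t, ENNReal.ofReal (f t) ∂μ01 := by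
          rw [hνdef, withDensity_apply _ MeasurableSet.univ, Measure.restrict_univ]
      _ = ENNReal.ofReal (∫ t, f t ∂μ01) := (ofReal_integral_eq_lintegral_ofReal hintμ hnn).symm
      _ = 1 := by
          have : ∫ t, f t ∂μ01 = P 1 := by
            rw [μ01, hPdef]
            simp only []
            rw [intervalIntegral.integral_of_le zero_le_one, ← integral_Icc_eq_integral_Ioc]
          rw [this, hP1, ENNReal.ofReal_one]
  haveI : IsFiniteMeasure ν := ⟨by rw [hν_univ]; exact ENNReal.one_lt_top⟩
  haveI : IsFiniteMeasure (Measure.map G ν) := by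
    constructor
    rw [Measure.map_apply hGmeas MeasurableSet.univ, Set.preimage_univ, hν_univ]
    exact ENNReal.one_lt_top
  -- the pushforward identity
  have hmap : Measure.map G ν = μ01 := by
    refine Measure.ext_of_Iic _ _ (fun x => ?_)
    rw [Measure.map_apply hGmeas measurableSet_Iic]
    rcases lt_or_ge x 0 with hx | hx
    · have hpre : G ⁻¹' (Iic x) = ∅ := by
        ext t
        simp only [mem_preimage, mem_Iic, mem_empty_iff_false, iff_false, not_le]
        exact lt_of_lt_of_le hx (hGmem t).1
      have h01 : Iic x ∩ Set.Icc (0:ℝ) 1 = ∅ := by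
        ext t
        simp only [mem_inter_iff, mem_Iic, mem_Icc, mem_empty_iff_false, iff_false]
        rintro ⟨h1, h2, _⟩
        linarith
      rw [hpre, measure_empty, μ01, Measure.restrict_apply measurableSet_Iic, h01, measure_empty]
    rcases le_or_gt 1 x with hx1 | hx1
    · have hpre : G ⁻¹' (Iic x) = Set.univ := by
        ext t
        simp only [mem_preimage, mem_Iic, mem_univ, iff_true]
        exact le_trans (hGmem t).2 hx1
      have h01 : Iic x ∩ Set.Icc (0:ℝ) 1 = Set.Icc (0:ℝ) 1 := by
        refine Set.inter_eq_self_of_subset_right ?_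
        intro t ht
        exact le_trans ht.2 hx1
      rw [hpre, hν_univ, μ01, Measure.restrict_apply measurableSet_Iic, h01, Real.volume_Icc]
      norm_num
    · -- 0 ≤ x < 1
      set S := G ⁻¹' (Iic x) with hSdef
      have hScl : IsClosed S := isClosed_Iic.preimage hGcont
      have h0S : (0:ℝ) ∈ S := by
        simp only [hSdef, mem_preimage, mem_Iic, hG0]
        exact hx
      have hSbdd : BddAbove S := by
        refine ⟨1, fun t ht => ?_⟩
        by_contra h
        push_neg at h
        have : G t = 1 := hG1 t h.le
        have : G t ≤ x := ht
        rw [hG1 t h.le] at this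
        linarith
      set c := sSup S with hcdef
      have hcS : c ∈ S := hScl.csSup_mem ⟨0, h0S⟩ hSbdd
      have hc0 : (0:ℝ) ≤ c := le_csSup hSbdd h0S
      have hc1 : c ≤ 1 := by
        refine csSup_le ⟨0, h0S⟩ (fun t ht => ?_)
        by_contra h
        push_neg at h
        have : G t ≤ x := ht
        rw [hG1 t h.le] at this
        linarith
      have hSIic : S = Iic c := by
        refine subset_antisymm (fun t ht => le_csSup hSbdd ht) (fun t ht => ?_)
        exact le_trans (hGmono ht) hcS
      have hGc : G c = x := by
        refine le_antisymm hcS ?_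
        by_contra h
        push_neg at h
        have hev : ∀ᶠ t in nhds c, G t < x :=
          (hGcont.tendsto c).eventually_lt_const h
        have hev' : ∀ᶠ t in nhdsWithin c (Set.Ioi c), G t < x := hev.filter_mono nhdsWithin_le_nhds
        obtain ⟨t, htlt, htS⟩ := (hev'.and self_mem_nhdsWithin).exists
        have : t ≤ c := le_csSup hSbdd htlt.le
        exact absurd htS (not_lt.mpr this)
      have hGcP : G c = P c := by
        rw [hGdef]; simp only []
        rw [hπid c ⟨hc0, hc1⟩]
      have h01 : Iic x ∩ Set.Icc (0:ℝ) 1 = Set.Icc 0 x := by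
        ext t
        constructor
        · rintro ⟨h1, h2, _⟩; exact ⟨h2, h1⟩
        · rintro ⟨h1, h2⟩; exact ⟨h2, h1, h2.trans hx1.le⟩
      rw [hSIic, hνIic c ⟨hc0, hc1⟩, μ01, Measure.restrict_apply measurableSet_Iic, h01,
        Real.volume_Icc, ← hGcP, hGc, sub_zero]
  -- transport along a.e. equality γ.toFun = G
  have hμeq : ∀ᵐ t ∂μ01, γ.toFun t = G t := by
    have hmem : ∀ᵐ t ∂μ01, t ∈ Set.Icc (0:ℝ) 1 := ae_restrict_mem measurableSet_Icc
    filter_upwards [hmem] with t ht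
    exact (hGeq t ht).symm
  have hνac : ν ≪ μ01 := withDensity_absolutelyContinuous _ _
  have htoAE : γ.toFun =ᵐ[ν] G := hνac.ae_le hμeq
  have hmap' : Measure.map γ.toFun ν = μ01 := by
    rw [Measure.map_congr htoAE, hmap]
  have hmeasG : AEMeasurable γ.toFun ν := hGmeas.aemeasurable.congr htoAE.symm
  -- final computation
  have hgm : AEStronglyMeasurable g (Measure.map γ.toFun ν) := by rwa [hmap']
  have h1 : ∫ s, g s ∂μ01 = ∫ t, g (γ.toFun t) ∂ν := by
    rw [← hmap', integral_map hmeasG hgm]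
  have hν' : ν = μ01.withDensity (fun t => ((f t).toNNReal : ENNReal)) := rfl
  have hfNN : AEMeasurable (fun t => (f t).toNNReal) μ01 :=
    measurable_real_toNNReal.comp_aemeasurable hintμ.aemeasurable
  have h2 : ∫ t, g (γ.toFun t) ∂ν = ∫ t, (f t).toNNReal • g (γ.toFun t) ∂μ01 := by
    rw [hν', integral_withDensity_eq_integral_smul₀ hfNN]
  have h3 : ∫ t, (f t).toNNReal • g (γ.toFun t) ∂μ01 = ∫ t, f t * g (γ.toFun t) ∂μ01 := by
    refine integral_congr_ae ?_
    filter_upwards [hnn] with t ht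
    rw [NNReal.smul_def, Real.coe_toNNReal _ ht, smul_eq_mul]
  rw [h1, h2, h3]


/-- `Γ̃` (and hence `Γ`) acts on `L²(I,ℝᴺ)` by isometries:
for every `γ ∈ Γ̃` and all `q₁, q₂ ∈ L²(I,ℝᴺ)`, `⟨q₁*γ, q₂*γ⟩ = ⟨q₁, q₂⟩`, and
the `L²` distance is likewise preserved. -/
theorem action_isometric (N : ℕ) (hN : 1 ≤ N) (γ : GammaTilde)
    (q₁ q₂ : ℝ → EuclideanSpace ℝ (Fin N))
    (h₁ : MemLp q₁ 2 μ01) (h₂ : MemLp q₂ 2 μ01) :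
    L2inner (act q₁ γ) (act q₂ γ) = L2inner q₁ q₂ ∧
    L2dist (act q₁ γ) (act q₂ γ) = L2dist q₁ q₂ := by
  have hinner : ∀ (p₁ p₂ : ℝ → EuclideanSpace ℝ (Fin N)),
      AEStronglyMeasurable p₁ μ01 → AEStronglyMeasurable p₂ μ01 →
      L2inner (act p₁ γ) (act p₂ γ) = L2inner p₁ p₂ := by
    intro p₁ p₂ hm₁ hm₂
    have hg : AEStronglyMeasurable (fun s => (inner ℝ (p₁ s) (p₂ s) : ℝ)) μ01 :=
      hm₁.inner hm₂
    have hcong : ∀ᵐ t ∂μ01, (inner ℝ (act p₁ γ t) (act p₂ γ t) : ℝ)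
        = γ.deriv' t * inner ℝ (p₁ (γ.toFun t)) (p₂ (γ.toFun t)) := by
      filter_upwards [γ.nonneg] with t ht
      simp only [act, real_inner_smul_left, real_inner_smul_right, ← mul_assoc]
      rw [Real.mul_self_sqrt ht]
    show (∫ t, (inner ℝ (act p₁ γ t) (act p₂ γ t) : ℝ) ∂μ01)
        = ∫ t, (inner ℝ (p₁ t) (p₂ t) : ℝ) ∂μ01
    rw [integral_congr_ae hcong]
    exact key γ _ hg
  constructor
  · exact hinner q₁ q₂ h₁.1 h₂.1
  · have hg : AEStronglyMeasurable (fun s => ‖q₁ s - q₂ s‖ ^ 2) μ01 := by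
      have h := (h₁.1.sub h₂.1).norm
      simpa [pow_two] using h.fun_mul h
    have hcong : ∀ᵐ t ∂μ01, ‖act q₁ γ t - act q₂ γ t‖ ^ 2
        = γ.deriv' t * ‖q₁ (γ.toFun t) - q₂ (γ.toFun t)‖ ^ 2 := by
      filter_upwards [γ.nonneg] with t ht
      have : act q₁ γ t - act q₂ γ t
          = Real.sqrt (γ.deriv' t) • (q₁ (γ.toFun t) - q₂ (γ.toFun t)) := by
        simp [act, smul_sub]
      rw [this, norm_smul, mul_pow, Real.norm_eq_abs,
        abs_of_nonneg (Real.sqrt_nonneg _), Real.sq_sqrt ht]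
    unfold L2dist
    congr 1
    show (∫ t, ‖act q₁ γ t - act q₂ γ t‖ ^ 2 ∂μ01) = ∫ t, ‖q₁ t - q₂ t‖ ^ 2 ∂μ01
    rw [integral_congr_ae hcong]
    exact key γ _ hg


end
end

section
/- Let q₀ ∈ L²(I,ℝ) be the constant function 1. Then the closure [q₀] of the orbit q₀Γ in L²(I,ℝ) equals {g ∈ L²(I,ℝ) : ∫₀¹ g(t)² dt = 1 and g(t) ≥ 0 for almost every t ∈ I}, and this set equals {√(γ′) : γ ∈ Γ̃}. -/
open MeasureTheory Set Filter

noncomputable section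

variable {E : Type*} [NormedAddCommGroup E] [InnerProductSpace ℝ E]

/-! ### Auxiliary lemmas -/

lemma setInt (f : ℝ → ℝ) : ∫ t in Set.Icc (0:ℝ) 1, f t = ∫ t, f t ∂μ01 := rfl

lemma intervalInt (f : ℝ → ℝ) : ∫ u in (0:ℝ)..1, f u = ∫ t, f t ∂μ01 := by
  rw [intervalIntegral.integral_of_le zero_le_one, ← setInt,
    MeasureTheory.integral_Icc_eq_integral_Ioc]

lemma mu01_univ : (μ01 Set.univ).toReal = 1 := by
  simp [μ01, Measure.restrict_apply_univ, Real.volume_Icc]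

lemma normsq {f : ℝ → ℝ} (hf : MemLp f 2 μ01) :
    ‖hf.toLp f‖ ^ 2 = ∫ t, f t ^ 2 ∂μ01 := by
  rw [← real_inner_self_eq_norm_sq, L2.inner_def]
  refine integral_congr_ae ?_
  filter_upwards [hf.coeFn_toLp] with t ht
  simp [ht, RCLike.inner_apply, sq]

lemma L2dist_toLp {f h : ℝ → ℝ} (hf : MemLp f 2 μ01) (hh : MemLp h 2 μ01) :
    L2dist f h = ‖hf.toLp f - hh.toLp h‖ := by
  have e1 : ‖hf.toLp f - hh.toLp h‖ ^ 2 = ∫ t, (f t - h t) ^ 2 ∂μ01 := by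
    rw [← MemLp.toLp_sub, normsq]; rfl
  have e2 : ∫ t in Set.Icc (0:ℝ) 1, ‖f t - h t‖^2 = ∫ t, (f t - h t)^2 ∂μ01 := by
    rw [setInt]; exact integral_congr_ae (Eventually.of_forall fun t => by
      simp [Real.norm_eq_abs, sq_abs])
  rw [L2dist, e2, ← e1, Real.sqrt_sq (norm_nonneg _)]

lemma sqrt_sub_sq_le {a b : ℝ} (ha : 0 ≤ a) (hb : 0 ≤ b) :
    (Real.sqrt a - Real.sqrt b)^2 ≤ |a - b| := by
  rcases le_total b a with h | h
  · rw [abs_of_nonneg (by linarith)]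
    have h1 := Real.sq_sqrt ha; have h2 := Real.sq_sqrt hb
    have h3 : Real.sqrt b ≤ Real.sqrt a := Real.sqrt_le_sqrt h
    nlinarith [Real.sqrt_nonneg b]
  · rw [abs_of_nonpos (by linarith)]
    have h1 := Real.sq_sqrt ha; have h2 := Real.sq_sqrt hb
    have h3 : Real.sqrt a ≤ Real.sqrt b := Real.sqrt_le_sqrt h
    nlinarith [Real.sqrt_nonneg a]

lemma deriv_integral_one (γ : GammaTilde) : ∫ t, γ.deriv' t ∂μ01 = 1 := by
  have h := γ.eq_integral 1 (by norm_num)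
  rw [γ.map_one] at h
  rw [← intervalInt]; exact h.symm

lemma memLp_sqrt_deriv (γ : GammaTilde) :
    MemLp (fun t => Real.sqrt (γ.deriv' t)) 2 μ01 := by
  have hd : Integrable γ.deriv' μ01 := γ.integrableOn
  have hm : AEStronglyMeasurable (fun t => Real.sqrt (γ.deriv' t)) μ01 :=
    Real.continuous_sqrt.comp_aestronglyMeasurable hd.aestronglyMeasurable
  rw [memLp_two_iff_integrable_sq hm]
  exact hd.congr (by filter_upwards [γ.nonneg] with t ht; rw [Real.sq_sqrt ht])

lemma integral_sq_sqrt_deriv (γ : GammaTilde) :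
    ∫ t, (Real.sqrt (γ.deriv' t))^2 ∂μ01 = 1 := by
  rw [← deriv_integral_one γ]
  exact integral_congr_ae (by filter_upwards [γ.nonneg] with t ht; rw [Real.sq_sqrt ht])

lemma act_q0_eq (q₀ : ℝ → ℝ) (hq₀ : ∀ t, q₀ t = 1) (γ : GammaTilde) :
    act q₀ γ = fun t => Real.sqrt (γ.deriv' t) := by
  funext t; simp [act, hq₀, smul_eq_mul]

/-- Perturbed reparametrization with derivative `(1-δ)γ' + δ`. -/
def pert (γ : GammaTilde) (δ : ℝ) (h0 : 0 ≤ δ) (h1 : δ ≤ 1) : GammaTilde where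
  toFun := fun t => ∫ u in (0:ℝ)..t, ((1-δ) * γ.deriv' u + δ)
  deriv' := fun t => (1-δ) * γ.deriv' t + δ
  integrableOn := (γ.integrableOn.const_mul _).add
    (integrableOn_const (by rw [Real.volume_Icc]; exact ENNReal.ofReal_ne_top))
  nonneg := by filter_upwards [γ.nonneg] with t ht; nlinarith
  map_zero := by simp
  map_one := by
    have hdi : IntervalIntegrable γ.deriv' volume 0 1 := by
      apply IntegrableOn.intervalIntegrable
      rw [Set.uIcc_of_le zero_le_one]
      exact γ.integrableOn
    have hone : ∫ u in (0:ℝ)..1, γ.deriv' u = 1 := by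
      rw [intervalInt]; exact deriv_integral_one γ
    show (∫ u in (0:ℝ)..1, ((1-δ) * γ.deriv' u + δ)) = 1
    rw [intervalIntegral.integral_add (hdi.const_mul _) intervalIntegrable_const,
      intervalIntegral.integral_const_mul, hone, intervalIntegral.integral_const]
    simp
  eq_integral := fun t _ => rfl

@[simp] lemma pert_deriv (γ : GammaTilde) (δ : ℝ) (h0 : 0 ≤ δ) (h1 : δ ≤ 1) :
    (pert γ δ h0 h1).deriv' = fun t => (1-δ) * γ.deriv' t + δ := rfl


instance : IsFiniteMeasure μ01 := by
  constructor
  show volume.restrict (Set.Icc (0:ℝ) 1) Set.univ < ⊤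
  rw [Measure.restrict_apply_univ, Real.volume_Icc]
  exact ENNReal.ofReal_lt_top

/-- for the constant function `q₀ ≡ 1`, the closure `[q₀]` of the
orbit `q₀Γ` in `L²(I,ℝ)` is exactly the set of `g ∈ L²(I,ℝ)` with `∫₀¹ g² = 1`
and `g ≥ 0` a.e., and this set equals `{√(γ′) : γ ∈ Γ̃}` (in `L²`, i.e. up to
a.e. equality). -/
theorem closure_of_constant_orbit (q₀ : ℝ → ℝ) (hq₀ : ∀ t, q₀ t = 1)
    (g : ℝ → ℝ) (hg : MemLp g 2 μ01) :
    (g ∈ orbitClosure q₀ ↔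
      (∫ t in Set.Icc (0:ℝ) 1, (g t)^2 = 1 ∧ ∀ᵐ t ∂μ01, 0 ≤ g t)) ∧
    (g ∈ orbitClosure q₀ ↔
      ∃ γ : GammaTilde, g =ᵐ[μ01] fun t => Real.sqrt (γ.deriv' t)) := by
  -- Facts about orbit elements
  have key : ∀ r ∈ orbit q₀, MemLp r 2 μ01 ∧ (∫ t, r t ^ 2 ∂μ01) = 1 ∧
      ∀ᵐ t ∂μ01, 0 ≤ r t := by
    rintro r ⟨γ, -, hr⟩
    rw [act_q0_eq q₀ hq₀ γ] at hr
    refine ⟨(memLp_sqrt_deriv γ).ae_eq hr.symm, ?_, ?_⟩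
    · rw [integral_congr_ae (hr.mono fun t ht => by rw [ht]), integral_sq_sqrt_deriv γ]
    · filter_upwards [hr] with t ht; rw [ht]; exact Real.sqrt_nonneg _
  -- A → B
  have hAB : g ∈ orbitClosure q₀ →
      (∫ t in Set.Icc (0:ℝ) 1, (g t)^2 = 1 ∧ ∀ᵐ t ∂μ01, 0 ≤ g t) := by
    rintro ⟨-, happrox⟩
    constructor
    · -- norm is 1
      have hnorm : ‖hg.toLp g‖ = 1 := by
        by_contra hne
        have hpos : 0 < |‖hg.toLp g‖ - 1| := abs_pos.2 (sub_ne_zero.2 hne)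
        obtain ⟨r, hro, hdist⟩ := happrox _ hpos
        obtain ⟨hrm, hri, -⟩ := key r hro
        have hr1 : ‖hrm.toLp r‖ = 1 := by
          have h2 := (normsq hrm).trans hri
          nlinarith [norm_nonneg (hrm.toLp r)]
        rw [L2dist_toLp hrm hg] at hdist
        have : |‖hg.toLp g‖ - 1| ≤ ‖hrm.toLp r - hg.toLp g‖ := by
          rw [← hr1]
          calc |‖hg.toLp g‖ - ‖hrm.toLp r‖| ≤ ‖hg.toLp g - hrm.toLp r‖ :=
                abs_norm_sub_norm_le _ _
            _ = ‖hrm.toLp r - hg.toLp g‖ := norm_sub_rev _ _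
        linarith
      rw [setInt, ← normsq hg, hnorm]; norm_num
    · -- nonnegativity
      set m : ℝ → ℝ := fun t => (min (g t) 0)^2 with hm
      have hmeas : AEStronglyMeasurable m μ01 := by
        have h1 : AEMeasurable (fun t => min (g t) 0) μ01 :=
          hg.aestronglyMeasurable.aemeasurable.min aemeasurable_const
        exact ((h1.mul h1).congr (Eventually.of_forall fun t =>
          (sq (min (g t) 0)).symm)).aestronglyMeasurable
      have hmint : Integrable m μ01 := by
        refine Integrable.mono' hg.integrable_sq hmeas ?_
        refine Eventually.of_forall fun t => ?_
        rw [Real.norm_eq_abs, abs_of_nonneg (sq_nonneg _)]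
        rcases le_total (g t) 0 with h | h
        · simp [hm, min_eq_left h]
        · simp [hm, min_eq_right h, sq_nonneg]
      have hmzero : ∫ t, m t ∂μ01 = 0 := by
        by_contra hne
        have hmn : 0 ≤ ∫ t, m t ∂μ01 := integral_nonneg fun t => sq_nonneg _
        have hmp : 0 < ∫ t, m t ∂μ01 := lt_of_le_of_ne hmn (Ne.symm hne)
        obtain ⟨r, hro, hdist⟩ := happrox (Real.sqrt (∫ t, m t ∂μ01)) (Real.sqrt_pos.2 hmp)
        obtain ⟨hrm, -, hrnn⟩ := key r hro
        have hsub : Integrable (fun t => (r t - g t)^2) μ01 := by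
          have h3 := (hrm.sub hg).integrable_sq
          simpa using h3
        have hXeq : ∫ t in Set.Icc (0:ℝ) 1, ‖r t - g t‖^2 = ∫ t, (r t - g t)^2 ∂μ01 := by
          rw [setInt]
          exact integral_congr_ae (Eventually.of_forall fun t => by
            simp [Real.norm_eq_abs, sq_abs])
        have hle : ∫ t, m t ∂μ01 ≤ ∫ t, (r t - g t)^2 ∂μ01 := by
          refine integral_mono_ae hmint hsub ?_
          filter_upwards [hrnn] with t ht
          rcases le_total (g t) 0 with h | h
          · have hmt : m t = (g t)^2 := by simp [hm, min_eq_left h]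
            rw [hmt]; nlinarith
          · have hmt : m t = 0 := by simp [hm, min_eq_right h]
            rw [hmt]; exact sq_nonneg _
        have hXlt : ∫ t, (r t - g t)^2 ∂μ01 < ∫ t, m t ∂μ01 := by
          have h2 : Real.sqrt (∫ t in Set.Icc (0:ℝ) 1, ‖r t - g t‖^2)
              < Real.sqrt (∫ t, m t ∂μ01) := hdist
          rw [hXeq] at h2
          by_contra hcon
          push_neg at hcon
          exact absurd h2 (not_lt.2 (Real.sqrt_le_sqrt hcon))
        linarith
      have hae : m =ᵐ[μ01] 0 :=
        (integral_eq_zero_iff_of_nonneg_ae (Eventually.of_forall fun t => sq_nonneg _)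
          hmint).1 hmzero
      filter_upwards [hae] with t ht
      have h0 : (min (g t) 0)^2 = 0 := by simpa [hm] using ht
      have h1 : min (g t) 0 = 0 := by
        exact pow_eq_zero_iff two_ne_zero |>.1 h0
      exact min_eq_right_iff.1 h1
  -- B → C
  have hBC : (∫ t in Set.Icc (0:ℝ) 1, (g t)^2 = 1 ∧ ∀ᵐ t ∂μ01, 0 ≤ g t) →
      ∃ γ : GammaTilde, g =ᵐ[μ01] fun t => Real.sqrt (γ.deriv' t) := by
    rintro ⟨hint, hpos⟩
    refine ⟨⟨fun t => ∫ u in (0:ℝ)..t, (g u)^2, fun t => (g t)^2, hg.integrable_sq,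
      Eventually.of_forall fun t => sq_nonneg _, by simp, ?_, fun t _ => rfl⟩, ?_⟩
    · show (∫ u in (0:ℝ)..1, (g u)^2) = 1
      rw [intervalInt]
      rw [setInt] at hint
      exact hint
    · filter_upwards [hpos] with t ht
      exact (Real.sqrt_sq ht).symm
  -- C → A
  have hCA : (∃ γ : GammaTilde, g =ᵐ[μ01] fun t => Real.sqrt (γ.deriv' t)) →
      g ∈ orbitClosure q₀ := by
    rintro ⟨γ, hge⟩
    refine ⟨hg, fun ε hε => ?_⟩
    set δ : ℝ := min (ε^2/4) (1/2) with hδ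
    have hδ0 : 0 < δ := lt_min (by positivity) (by norm_num)
    have hδ1 : δ ≤ 1 := le_trans (min_le_right _ _) (by norm_num)
    set γδ := pert γ δ hδ0.le hδ1 with hγδ
    set r : ℝ → ℝ := fun t => Real.sqrt ((1-δ) * γ.deriv' t + δ) with hr
    have hract : r = act q₀ γδ := by
      rw [act_q0_eq q₀ hq₀ γδ]
      rfl
    have horb : r ∈ orbit q₀ := by
      refine ⟨γδ, ?_, hract ▸ EventuallyEq.rfl⟩
      filter_upwards [γ.nonneg] with t ht
      show 0 < (1-δ) * γ.deriv' t + δ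
      nlinarith
    refine ⟨r, horb, ?_⟩
    have hrm : MemLp r 2 μ01 := memLp_sqrt_deriv γδ
    have hsubint : Integrable (fun t => (r t - g t)^2) μ01 := by
      have h3 := (hrm.sub hg).integrable_sq
      simpa using h3
    have hint2 : Integrable (fun t => δ * (1 + γ.deriv' t)) μ01 :=
      ((integrable_const (1:ℝ)).add (γ.integrableOn : Integrable _ μ01)).const_mul δ
    have hae : ∀ᵐ t ∂μ01, (r t - g t)^2 ≤ δ * (1 + γ.deriv' t) := by
      filter_upwards [hge, γ.nonneg] with t ht hd
      have ha : (0:ℝ) ≤ (1-δ) * γ.deriv' t + δ := by nlinarith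
      have h1 : (r t - g t)^2 ≤ |((1-δ) * γ.deriv' t + δ) - γ.deriv' t| := by
        rw [hr, ht]
        exact sqrt_sub_sq_le ha hd
      have h2 : ((1-δ) * γ.deriv' t + δ) - γ.deriv' t = δ * (1 - γ.deriv' t) := by ring
      have h3 : |1 - γ.deriv' t| ≤ 1 + γ.deriv' t :=
        abs_le.2 ⟨by linarith, by linarith⟩
      calc (r t - g t)^2 ≤ |δ * (1 - γ.deriv' t)| := by rw [← h2]; exact h1
        _ = δ * |1 - γ.deriv' t| := by rw [abs_mul, abs_of_nonneg hδ0.le]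
        _ ≤ δ * (1 + γ.deriv' t) := mul_le_mul_of_nonneg_left h3 hδ0.le
    have hval : ∫ t, δ * (1 + γ.deriv' t) ∂μ01 = 2 * δ := by
      have hc : Integrable (fun _ : ℝ => (1:ℝ)) μ01 := integrable_const 1
      have hd : Integrable γ.deriv' μ01 := γ.integrableOn
      rw [integral_const_mul, integral_add hc hd, integral_const, measureReal_def, mu01_univ,
        deriv_integral_one γ]
      simp only [smul_eq_mul, one_mul]
      ring
    have hbound : ∫ t, (r t - g t)^2 ∂μ01 ≤ 2 * δ := by
      rw [← hval]
      exact integral_mono_ae hsubint hint2 hae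
    have hX : ∫ t in Set.Icc (0:ℝ) 1, ‖r t - g t‖^2 < ε^2 := by
      have hXeq : ∫ t in Set.Icc (0:ℝ) 1, ‖r t - g t‖^2 = ∫ t, (r t - g t)^2 ∂μ01 := by
        rw [setInt]
        exact integral_congr_ae (Eventually.of_forall fun t => by
          simp [Real.norm_eq_abs, sq_abs])
      rw [hXeq]
      have hd2 : 2 * δ ≤ ε^2 / 2 := by
        have := min_le_left (ε^2/4) (1/2:ℝ)
        calc 2 * δ ≤ 2 * (ε^2/4) := by linarith
          _ = ε^2/2 := by ring
      have : ε^2/2 < ε^2 := by nlinarith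
      linarith
    rw [L2dist]
    exact (Real.sqrt_lt' hε).2 hX
  exact ⟨⟨hAB, fun hb => hCA (hBC hb)⟩, ⟨fun ha => hBC (hAB ha), hCA⟩⟩

end
end

section
/- Let 0 ≤ a < b ≤ 1 and suppose q, w ∈ L²(I,ℝ) satisfy ∫₀¹ q² = ∫₀¹ w² = 1 together with: (1) q(t) ≥ 0 and w(t) ≥ 0 for almost every t ∈ (a,b); (2) ∫ₐᵇ q(t)² dt = ∫ₐᵇ w(t)² dt; (3) q(t) = w(t) for almost every t ∉ (a,b). Then [q] = [w]. -/
open MeasureTheory Set Filter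

noncomputable section

variable {E : Type*} [NormedAddCommGroup E] [InnerProductSpace ℝ E]

open scoped ENNReal Topology

namespace GammaTilde

variable (γ : GammaTilde)

lemma integrableOn_sub (γ : GammaTilde) {s : Set ℝ} (hs : s ⊆ Set.Icc (0:ℝ) 1) :
    IntegrableOn γ.deriv' s volume := γ.integrableOn.mono_set hs

lemma nonneg_restrict (γ : GammaTilde) {s : Set ℝ} (hs : s ⊆ Set.Icc (0:ℝ) 1) :
    ∀ᵐ t ∂(volume.restrict s), 0 ≤ γ.deriv' t :=
  ae_restrict_of_ae_restrict_of_subset hs γ.nonneg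

lemma intervalIntegrable (γ : GammaTilde) {s t : ℝ} (hs : s ∈ Set.Icc (0:ℝ) 1)
    (ht : t ∈ Set.Icc (0:ℝ) 1) : IntervalIntegrable γ.deriv' volume s t := by
  have hsub : Set.uIcc s t ⊆ Set.Icc (0:ℝ) 1 := by
    rw [Set.uIcc]
    exact Set.Icc_subset_Icc (le_inf hs.1 ht.1) (sup_le hs.2 ht.2)
  exact (γ.integrableOn_sub hsub).intervalIntegrable

lemma integral_deriv (γ : GammaTilde) {s t : ℝ} (hs : s ∈ Set.Icc (0:ℝ) 1)
    (ht : t ∈ Set.Icc (0:ℝ) 1) :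
    ∫ u in s..t, γ.deriv' u = γ.toFun t - γ.toFun s := by
  have h0 : (0:ℝ) ∈ Set.Icc (0:ℝ) 1 := by norm_num
  rw [γ.eq_integral t ht, γ.eq_integral s hs]
  rw [eq_sub_iff_add_eq, add_comm]
  exact intervalIntegral.integral_add_adjacent_intervals
    (γ.intervalIntegrable h0 hs) (γ.intervalIntegrable hs ht)

lemma monotoneOn : MonotoneOn γ.toFun (Set.Icc (0:ℝ) 1) := by
  intro s hs t ht hst
  have := γ.integral_deriv hs ht
  have hnn : 0 ≤ ∫ u in s..t, γ.deriv' u := by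
    apply intervalIntegral.integral_nonneg_of_ae_restrict hst
    exact γ.nonneg_restrict (Set.Icc_subset_Icc hs.1 ht.2)
  linarith

lemma continuousOn : ContinuousOn γ.toFun (Set.Icc (0:ℝ) 1) := by
  have h01 : Set.uIcc (0:ℝ) 1 = Set.Icc 0 1 := Set.uIcc_of_le (by norm_num)
  have h := intervalIntegral.continuousOn_primitive_interval
    (f := γ.deriv') (μ := volume) (a := 0) (b := 1) (by rw [h01]; exact γ.integrableOn)
  rw [h01] at h
  exact h.congr (fun t ht => γ.eq_integral t ht)

lemma mapsTo {t : ℝ} (ht : t ∈ Set.Icc (0:ℝ) 1) : γ.toFun t ∈ Set.Icc (0:ℝ) 1 := by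
  constructor
  · have := γ.monotoneOn (by norm_num : (0:ℝ) ∈ Set.Icc (0:ℝ) 1) ht ht.1
    rwa [γ.map_zero] at this
  · have := γ.monotoneOn ht (by norm_num : (1:ℝ) ∈ Set.Icc (0:ℝ) 1) ht.2
    rwa [γ.map_one] at this

/-- The density measure `γ' dμ01`. -/
def dmeas (γ : GammaTilde) : Measure ℝ :=
  μ01.withDensity (fun t => ENNReal.ofReal (γ.deriv' t))

lemma dmeas_Iic {v : ℝ} (hv : v ∈ Set.Icc (0:ℝ) 1) :
    γ.dmeas (Set.Iic v) = ENNReal.ofReal (γ.toFun v) := by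
  rw [dmeas, withDensity_apply _ measurableSet_Iic, μ01, Measure.restrict_restrict measurableSet_Iic]
  have : Set.Iic v ∩ Set.Icc (0:ℝ) 1 = Set.Icc (0:ℝ) v := by
    ext x; simp only [Set.mem_inter_iff, Set.mem_Iic, Set.mem_Icc]
    constructor
    · rintro ⟨h1, h2, h3⟩; exact ⟨h2, h1⟩
    · rintro ⟨h1, h2⟩; exact ⟨h2, h1, h2.trans hv.2⟩
  rw [this, ← ofReal_integral_eq_lintegral_ofReal
    (γ.integrableOn_sub (Set.Icc_subset_Icc le_rfl hv.2))
    (γ.nonneg_restrict (Set.Icc_subset_Icc le_rfl hv.2))]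
  congr 1
  rw [MeasureTheory.integral_Icc_eq_integral_Ioc, ← intervalIntegral.integral_of_le hv.1]
  have := γ.integral_deriv (by norm_num : (0:ℝ) ∈ Set.Icc (0:ℝ) 1) hv
  rw [this, γ.map_zero, sub_zero]

lemma dmeas_compl : γ.dmeas (Set.Icc (0:ℝ) 1)ᶜ = 0 := by
  have : μ01 (Set.Icc (0:ℝ) 1)ᶜ = 0 := by
    rw [μ01, Measure.restrict_apply (measurableSet_Icc.compl)]
    simp
  exact (withDensity_absolutelyContinuous μ01 _) this

lemma aemeasurable_toFun : AEMeasurable γ.toFun μ01 :=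
  (γ.continuousOn.aemeasurable measurableSet_Icc)

instance : IsFiniteMeasure γ.dmeas := by
  constructor
  rw [dmeas, withDensity_apply _ MeasurableSet.univ, Measure.restrict_univ]
  calc ∫⁻ t, ENNReal.ofReal (γ.deriv' t) ∂μ01 = ENNReal.ofReal (∫ t, γ.deriv' t ∂μ01) :=
        (ofReal_integral_eq_lintegral_ofReal γ.integrableOn γ.nonneg).symm
      _ < ⊤ := ENNReal.ofReal_lt_top

/-- Key pushforward identity: `γ` pushes `γ'·μ01` forward to `μ01`. -/
theorem map_dmeas : γ.dmeas.map γ.toFun = μ01 := by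
  have haem : AEMeasurable γ.toFun γ.dmeas :=
    γ.aemeasurable_toFun.mono_ac (withDensity_absolutelyContinuous μ01 _)
  refine Measure.ext_of_Iic _ _ (fun x => ?_)
  rw [Measure.map_apply_of_aemeasurable haem measurableSet_Iic]
  rw [← measure_inter_conull (s := γ.toFun ⁻¹' Set.Iic x) γ.dmeas_compl]
  have hμ : μ01 (Set.Iic x) = volume (Set.Iic x ∩ Set.Icc (0:ℝ) 1) := by
    rw [μ01, Measure.restrict_apply measurableSet_Iic]
  rcases lt_or_ge x 0 with hx | hx
  · have h1 : γ.toFun ⁻¹' Set.Iic x ∩ Set.Icc (0:ℝ) 1 = ∅ := by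
      ext t; simp only [Set.mem_inter_iff, Set.mem_preimage, Set.mem_Iic, Set.mem_empty_iff_false,
        iff_false, not_and]
      intro h ht
      have := (γ.mapsTo ht).1
      linarith
    have h2 : Set.Iic x ∩ Set.Icc (0:ℝ) 1 = ∅ := by
      ext t; simp only [Set.mem_inter_iff, Set.mem_Iic, Set.mem_Icc, Set.mem_empty_iff_false,
        iff_false, not_and]
      intro h h1' h2'; linarith
    rw [h1, hμ, h2]; simp
  rcases le_or_gt x 1 with hx1 | hx1
  · -- main case x ∈ [0,1]
    set S := Set.Icc (0:ℝ) 1 ∩ γ.toFun ⁻¹' Set.Iic x with hS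
    have hScl : IsClosed S :=
      γ.continuousOn.preimage_isClosed_of_isClosed isClosed_Icc isClosed_Iic
    have hSne : S.Nonempty := ⟨0, ⟨by norm_num, by
      simp only [Set.mem_preimage, Set.mem_Iic, γ.map_zero]; exact hx⟩⟩
    have hSbdd : BddAbove S := ⟨1, fun t ht => ht.1.2⟩
    have hScomp : IsCompact S := isCompact_Icc.of_isClosed_subset hScl Set.inter_subset_left
    set v := sSup S with hv
    have hvS : v ∈ S := hScomp.sSup_mem hSne
    have hvIcc : v ∈ Set.Icc (0:ℝ) 1 := hvS.1
    have hSeq : γ.toFun ⁻¹' Set.Iic x ∩ Set.Icc (0:ℝ) 1 = Set.Iic v ∩ Set.Icc (0:ℝ) 1 := by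
      ext t
      simp only [Set.mem_inter_iff, Set.mem_preimage, Set.mem_Iic]
      constructor
      · rintro ⟨h1, h2⟩
        exact ⟨le_csSup hSbdd ⟨h2, h1⟩, h2⟩
      · rintro ⟨h1, h2⟩
        exact ⟨(γ.monotoneOn h2 hvIcc h1).trans hvS.2, h2⟩
    have hγv : γ.toFun v = x := by
      obtain ⟨t₀, ht₀, hgt₀⟩ : ∃ t₀ ∈ Set.Icc (0:ℝ) 1, γ.toFun t₀ = x := by
        have : x ∈ Set.Icc (γ.toFun 0) (γ.toFun 1) := by
          rw [γ.map_zero, γ.map_one]; exact ⟨hx, hx1⟩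
        obtain ⟨t₀, ht₀, hgt₀⟩ :=
          intermediate_value_Icc (by norm_num : (0:ℝ) ≤ 1) γ.continuousOn this
        exact ⟨t₀, ht₀, hgt₀⟩
      have h1 : t₀ ≤ v := le_csSup hSbdd ⟨ht₀, by simp [hgt₀]⟩
      have h2 : γ.toFun v ≤ x := hvS.2
      have h3 : x ≤ γ.toFun v := hgt₀ ▸ γ.monotoneOn ht₀ hvIcc h1
      linarith
    rw [hSeq, measure_inter_conull γ.dmeas_compl, γ.dmeas_Iic hvIcc, hγv, hμ]
    have : Set.Iic x ∩ Set.Icc (0:ℝ) 1 = Set.Icc 0 x := by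
      ext t; simp only [Set.mem_inter_iff, Set.mem_Iic, Set.mem_Icc]
      exact ⟨fun ⟨h1, h2, h3⟩ => ⟨h2, h1⟩, fun ⟨h1, h2⟩ => ⟨h2, h1, h2.trans hx1⟩⟩
    rw [this, Real.volume_Icc, sub_zero]
  · -- case 1 < x
    have h1 : γ.toFun ⁻¹' Set.Iic x ∩ Set.Icc (0:ℝ) 1 = Set.Iic 1 ∩ Set.Icc (0:ℝ) 1 := by
      ext t; simp only [Set.mem_inter_iff, Set.mem_preimage, Set.mem_Iic]
      constructor
      · rintro ⟨_, h2⟩; exact ⟨h2.2, h2⟩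
      · rintro ⟨_, h2⟩; exact ⟨(γ.mapsTo h2).2.trans hx1.le, h2⟩
    rw [h1, measure_inter_conull γ.dmeas_compl,
      γ.dmeas_Iic (by norm_num : (1:ℝ) ∈ Set.Icc (0:ℝ) 1), γ.map_one, hμ]
    have : Set.Iic x ∩ Set.Icc (0:ℝ) 1 = Set.Icc 0 1 := by
      ext t; simp only [Set.mem_inter_iff, Set.mem_Iic, Set.mem_Icc]
      exact ⟨fun ⟨h1', h2⟩ => h2, fun h2 => ⟨h2.2.trans hx1.le, h2⟩⟩
    rw [this, Real.volume_Icc, sub_zero]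


lemma dmeas_inter_Icc (γ : GammaTilde) (s : Set ℝ) :
    γ.dmeas (s ∩ Set.Icc (0:ℝ) 1) = γ.dmeas s :=
  measure_inter_conull γ.dmeas_compl

lemma Iic_inter_Icc {v : ℝ} (hv : v ≤ 1) :
    Set.Iic v ∩ Set.Icc (0:ℝ) 1 = Set.Icc (0:ℝ) v := by
  ext t; simp only [Set.mem_inter_iff, Set.mem_Iic, Set.mem_Icc]
  exact ⟨fun ⟨h1, h2, h3⟩ => ⟨h2, h1⟩, fun ⟨h1, h2⟩ => ⟨h2, h1, h2.trans hv⟩⟩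

lemma dmeas_Icc (γ : GammaTilde) {v : ℝ} (hv : v ∈ Set.Icc (0:ℝ) 1) :
    γ.dmeas (Set.Icc (0:ℝ) v) = ENNReal.ofReal (γ.toFun v) := by
  rw [← Iic_inter_Icc hv.2, γ.dmeas_inter_Icc, γ.dmeas_Iic hv]

/-- For `x ∈ [0,1]` there is `v` with `γ v = x` and `γ⁻¹(-∞,x] ∩ [0,1] = (-∞,v] ∩ [0,1]`. -/
lemma exists_pullback (γ : GammaTilde) {x : ℝ} (hx : 0 ≤ x) (hx1 : x ≤ 1) :
    ∃ v ∈ Set.Icc (0:ℝ) 1, γ.toFun v = x ∧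
      γ.toFun ⁻¹' (Set.Iic x) ∩ Set.Icc (0:ℝ) 1 = Set.Iic v ∩ Set.Icc (0:ℝ) 1 := by
  set S := Set.Icc (0:ℝ) 1 ∩ γ.toFun ⁻¹' Set.Iic x with hS
  have hScl : IsClosed S :=
    γ.continuousOn.preimage_isClosed_of_isClosed isClosed_Icc isClosed_Iic
  have hSne : S.Nonempty := ⟨0, ⟨by norm_num, by
    simp only [Set.mem_preimage, Set.mem_Iic, γ.map_zero]; exact hx⟩⟩
  have hSbdd : BddAbove S := ⟨1, fun t ht => ht.1.2⟩
  have hScomp : IsCompact S := isCompact_Icc.of_isClosed_subset hScl Set.inter_subset_left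
  set v := sSup S with hv
  have hvS : v ∈ S := hScomp.sSup_mem hSne
  have hvIcc : v ∈ Set.Icc (0:ℝ) 1 := hvS.1
  have hSeq : γ.toFun ⁻¹' Set.Iic x ∩ Set.Icc (0:ℝ) 1 = Set.Iic v ∩ Set.Icc (0:ℝ) 1 := by
    ext t
    simp only [Set.mem_inter_iff, Set.mem_preimage, Set.mem_Iic]
    constructor
    · rintro ⟨h1, h2⟩
      exact ⟨le_csSup hSbdd ⟨h2, h1⟩, h2⟩
    · rintro ⟨h1, h2⟩
      exact ⟨(γ.monotoneOn h2 hvIcc h1).trans hvS.2, h2⟩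
  refine ⟨v, hvIcc, ?_, hSeq⟩
  obtain ⟨t₀, ht₀, hgt₀⟩ : ∃ t₀ ∈ Set.Icc (0:ℝ) 1, γ.toFun t₀ = x := by
    have hmem : x ∈ Set.Icc (γ.toFun 0) (γ.toFun 1) := by
      rw [γ.map_zero, γ.map_one]; exact ⟨hx, hx1⟩
    obtain ⟨t₀, ht₀, hgt₀⟩ :=
      intermediate_value_Icc (by norm_num : (0:ℝ) ≤ 1) γ.continuousOn hmem
    exact ⟨t₀, ht₀, hgt₀⟩
  have h1 : t₀ ≤ v := le_csSup hSbdd ⟨ht₀, by simp [Set.mem_preimage, hgt₀]⟩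
  have h2 : γ.toFun v ≤ x := hvS.2
  have h3 : x ≤ γ.toFun v := hgt₀ ▸ γ.monotoneOn ht₀ hvIcc h1
  linarith

/-- Restricted pushforward identity. -/
theorem map_dmeas_restrict (γ : GammaTilde) {t : ℝ} (ht : t ∈ Set.Icc (0:ℝ) 1) :
    (γ.dmeas.restrict (Set.Icc 0 t)).map γ.toFun = volume.restrict (Set.Icc 0 (γ.toFun t)) := by
  have hγt := γ.mapsTo ht
  have haem : AEMeasurable γ.toFun (γ.dmeas.restrict (Set.Icc 0 t)) :=
    (γ.aemeasurable_toFun.mono_ac (withDensity_absolutelyContinuous μ01 _)).mono_measure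
      Measure.restrict_le_self
  haveI : IsFiniteMeasure (γ.dmeas.restrict (Set.Icc 0 t)) := inferInstance
  haveI : IsFiniteMeasure ((γ.dmeas.restrict (Set.Icc 0 t)).map γ.toFun) := by
    constructor
    rw [Measure.map_apply_of_aemeasurable haem MeasurableSet.univ]
    exact (measure_lt_top _ _)
  refine Measure.ext_of_Iic _ _ (fun x => ?_)
  rw [Measure.map_apply_of_aemeasurable haem measurableSet_Iic,
    Measure.restrict_apply' measurableSet_Icc, Measure.restrict_apply' measurableSet_Icc]
  have hsub : Set.Icc (0:ℝ) t ⊆ Set.Icc (0:ℝ) 1 := Set.Icc_subset_Icc le_rfl ht.2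
  rcases lt_or_ge x 0 with hx | hx
  · have h1 : γ.toFun ⁻¹' Set.Iic x ∩ Set.Icc (0:ℝ) t = ∅ := by
      ext u; simp only [Set.mem_inter_iff, Set.mem_preimage, Set.mem_Iic,
        Set.mem_empty_iff_false, iff_false, not_and]
      intro h hu
      have := (γ.mapsTo (hsub hu)).1
      linarith
    have h2 : Set.Iic x ∩ Set.Icc (0:ℝ) (γ.toFun t) = ∅ := by
      ext u; simp only [Set.mem_inter_iff, Set.mem_Iic, Set.mem_Icc,
        Set.mem_empty_iff_false, iff_false, not_and]
      intro h h1' h2'; linarith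
    rw [h1, h2]; simp
  rcases lt_or_ge x (γ.toFun t) with hxt | hxt
  · -- 0 ≤ x < γ t
    obtain ⟨v, hvIcc, hγv, hSeq⟩ := γ.exists_pullback hx (hxt.le.trans hγt.2)
    have hvt : v ≤ t := by
      by_contra hvt
      push_neg at hvt
      have := γ.monotoneOn ht hvIcc hvt.le
      rw [hγv] at this
      linarith
    have h1 : γ.toFun ⁻¹' Set.Iic x ∩ Set.Icc (0:ℝ) t = Set.Icc (0:ℝ) v := by
      have : γ.toFun ⁻¹' Set.Iic x ∩ Set.Icc (0:ℝ) t
          = (γ.toFun ⁻¹' Set.Iic x ∩ Set.Icc (0:ℝ) 1) ∩ Set.Icc (0:ℝ) t := by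
        rw [Set.inter_assoc]
        congr 1
        rw [Set.inter_eq_right.mpr hsub]
      rw [this, hSeq]
      ext u
      simp only [Set.mem_inter_iff, Set.mem_Iic, Set.mem_Icc]
      constructor
      · rintro ⟨⟨h1', _⟩, h2', _⟩; exact ⟨h2', h1'⟩
      · rintro ⟨h1', h2'⟩
        exact ⟨⟨h2', h1', (h2'.trans hvIcc.2)⟩, h1', h2'.trans hvt⟩
    have h2 : Set.Iic x ∩ Set.Icc (0:ℝ) (γ.toFun t) = Set.Icc (0:ℝ) x := by
      ext u; simp only [Set.mem_inter_iff, Set.mem_Iic, Set.mem_Icc]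
      exact ⟨fun ⟨a1, a2, a3⟩ => ⟨a2, a1⟩, fun ⟨a1, a2⟩ => ⟨a2, a1, a2.trans hxt.le⟩⟩
    rw [h1, h2, γ.dmeas_Icc hvIcc, hγv, Real.volume_Icc, sub_zero]
  · -- γ t ≤ x
    have h1 : γ.toFun ⁻¹' Set.Iic x ∩ Set.Icc (0:ℝ) t = Set.Icc (0:ℝ) t := by
      apply Set.inter_eq_right.mpr
      intro u hu
      simp only [Set.mem_preimage, Set.mem_Iic]
      exact (γ.monotoneOn (hsub hu) ht hu.2).trans hxt
    have h2 : Set.Iic x ∩ Set.Icc (0:ℝ) (γ.toFun t) = Set.Icc (0:ℝ) (γ.toFun t) := by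
      apply Set.inter_eq_right.mpr
      intro u hu
      exact hu.2.trans hxt
    rw [h1, h2, γ.dmeas_Icc ht, Real.volume_Icc, sub_zero]

/-- Luzin N⁻¹: if `γ' > 0` a.e. then `γ` pulls null sets back to null sets. -/
theorem preimage_null (γ : GammaTilde) (hγ : γ.IsInGamma) {N : Set ℝ}
    (hN : μ01 N = 0) : μ01 (γ.toFun ⁻¹' N) = 0 := by
  -- replace N by a measurable superset
  obtain ⟨N', hNN', hN'm, hN'⟩ := exists_measurable_superset_of_null hN
  -- replace γ.toFun by a measurable representative
  obtain ⟨G, hGm, hGγ⟩ := γ.aemeasurable_toFun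
  have hae : (γ.toFun ⁻¹' N' : Set ℝ) =ᵐ[μ01] (G ⁻¹' N' : Set ℝ) := by
    filter_upwards [hGγ] with u hu
    change (γ.toFun u ∈ N') = (G u ∈ N')
    rw [hu]
  have haem' : AEMeasurable γ.toFun γ.dmeas :=
    γ.aemeasurable_toFun.mono_ac (withDensity_absolutelyContinuous μ01 _)
  have hdmeas0 : γ.dmeas (G ⁻¹' N') = 0 := by
    have h3 := Measure.map_apply_of_aemeasurable haem' hN'm
    rw [γ.map_dmeas, hN'] at h3
    have h1 : γ.dmeas (γ.toFun ⁻¹' N') = 0 := h3.symm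
    have hae' : (γ.toFun ⁻¹' N' : Set ℝ) =ᵐ[γ.dmeas] (G ⁻¹' N' : Set ℝ) :=
      hae.filter_mono (withDensity_absolutelyContinuous μ01 _).ae_le
    rwa [measure_congr hae'] at h1
  have hlint : ∫⁻ u in G ⁻¹' N', ENNReal.ofReal (γ.deriv' u) ∂μ01 = 0 := by
    rw [dmeas, withDensity_apply _ (hGm hN'm)] at hdmeas0
    exact hdmeas0
  have haederiv : AEMeasurable (fun u => ENNReal.ofReal (γ.deriv' u)) μ01 :=
    ENNReal.measurable_ofReal.comp_aemeasurable γ.integrableOn.aemeasurable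
  have hzero : ∀ᵐ u ∂μ01, u ∈ G ⁻¹' N' → ENNReal.ofReal (γ.deriv' u) = 0 :=
    (setLIntegral_eq_zero_iff' (hGm hN'm) haederiv.restrict).mp hlint
  have hGnull : μ01 (G ⁻¹' N') = 0 := by
    rw [measure_eq_zero_iff_ae_notMem]
    filter_upwards [hzero, hγ] with u h1 h2
    intro hmem
    have := h1 hmem
    rw [ENNReal.ofReal_eq_zero] at this
    linarith
  have : μ01 (γ.toFun ⁻¹' N') = 0 := by rwa [measure_congr hae]
  exact le_antisymm (le_trans (measure_mono (Set.preimage_mono hNN')) this.le) zero_le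


lemma ae_comp (γ : GammaTilde) (hγ : γ.IsInGamma) {p : ℝ → Prop}
    (hp : ∀ᵐ x ∂μ01, p x) : ∀ᵐ t ∂μ01, p (γ.toFun t) := by
  have h := γ.preimage_null hγ (ae_iff.mp hp)
  rw [ae_iff]
  exact h

lemma aemeasurable_dens (γ : GammaTilde) :
    AEMeasurable (fun u => ENNReal.ofReal (γ.deriv' u)) μ01 :=
  ENNReal.measurable_ofReal.comp_aemeasurable γ.integrableOn.aemeasurable

/-- Change of variables for lower integrals. -/
theorem lintegral_comp (γ : GammaTilde) {g : ℝ → ℝ≥0∞} (hg : Measurable g) :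
    ∫⁻ t, g (γ.toFun t) * ENNReal.ofReal (γ.deriv' t) ∂μ01 = ∫⁻ x, g x ∂μ01 := by
  have haem' : AEMeasurable γ.toFun γ.dmeas :=
    γ.aemeasurable_toFun.mono_ac (withDensity_absolutelyContinuous μ01 _)
  have h1 : ∫⁻ x, g x ∂μ01 = ∫⁻ t, g (γ.toFun t) ∂γ.dmeas := by
    rw [← γ.map_dmeas, lintegral_map' hg.aemeasurable haem']
  have hgγ : AEMeasurable (fun u => g (γ.toFun u)) μ01 :=
    hg.comp_aemeasurable γ.aemeasurable_toFun
  rw [h1, dmeas, lintegral_withDensity_eq_lintegral_mul₀ γ.aemeasurable_dens hgγ]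
  apply lintegral_congr
  intro t
  simp [mul_comm]

lemma restrict01 {t : ℝ} (ht : t ∈ Set.Icc (0:ℝ) 1) :
    μ01.restrict (Set.Icc 0 t) = volume.restrict (Set.Icc 0 t) := by
  rw [μ01, Measure.restrict_restrict measurableSet_Icc]
  congr 1
  exact Set.inter_eq_left.mpr (Set.Icc_subset_Icc le_rfl ht.2)

/-- Change of variables for lower integrals, restricted version. -/
theorem setLintegral_comp (γ : GammaTilde) {t : ℝ} (ht : t ∈ Set.Icc (0:ℝ) 1)
    {g : ℝ → ℝ≥0∞} (hg : Measurable g) :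
    ∫⁻ u in Set.Icc 0 t, g (γ.toFun u) * ENNReal.ofReal (γ.deriv' u) ∂volume
      = ∫⁻ x in Set.Icc 0 (γ.toFun t), g x ∂volume := by
  have haem' : AEMeasurable γ.toFun (γ.dmeas.restrict (Set.Icc 0 t)) :=
    (γ.aemeasurable_toFun.mono_ac (withDensity_absolutelyContinuous μ01 _)).mono_measure
      Measure.restrict_le_self
  have h1 : ∫⁻ x in Set.Icc 0 (γ.toFun t), g x ∂volume
      = ∫⁻ u, g (γ.toFun u) ∂(γ.dmeas.restrict (Set.Icc 0 t)) := by
    rw [← γ.map_dmeas_restrict ht, lintegral_map' hg.aemeasurable haem']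
  have h2 : γ.dmeas.restrict (Set.Icc 0 t)
      = (volume.restrict (Set.Icc 0 t)).withDensity (fun u => ENNReal.ofReal (γ.deriv' u)) := by
    rw [dmeas, restrict_withDensity measurableSet_Icc, restrict01 ht]
  have hd : AEMeasurable (fun u => ENNReal.ofReal (γ.deriv' u)) (volume.restrict (Set.Icc 0 t)) :=
    restrict01 ht ▸ γ.aemeasurable_dens.restrict
  have hgγ0 : AEMeasurable (fun u => g (γ.toFun u)) μ01 :=
    hg.comp_aemeasurable γ.aemeasurable_toFun
  have hgγ : AEMeasurable (fun u => g (γ.toFun u)) (volume.restrict (Set.Icc 0 t)) :=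
    restrict01 ht ▸ hgγ0.restrict
  rw [h1, h2, lintegral_withDensity_eq_lintegral_mul₀ hd hgγ]
  apply lintegral_congr
  intro u
  simp [mul_comm]


lemma ae_restrict01 {t : ℝ} (ht : t ∈ Set.Icc (0:ℝ) 1) {p : ℝ → Prop}
    (hp : ∀ᵐ x ∂μ01, p x) : ∀ᵐ x ∂(volume.restrict (Set.Icc 0 t)), p x := by
  rw [← restrict01 ht]
  exact ae_restrict_of_ae hp

lemma aemeasurable_deriv_comp (δ γ : GammaTilde) (hγ : γ.IsInGamma) :
    AEMeasurable (fun u => δ.deriv' (γ.toFun u)) μ01 := by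
  obtain ⟨d, hdm, hd⟩ := δ.integrableOn.aemeasurable
  have h1 : ∀ᵐ u ∂μ01, δ.deriv' (γ.toFun u) = d (γ.toFun u) :=
    γ.ae_comp hγ hd
  exact (hdm.comp_aemeasurable γ.aemeasurable_toFun).congr (by filter_upwards [h1] with u hu using hu.symm)

set_option maxHeartbeats 1000000 in
lemma lintegral_comp_deriv (δ γ : GammaTilde) (hγ : γ.IsInGamma) {t : ℝ}
    (ht : t ∈ Set.Icc (0:ℝ) 1) :
    ∫⁻ u in Set.Icc 0 t, ENNReal.ofReal (δ.deriv' (γ.toFun u) * γ.deriv' u) ∂volume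
      = ENNReal.ofReal (δ.toFun (γ.toFun t)) := by
  obtain ⟨d, hdm, hd⟩ := δ.integrableOn.aemeasurable
  have hgm : Measurable (fun x => ENNReal.ofReal (d x)) := ENNReal.measurable_ofReal.comp hdm
  have hcomp : ∀ᵐ u ∂μ01, δ.deriv' (γ.toFun u) = d (γ.toFun u) := γ.ae_comp hγ hd
  have hnn : ∀ᵐ u ∂μ01, 0 ≤ δ.deriv' (γ.toFun u) := γ.ae_comp hγ δ.nonneg
  have hae : ∀ᵐ u ∂μ01, ENNReal.ofReal (δ.deriv' (γ.toFun u) * γ.deriv' u)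
      = ENNReal.ofReal (d (γ.toFun u)) * ENNReal.ofReal (γ.deriv' u) := by
    filter_upwards [hcomp, hnn] with u h1 h2
    rw [ENNReal.ofReal_mul h2, h1]
  calc ∫⁻ u in Set.Icc 0 t, ENNReal.ofReal (δ.deriv' (γ.toFun u) * γ.deriv' u) ∂volume
      = ∫⁻ u in Set.Icc 0 t, ENNReal.ofReal (d (γ.toFun u)) * ENNReal.ofReal (γ.deriv' u) ∂volume :=
        lintegral_congr_ae (ae_restrict01 ht hae)
    _ = ∫⁻ x in Set.Icc 0 (γ.toFun t), ENNReal.ofReal (d x) ∂volume := γ.setLintegral_comp ht hgm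
    _ = ∫⁻ x in Set.Icc 0 (γ.toFun t), ENNReal.ofReal (δ.deriv' x) ∂volume := by
        apply lintegral_congr_ae
        apply ae_restrict01 (γ.mapsTo ht)
        filter_upwards [hd] with x hx
        rw [hx]
    _ = δ.dmeas (Set.Icc 0 (γ.toFun t)) := by
        rw [dmeas, withDensity_apply _ measurableSet_Icc, restrict01 (γ.mapsTo ht)]
    _ = ENNReal.ofReal (δ.toFun (γ.toFun t)) := δ.dmeas_Icc (γ.mapsTo ht)

lemma ae_nonneg_comp_deriv (δ γ : GammaTilde) (hγ : γ.IsInGamma) :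
    ∀ᵐ u ∂μ01, 0 ≤ δ.deriv' (γ.toFun u) * γ.deriv' u := by
  filter_upwards [γ.ae_comp hγ δ.nonneg, γ.nonneg] with u h1 h2
  exact mul_nonneg h1 h2

lemma integrableOn_comp_deriv (δ γ : GammaTilde) (hγ : γ.IsInGamma) :
    IntegrableOn (fun u => δ.deriv' (γ.toFun u) * γ.deriv' u) (Set.Icc (0:ℝ) 1) volume := by
  have hmeas : AEMeasurable (fun u => δ.deriv' (γ.toFun u) * γ.deriv' u) μ01 :=
    (δ.aemeasurable_deriv_comp γ hγ).mul γ.integrableOn.aemeasurable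
  constructor
  · exact hmeas.aestronglyMeasurable
  · rw [hasFiniteIntegral_iff_norm]
    have h1 : ∀ᵐ u ∂μ01, ENNReal.ofReal ‖δ.deriv' (γ.toFun u) * γ.deriv' u‖
        = ENNReal.ofReal (δ.deriv' (γ.toFun u) * γ.deriv' u) := by
      filter_upwards [δ.ae_nonneg_comp_deriv γ hγ] with u hu
      rw [Real.norm_of_nonneg hu]
    calc ∫⁻ u, ENNReal.ofReal ‖δ.deriv' (γ.toFun u) * γ.deriv' u‖ ∂μ01
        = ∫⁻ u, ENNReal.ofReal (δ.deriv' (γ.toFun u) * γ.deriv' u) ∂μ01 :=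
          lintegral_congr_ae h1
      _ = ENNReal.ofReal (δ.toFun (γ.toFun 1)) :=
          δ.lintegral_comp_deriv γ hγ (t := 1) (by norm_num)
      _ < ⊤ := ENNReal.ofReal_lt_top

lemma integral_comp_deriv (δ γ : GammaTilde) (hγ : γ.IsInGamma) {t : ℝ}
    (ht : t ∈ Set.Icc (0:ℝ) 1) :
    ∫ u in (0:ℝ)..t, δ.deriv' (γ.toFun u) * γ.deriv' u = δ.toFun (γ.toFun t) := by
  rw [intervalIntegral.integral_of_le ht.1, ← MeasureTheory.integral_Icc_eq_integral_Ioc]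
  have hmeas : AEStronglyMeasurable (fun u => δ.deriv' (γ.toFun u) * γ.deriv' u)
      (volume.restrict (Set.Icc 0 t)) := by
    have : AEMeasurable (fun u => δ.deriv' (γ.toFun u) * γ.deriv' u) μ01 :=
      (δ.aemeasurable_deriv_comp γ hγ).mul γ.integrableOn.aemeasurable
    rw [← restrict01 ht]
    exact this.restrict.aestronglyMeasurable
  rw [MeasureTheory.integral_eq_lintegral_of_nonneg_ae
    (ae_restrict01 ht (δ.ae_nonneg_comp_deriv γ hγ)) hmeas]
  rw [δ.lintegral_comp_deriv γ hγ ht, ENNReal.toReal_ofReal (δ.mapsTo (γ.mapsTo ht)).1]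

/-- Composition of two elements of `Γ̃` (the inner one in `Γ`). -/
def comp (δ γ : GammaTilde) (hγ : γ.IsInGamma) : GammaTilde where
  toFun := fun t => δ.toFun (γ.toFun t)
  deriv' := fun t => δ.deriv' (γ.toFun t) * γ.deriv' t
  integrableOn := δ.integrableOn_comp_deriv γ hγ
  nonneg := δ.ae_nonneg_comp_deriv γ hγ
  map_zero := by show δ.toFun (γ.toFun 0) = 0; rw [γ.map_zero, δ.map_zero]
  map_one := by show δ.toFun (γ.toFun 1) = 1; rw [γ.map_one, δ.map_one]
  eq_integral := fun t ht => (δ.integral_comp_deriv γ hγ ht).symm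

lemma comp_isInGamma (δ γ : GammaTilde) (hδ : δ.IsInGamma) (hγ : γ.IsInGamma) :
    (δ.comp γ hγ).IsInGamma := by
  filter_upwards [γ.ae_comp hγ hδ, hγ] with u h1 h2
  exact mul_pos h1 h2


/-- A generalized pullback of a.e. measurability along `γ`. -/
lemma aemeasurable_comp' (γ : GammaTilde) (hγ : γ.IsInGamma) {h : ℝ → ℝ}
    (hh : AEMeasurable h μ01) : AEMeasurable (fun u => h (γ.toFun u)) μ01 := by
  obtain ⟨d, hdm, hd⟩ := hh
  have h1 : ∀ᵐ u ∂μ01, h (γ.toFun u) = d (γ.toFun u) := γ.ae_comp hγ hd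
  exact (hdm.comp_aemeasurable γ.aemeasurable_toFun).congr
    (by filter_upwards [h1] with u hu using hu.symm)

end GammaTilde

/-- `∫₀¹ f²` as a lower integral. -/
def elsq (f : ℝ → ℝ) : ℝ≥0∞ := ∫⁻ t, ENNReal.ofReal ((f t)^2) ∂μ01

lemma ofReal_sq_eq (x : ℝ) : ENNReal.ofReal (x^2) = (‖x‖₊ : ℝ≥0∞) ^ (2:ℝ) := by
  show ENNReal.ofReal (x^2) = ‖x‖ₑ ^ (2:ℝ)
  rw [Real.enorm_eq_ofReal_abs, ENNReal.ofReal_rpow_of_nonneg (abs_nonneg x) (by norm_num),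
    show ((2:ℝ)) = ((2:ℕ):ℝ) by norm_num, Real.rpow_natCast, sq_abs]

lemma elsq_eq (f : ℝ → ℝ) : elsq f = eLpNorm f 2 μ01 ^ (2:ℝ) := by
  rw [eLpNorm_eq_lintegral_rpow_enorm_toReal (by norm_num) (by norm_num), ← ENNReal.rpow_mul]
  have h2 : ((2:ℝ≥0∞)).toReal = (2:ℝ) := by simp
  rw [h2, show (1/(2:ℝ)) * 2 = 1 by norm_num, ENNReal.rpow_one, elsq]
  exact lintegral_congr fun t => ofReal_sq_eq (f t)

lemma elsq_ne_top_iff (f : ℝ → ℝ) : elsq f ≠ ⊤ ↔ eLpNorm f 2 μ01 ≠ ⊤ := by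
  rw [elsq_eq]
  constructor
  · intro h hc; rw [hc] at h; exact h (by simp [ENNReal.top_rpow_of_pos])
  · intro h
    exact ENNReal.rpow_ne_top_of_nonneg (by norm_num) h

lemma L2dist_eq_elsq (f g : ℝ → ℝ)
    (h : AEStronglyMeasurable (fun t => f t - g t) μ01) :
    L2dist f g = Real.sqrt ((elsq (fun t => f t - g t)).toReal) := by
  have hμ : volume.restrict (Set.Icc (0:ℝ) 1) = μ01 := rfl
  rw [L2dist]
  congr 1
  rw [hμ, MeasureTheory.integral_eq_lintegral_of_nonneg_ae
    (Filter.Eventually.of_forall (fun t => by positivity))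
    ((h.norm.aemeasurable.pow_const 2).aestronglyMeasurable)]
  rw [elsq]
  congr 1
  apply lintegral_congr
  intro t
  rw [Real.norm_eq_abs, sq_abs]

lemma L2dist_eq_toReal (f g : ℝ → ℝ)
    (h : AEStronglyMeasurable (fun t => f t - g t) μ01) :
    L2dist f g = (eLpNorm (fun t => f t - g t) 2 μ01).toReal := by
  rw [L2dist_eq_elsq f g h, elsq_eq, ← ENNReal.toReal_rpow,
    show ((2:ℝ)) = ((2:ℕ):ℝ) by norm_num, Real.rpow_natCast,
    Real.sqrt_sq ENNReal.toReal_nonneg]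

lemma L2dist_congr (f f' g g' : ℝ → ℝ) (hf : f =ᵐ[μ01] f') (hg : g =ᵐ[μ01] g') :
    L2dist f g = L2dist f' g' := by
  rw [L2dist, L2dist]
  congr 1
  apply MeasureTheory.integral_congr_ae
  have : volume.restrict (Set.Icc (0:ℝ) 1) = μ01 := rfl
  rw [this]
  filter_upwards [hf, hg] with t h1 h2
  rw [h1, h2]

lemma L2dist_triangle (f g h : ℝ → ℝ)
    (hf : AEStronglyMeasurable f μ01) (hg : AEStronglyMeasurable g μ01)
    (hh : AEStronglyMeasurable h μ01)
    (hfg : eLpNorm (fun t => f t - g t) 2 μ01 ≠ ⊤)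
    (hgh : eLpNorm (fun t => g t - h t) 2 μ01 ≠ ⊤) :
    L2dist f h ≤ L2dist f g + L2dist g h := by
  have hfg' : AEStronglyMeasurable (fun t => f t - g t) μ01 := hf.sub hg
  have hgh' : AEStronglyMeasurable (fun t => g t - h t) μ01 := hg.sub hh
  have hfh' : AEStronglyMeasurable (fun t => f t - h t) μ01 := hf.sub hh
  rw [L2dist_eq_toReal f g hfg', L2dist_eq_toReal g h hgh', L2dist_eq_toReal f h hfh']
  have key : eLpNorm (fun t => f t - h t) 2 μ01
      ≤ eLpNorm (fun t => f t - g t) 2 μ01 + eLpNorm (fun t => g t - h t) 2 μ01 := by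
    have hsplit : (fun t => f t - h t)
        = (fun t => f t - g t) + (fun t => g t - h t) := by
      funext t; simp [sub_add_sub_cancel]
    rw [hsplit]
    exact eLpNorm_add_le hfg' hgh' (by norm_num)
  calc (eLpNorm (fun t => f t - h t) 2 μ01).toReal
      ≤ (eLpNorm (fun t => f t - g t) 2 μ01 + eLpNorm (fun t => g t - h t) 2 μ01).toReal := by
        apply ENNReal.toReal_mono _ key
        exact ENNReal.add_ne_top.mpr ⟨hfg, hgh⟩
    _ = _ := ENNReal.toReal_add hfg hgh

/-- Change of variables for `elsq`. -/
lemma elsq_act (γ : GammaTilde) (hγ : γ.IsInGamma) (h : ℝ → ℝ)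
    (hh : AEMeasurable h μ01) :
    elsq (fun t => Real.sqrt (γ.deriv' t) * h (γ.toFun t)) = elsq h := by
  obtain ⟨h', h'm, hh'⟩ := hh
  have hgm : Measurable (fun x => ENNReal.ofReal ((h' x)^2)) :=
    ENNReal.measurable_ofReal.comp ((h'm.pow_const 2))
  have hae : ∀ᵐ t ∂μ01, ENNReal.ofReal ((Real.sqrt (γ.deriv' t) * h (γ.toFun t))^2)
      = ENNReal.ofReal ((h' (γ.toFun t))^2) * ENNReal.ofReal (γ.deriv' t) := by
    filter_upwards [γ.nonneg, γ.ae_comp hγ hh'] with t h1 h2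
    rw [mul_pow, Real.sq_sqrt h1, h2, mul_comm ((γ.deriv' t)) _, ENNReal.ofReal_mul (by positivity)]
  rw [elsq, lintegral_congr_ae hae, γ.lintegral_comp hgm, elsq]
  apply lintegral_congr_ae
  filter_upwards [hh'] with x hx
  rw [hx]

lemma act_sub (f g : ℝ → ℝ) (γ : GammaTilde) :
    (fun t => act f γ t - act g γ t)
      = fun t => Real.sqrt (γ.deriv' t) * (f (γ.toFun t) - g (γ.toFun t)) := by
  funext t
  simp only [act, smul_eq_mul]
  ring

lemma aestronglyMeasurable_act (γ : GammaTilde) (hγ : γ.IsInGamma) (f : ℝ → ℝ)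
    (hf : AEMeasurable f μ01) : AEStronglyMeasurable (act f γ) μ01 := by
  have h1 : AEMeasurable (fun t => Real.sqrt (γ.deriv' t)) μ01 :=
    Real.continuous_sqrt.measurable.comp_aemeasurable γ.integrableOn.aemeasurable
  have h2 : AEMeasurable (fun t => f (γ.toFun t)) μ01 := γ.aemeasurable_comp' hγ hf
  exact (h1.mul h2).aestronglyMeasurable

/-- The action is an `L²` isometry. -/
lemma L2dist_act (γ : GammaTilde) (hγ : γ.IsInGamma) (f g : ℝ → ℝ)
    (hf : AEMeasurable f μ01) (hg : AEMeasurable g μ01) :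
    L2dist (act f γ) (act g γ) = L2dist f g := by
  have hfg : AEMeasurable (fun t => f t - g t) μ01 := hf.sub hg
  have h1 : AEStronglyMeasurable (fun t => act f γ t - act g γ t) μ01 := by
    rw [act_sub]
    have := elsq_act γ hγ (fun t => f t - g t) hfg  -- dummy
    have hs : AEMeasurable (fun t => Real.sqrt (γ.deriv' t)) μ01 :=
      Real.continuous_sqrt.measurable.comp_aemeasurable γ.integrableOn.aemeasurable
    exact (hs.mul (γ.aemeasurable_comp' hγ hfg)).aestronglyMeasurable
  rw [L2dist_eq_elsq _ _ h1, L2dist_eq_elsq _ _ hfg.aestronglyMeasurable]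
  congr 2
  calc elsq (fun t => act f γ t - act g γ t)
      = elsq (fun t => Real.sqrt (γ.deriv' t) * ((fun x => f x - g x) (γ.toFun t))) := by
        rw [act_sub]
    _ = elsq (fun t => f t - g t) := elsq_act γ hγ _ hfg

lemma memL2_act (γ : GammaTilde) (hγ : γ.IsInGamma) (f : ℝ → ℝ)
    (hf : MemLp f 2 μ01) : MemLp (act f γ) 2 μ01 := by
  refine ⟨aestronglyMeasurable_act γ hγ f hf.1.aemeasurable, ?_⟩
  have h1 : elsq (act f γ) = elsq f := by
    have : act f γ = fun t => Real.sqrt (γ.deriv' t) * f (γ.toFun t) := by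
      funext t; simp [act, smul_eq_mul]
    rw [this]
    exact elsq_act γ hγ f hf.1.aemeasurable
  have h2 : elsq (act f γ) ≠ ⊤ := by
    rw [h1]
    exact (elsq_ne_top_iff f).mpr hf.2.ne
  exact lt_top_iff_ne_top.mpr ((elsq_ne_top_iff _).mp h2)

lemma act_comp_ae (q : ℝ → ℝ) (δ γ : GammaTilde) (hγ : γ.IsInGamma) :
    act q (δ.comp γ hγ) =ᵐ[μ01] act (act q δ) γ := by
  filter_upwards [γ.nonneg] with t ht
  show Real.sqrt ((δ.comp γ hγ).deriv' t) • q ((δ.comp γ hγ).toFun t)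
    = Real.sqrt (γ.deriv' t) • (Real.sqrt (δ.deriv' (γ.toFun t)) • q (δ.toFun (γ.toFun t)))
  have hc1 : (δ.comp γ hγ).deriv' t = δ.deriv' (γ.toFun t) * γ.deriv' t := rfl
  have hc2 : (δ.comp γ hγ).toFun t = δ.toFun (γ.toFun t) := rfl
  rw [hc1, hc2, Real.sqrt_mul' _ ht, smul_eq_mul, smul_eq_mul, smul_eq_mul]
  ring

/-- Main containment lemma: if `act q δ` approximates `w` arbitrarily well,
then the closed orbit of `w` is contained in that of `q`. -/
lemma orbitClosure_subset_of_approx (q w : ℝ → ℝ)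
    (hq : MemLp q 2 μ01) (hw : MemLp w 2 μ01)
    (happrox : ∀ ε > 0, ∃ δ : GammaTilde, δ.IsInGamma ∧ L2dist (act q δ) w < ε) :
    orbitClosure w ⊆ orbitClosure q := by
  intro p hp
  refine ⟨hp.1, fun ε hε => ?_⟩
  obtain ⟨r, ⟨γ, hγ, hr⟩, hrp⟩ := hp.2 (ε/2) (by linarith)
  obtain ⟨δ, hδ, hδw⟩ := happrox (ε/2) (by linarith)
  set c := δ.comp γ hγ with hc
  have hcγ : c.IsInGamma := δ.comp_isInGamma γ hδ hγ
  refine ⟨act q c, ⟨c, hcγ, EventuallyEq.rfl⟩, ?_⟩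
  have hqc : MemLp (act q c) 2 μ01 := memL2_act c hcγ q hq
  have hrL2 : MemLp r 2 μ01 :=
    (memL2_act γ hγ w hw).ae_eq hr.symm
  have hd1 : L2dist (act q c) r = L2dist (act q δ) w := by
    calc L2dist (act q c) r = L2dist (act (act q δ) γ) (act w γ) :=
          L2dist_congr _ _ _ _ (act_comp_ae q δ γ hγ) hr
      _ = L2dist (act q δ) w := L2dist_act γ hγ _ _
          (memL2_act δ hδ q hq).1.aemeasurable hw.1.aemeasurable
  have htri : L2dist (act q c) p ≤ L2dist (act q c) r + L2dist r p :=
    L2dist_triangle _ _ _ hqc.1 hrL2.1 hp.1.1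
      ((hqc.sub hrL2).2.ne) ((hrL2.sub hp.1).2.ne)
  calc L2dist (act q c) p ≤ L2dist (act q c) r + L2dist r p := htri
    _ = L2dist (act q δ) w + L2dist r p := by rw [hd1]
    _ < ε/2 + ε/2 := add_lt_add hδw hrp
    _ = ε := by ring

namespace Flat

variable (a b : ℝ) (u : ℝ → ℝ) (η : ℝ)

/-- local square mass -/
def c2 : ℝ := ∫ s in Set.Ioo a b, (u s)^2

/-- normalizing constant -/
def kk : ℝ := (b-a)/(c2 a b u + η*(b-a))

/-- the density of the flattening reparametrization -/
def D : ℝ → ℝ := fun t => if t ∈ Set.Ioo a b then ((u t)^2 + η) * kk a b u η else 1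

/-- the value of the flattened function on `(a,b)` -/
def c0 : ℝ := Real.sqrt (c2 a b u / (b-a))

/-- the flattened function -/
def vflat : ℝ → ℝ := fun t => if t ∈ Set.Ioo a b then c0 a b u else u t

/-- the flattening reparametrization -/
def Gfun : ℝ → ℝ := fun t => ∫ r in (0:ℝ)..t, D a b u η r

variable {a b u η}

section basic

variable (ha : 0 ≤ a) (hab : a < b) (hb : b ≤ 1) (hη : 0 < η)
variable (hum : Measurable u)
variable (hu2 : IntegrableOn (fun t => (u t)^2) (Set.Icc (0:ℝ) 1) volume)

lemma hc2 : 0 ≤ c2 a b u :=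
  setIntegral_nonneg measurableSet_Ioo (fun t _ => sq_nonneg _)

include hab hη in
lemma hkpos : 0 < kk a b u η := by
  have h1 : 0 < b - a := by linarith
  have h2 : 0 < c2 a b u + η*(b-a) := by
    have := hc2 (a := a) (b := b) (u := u)
    nlinarith
  exact div_pos h1 h2

include hab hη in
lemma hDpos : ∀ t, 0 < D a b u η t := by
  intro t
  rw [D]
  split_ifs with h
  · have := hkpos hab hη (u := u)
    nlinarith [sq_nonneg (u t)]
  · norm_num

include hum in
lemma hDmeas : Measurable (D a b u η) := by
  apply Measurable.ite measurableSet_Ioo _ measurable_const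
  exact (((hum.pow_const 2).add_const η).mul_const _)

include hab hη hum hu2 in
lemma hDint : IntegrableOn (D a b u η) (Set.Icc (0:ℝ) 1) volume := by
  have hk := hkpos hab hη (u := u)
  have hconst : IntegrableOn (fun _ => η) (Set.Icc (0:ℝ) 1) volume :=
    integrableOn_const (lt_top_iff_ne_top.mp (by rw [Real.volume_Icc]; exact ENNReal.ofReal_lt_top))
  have hconst1 : IntegrableOn (fun _ => (1:ℝ)) (Set.Icc (0:ℝ) 1) volume :=
    integrableOn_const (lt_top_iff_ne_top.mp (by rw [Real.volume_Icc]; exact ENNReal.ofReal_lt_top))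
  apply Integrable.mono' (g := fun t => ((u t)^2 + η) * kk a b u η + 1)
  · exact ((hu2.add hconst).mul_const _).add hconst1
  · exact ((hDmeas hum).aestronglyMeasurable).restrict
  · apply Filter.Eventually.of_forall
    intro t
    rw [Real.norm_of_nonneg (hDpos hab hη t).le, D]
    split_ifs with h
    · nlinarith [sq_nonneg (u t)]
    · nlinarith [sq_nonneg (u t), hη.le]

include hab hη hum hu2 in
lemma hIi {s t : ℝ} (hs : s ∈ Set.Icc (0:ℝ) 1) (ht : t ∈ Set.Icc (0:ℝ) 1) :
    IntervalIntegrable (D a b u η) volume s t := by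
  have hsub : Set.uIcc s t ⊆ Set.Icc (0:ℝ) 1 := by
    rw [Set.uIcc]
    exact Set.Icc_subset_Icc (le_inf hs.1 ht.1) (sup_le hs.2 ht.2)
  exact ((hDint hab hη hum hu2).mono_set hsub).intervalIntegrable

lemma Gfun_low {t : ℝ} (h0 : 0 ≤ t) (hta : t ≤ a) : Gfun a b u η t = t := by
  rw [Gfun]
  have : ∀ r ∈ Set.uIcc (0:ℝ) t, D a b u η r = 1 := by
    intro r hr
    rw [Set.uIcc_of_le h0] at hr
    rw [D, if_neg]
    intro hmem
    exact absurd (lt_of_lt_of_le hmem.1 (hr.2.trans hta)) (lt_irrefl _)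
  rw [intervalIntegral.integral_congr this, intervalIntegral.integral_const, smul_eq_mul,
    mul_one, sub_zero]

include ha hab hb hη hum hu2 in
set_option maxHeartbeats 1000000 in
lemma Gfun_b : Gfun a b u η b = b := by
  rw [Gfun]
  have h0a : (0:ℝ) ∈ Set.Icc (0:ℝ) 1 := by constructor <;> norm_num
  have haI : a ∈ Set.Icc (0:ℝ) 1 := ⟨ha, by linarith⟩
  have hbI : b ∈ Set.Icc (0:ℝ) 1 := ⟨by linarith, hb⟩
  have hsplit : (∫ r in (0:ℝ)..a, D a b u η r) + ∫ r in a..b, D a b u η r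
      = ∫ r in (0:ℝ)..b, D a b u η r :=
    intervalIntegral.integral_add_adjacent_intervals (hIi hab hη hum hu2 h0a haI)
      (hIi hab hη hum hu2 haI hbI)
  have h1 : ∫ r in (0:ℝ)..a, D a b u η r = a := by
    have := Gfun_low (a := a) (b := b) (u := u) (η := η) ha le_rfl
    rw [Gfun] at this
    exact this
  have h2 : ∫ r in a..b, D a b u η r = b - a := by
    rw [intervalIntegral.integral_of_le hab.le, MeasureTheory.integral_Ioc_eq_integral_Ioo]
    have heq : ∫ r in Set.Ioo a b, D a b u η r
        = ∫ r in Set.Ioo a b, ((u r)^2 + η) * kk a b u η := by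
      apply setIntegral_congr_fun measurableSet_Ioo
      intro r hr
      rw [D, if_pos hr]
    rw [heq, MeasureTheory.integral_mul_const]
    have hint : IntegrableOn (fun r => (u r)^2) (Set.Ioo a b) volume :=
      hu2.mono_set (fun r hr => ⟨ha.trans hr.1.le, hr.2.le.trans hb⟩)
    have hadd : ∫ r in Set.Ioo a b, ((u r)^2 + η)
        = c2 a b u + η * (b - a) := by
      rw [MeasureTheory.integral_add hint (integrableOn_const
        (lt_top_iff_ne_top.mp (by rw [Real.volume_Ioo]; exact ENNReal.ofReal_lt_top)))]
      rw [MeasureTheory.setIntegral_const, Real.volume_real_Ioo_of_le hab.le,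
        smul_eq_mul, c2, mul_comm]
    have hX : c2 a b u + η*(b-a) ≠ 0 := by
      have := hc2 (a := a) (b := b) (u := u)
      nlinarith
    rw [hadd, kk]
    field_simp
  linarith [hsplit, h1, h2]


include hab in
lemma Gfun_high {t : ℝ} (hbt : b ≤ t) (ht1 : t ≤ 1) (ha : 0 ≤ a) (hb : b ≤ 1)
    (hη : 0 < η) (hum : Measurable u)
    (hu2 : IntegrableOn (fun t => (u t)^2) (Set.Icc (0:ℝ) 1) volume) :
    Gfun a b u η t = t := by
  have h0a : (0:ℝ) ∈ Set.Icc (0:ℝ) 1 := by constructor <;> norm_num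
  have hbI : b ∈ Set.Icc (0:ℝ) 1 := ⟨by linarith, hb⟩
  have htI : t ∈ Set.Icc (0:ℝ) 1 := ⟨by linarith, ht1⟩
  have hsplit : (∫ r in (0:ℝ)..b, D a b u η r) + ∫ r in b..t, D a b u η r
      = ∫ r in (0:ℝ)..t, D a b u η r :=
    intervalIntegral.integral_add_adjacent_intervals (hIi hab hη hum hu2 h0a hbI)
      (hIi hab hη hum hu2 hbI htI)
  have h1 : ∫ r in (0:ℝ)..b, D a b u η r = b := by
    have := Gfun_b ha hab hb hη hum hu2
    rw [Gfun] at this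
    exact this
  have h2 : ∫ r in b..t, D a b u η r = t - b := by
    have : ∀ r ∈ Set.uIcc b t, D a b u η r = 1 := by
      intro r hr
      rw [Set.uIcc_of_le hbt] at hr
      rw [D, if_neg]
      intro hmem
      exact absurd (lt_of_le_of_lt hr.1 hmem.2) (lt_irrefl _)
    rw [intervalIntegral.integral_congr this, intervalIntegral.integral_const, smul_eq_mul,
      mul_one]
  rw [Gfun]
  linarith

include hab hη hum hu2 in
lemma Gfun_smono : StrictMonoOn (Gfun a b u η) (Set.Icc (0:ℝ) 1) := by
  intro s hs t ht hst
  have hk := hkpos hab hη (u := u)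
  set m := min 1 (η * kk a b u η) with hm
  have hmpos : 0 < m := lt_min (by norm_num) (by positivity)
  have hlb : ∀ r ∈ Set.Icc s t, m ≤ D a b u η r := by
    intro r _
    rw [D]
    split_ifs with h
    · calc m ≤ η * kk a b u η := min_le_right _ _
        _ ≤ ((u r)^2 + η) * kk a b u η := by nlinarith [sq_nonneg (u r)]
    · exact min_le_left _ _
  have hmono : (∫ _ in s..t, m) ≤ ∫ r in s..t, D a b u η r := by
    apply intervalIntegral.integral_mono_on hst.le (intervalIntegrable_const)
      (hIi hab hη hum hu2 hs ht) hlb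
  rw [intervalIntegral.integral_const, smul_eq_mul] at hmono
  have hdiff : Gfun a b u η t - Gfun a b u η s = ∫ r in s..t, D a b u η r := by
    rw [Gfun, Gfun, sub_eq_iff_eq_add']
    exact Eq.symm <| intervalIntegral.integral_add_adjacent_intervals
      (hIi hab hη hum hu2 (by constructor <;> [norm_num; norm_num] : (0:ℝ) ∈ Set.Icc (0:ℝ) 1) hs)
      (hIi hab hη hum hu2 hs ht)
  nlinarith

include ha hab hb hη hum hu2 in
lemma Gfun_maps_Ioo {t : ℝ} (htm : t ∈ Set.Ioo a b) : Gfun a b u η t ∈ Set.Ioo a b := by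
  have haI : a ∈ Set.Icc (0:ℝ) 1 := ⟨ha, by linarith⟩
  have hbI : b ∈ Set.Icc (0:ℝ) 1 := ⟨by linarith, hb⟩
  have htI : t ∈ Set.Icc (0:ℝ) 1 := ⟨by linarith [htm.1], by linarith [htm.2]⟩
  constructor
  · have := Gfun_smono hab hη hum hu2 haI htI htm.1
    rwa [Gfun_low ha le_rfl] at this
  · have := Gfun_smono hab hη hum hu2 htI hbI htm.2
    rwa [Gfun_b ha hab hb hη hum hu2] at this

variable (a b u η) in
/-- The flattening reparametrization as an element of `Γ̃`. -/
def G (ha : 0 ≤ a) (hab : a < b) (hb : b ≤ 1) (hη : 0 < η) (hum : Measurable u)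
    (hu2 : IntegrableOn (fun t => (u t)^2) (Set.Icc (0:ℝ) 1) volume) : GammaTilde where
  toFun := Gfun a b u η
  deriv' := D a b u η
  integrableOn := hDint hab hη hum hu2
  nonneg := Filter.Eventually.of_forall fun t => (hDpos hab hη t).le
  map_zero := Gfun_low le_rfl ha
  map_one := Gfun_high hab hb le_rfl ha hb hη hum hu2
  eq_integral := fun t _ => rfl

include ha hab hb hη hum hu2 in
lemma G_isInGamma : (G a b u η ha hab hb hη hum hu2).IsInGamma :=
  Filter.Eventually.of_forall fun t => hDpos hab hη t

include ha hab hb hη hum hu2 in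
lemma act_vflat {t : ℝ} (htI : t ∈ Set.Icc (0:ℝ) 1) :
    act (vflat a b u) (G a b u η ha hab hb hη hum hu2) t
      = if t ∈ Set.Ioo a b then c0 a b u * Real.sqrt (D a b u η t) else u t := by
  show Real.sqrt (D a b u η t) • vflat a b u (Gfun a b u η t) = _
  split_ifs with h
  · rw [vflat, if_pos (Gfun_maps_Ioo ha hab hb hη hum hu2 h), smul_eq_mul, mul_comm]
  · have hDt : D a b u η t = 1 := by rw [D, if_neg h]
    have hGt : Gfun a b u η t = t := by
      rw [Set.mem_Ioo, not_and_or] at h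
      push_neg at h
      rcases h with h | h
      · exact Gfun_low htI.1 h
      · exact Gfun_high hab h htI.2 ha hb hη hum hu2
    rw [hDt, hGt, Real.sqrt_one, one_smul, vflat, if_neg h]


variable (a b u η) in
/-- The squared pointwise error of the flattening approximation. -/
def FF : ℝ → ℝ := fun t =>
  (c0 a b u * Real.sqrt (((u t)^2 + η) * kk a b u η) - u t)^2

include hum in
lemma FFmeas : Measurable (FF a b u η) := by
  apply Measurable.pow_const
  apply Measurable.sub _ hum
  exact (Real.continuous_sqrt.measurable.comp
    (((hum.pow_const 2).add_const η).mul_const _)).const_mul _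

lemma hc0sq (hab : a < b) : (c0 a b u)^2 = c2 a b u / (b - a) := by
  rw [c0, Real.sq_sqrt]
  apply div_nonneg (hc2) (by linarith)

include hab hη in
lemma FFbound (hη1 : η ≤ 1) (t : ℝ) :
    ‖FF a b u η t‖ ≤ 2*((u t)^2+1) + 2*(u t)^2 := by
  have hk := hkpos hab hη (u := u)
  have hc2' := hc2 (a := a) (b := b) (u := u)
  have harg : 0 ≤ ((u t)^2 + η) * kk a b u η := by nlinarith [sq_nonneg (u t)]
  have hXsq : (c0 a b u * Real.sqrt (((u t)^2 + η) * kk a b u η))^2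
      = (c0 a b u)^2 * (((u t)^2 + η) * kk a b u η) := by
    rw [mul_pow, Real.sq_sqrt harg]
  have hba : (0:ℝ) < b - a := by linarith
  have hden : (0:ℝ) < c2 a b u + η * (b - a) := by nlinarith
  have hckk : (c0 a b u)^2 * kk a b u η ≤ 1 := by
    rw [hc0sq hab, kk, div_mul_div_comm]
    rw [div_le_one (mul_pos hba hden)]
    nlinarith [mul_pos (mul_pos hη hba) hba]
  have hXb : (c0 a b u * Real.sqrt (((u t)^2 + η) * kk a b u η))^2 ≤ (u t)^2 + 1 := by
    rw [hXsq]
    calc (c0 a b u)^2 * (((u t)^2 + η) * kk a b u η)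
        = ((c0 a b u)^2 * kk a b u η) * ((u t)^2 + η) := by ring
      _ ≤ 1 * ((u t)^2 + η) := by
          apply mul_le_mul_of_nonneg_right hckk (by nlinarith [sq_nonneg (u t)])
      _ ≤ (u t)^2 + 1 := by nlinarith [sq_nonneg (u t)]
  rw [FF, Real.norm_of_nonneg (sq_nonneg _)]
  nlinarith [sq_nonneg (c0 a b u * Real.sqrt (((u t)^2 + η) * kk a b u η) + u t)]

include ha hab hb hum hu2 in
lemma bound_int : IntegrableOn (fun t => 2*((u t)^2+1) + 2*(u t)^2) (Set.Ioo a b) volume := by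
  have hsub : Set.Ioo a b ⊆ Set.Icc (0:ℝ) 1 :=
    fun r hr => ⟨ha.trans hr.1.le, hr.2.le.trans hb⟩
  have h2 : IntegrableOn (fun t => (u t)^2) (Set.Ioo a b) volume := hu2.mono_set hsub
  have hconst1 : IntegrableOn (fun _ => (1:ℝ)) (Set.Ioo a b) volume :=
    integrableOn_const (lt_top_iff_ne_top.mp (by rw [Real.volume_Ioo]; exact ENNReal.ofReal_lt_top))
  exact ((h2.add hconst1).const_mul 2).add (h2.const_mul 2)

include hab hη in
lemma FFint (hη1 : η ≤ 1) (ha : 0 ≤ a) (hb : b ≤ 1) (hum : Measurable u)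
    (hu2 : IntegrableOn (fun t => (u t)^2) (Set.Icc (0:ℝ) 1) volume) :
    IntegrableOn (FF a b u η) (Set.Ioo a b) volume := by
  apply Integrable.mono' (bound_int ha hab hb hum hu2)
    ((FFmeas hum).aestronglyMeasurable.restrict)
  exact Filter.Eventually.of_forall (FFbound hab hη hη1)

include ha hab hb hη hum hu2 in
lemma L2dist_act_vflat (hη1 : η ≤ 1) :
    L2dist (act (vflat a b u) (G a b u η ha hab hb hη hum hu2)) u
      = Real.sqrt (∫ t in Set.Ioo a b, FF a b u η t) := by
  rw [L2dist]
  congr 1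
  have hsub : Set.Ioo a b ⊆ Set.Icc (0:ℝ) 1 :=
    fun r hr => ⟨ha.trans hr.1.le, hr.2.le.trans hb⟩
  have hsplitset : Set.Ioo a b ∪ (Set.Icc (0:ℝ) 1 \ Set.Ioo a b) = Set.Icc (0:ℝ) 1 :=
    Set.union_diff_cancel hsub
  set g : ℝ → ℝ := fun t =>
    ‖act (vflat a b u) (G a b u η ha hab hb hη hum hu2) t - u t‖^2 with hgdef
  have hIoo : Set.EqOn g (FF a b u η) (Set.Ioo a b) := by
    intro t htm
    have := act_vflat ha hab hb hη hum hu2 (hsub htm)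
    rw [if_pos htm] at this
    rw [hgdef]
    simp only
    rw [this, Real.norm_eq_abs, sq_abs, FF, D, if_pos htm]
  have hout : ∀ t ∈ Set.Icc (0:ℝ) 1 \ Set.Ioo a b, g t = 0 := by
    intro t htm
    have := act_vflat ha hab hb hη hum hu2 htm.1
    rw [if_neg htm.2] at this
    rw [hgdef]
    simp only
    rw [this, sub_self, norm_zero]
    norm_num
  rw [← hsplitset, MeasureTheory.setIntegral_union disjoint_sdiff_self_right
    (measurableSet_Icc.diff measurableSet_Ioo)
    ((FFint hab hη hη1 ha hb hum hu2).congr_fun hIoo.symm measurableSet_Ioo)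
    ((integrableOn_zero).congr_fun (fun t ht => (hout t ht).symm)
      (measurableSet_Icc.diff measurableSet_Ioo))]
  rw [setIntegral_congr_fun measurableSet_Ioo hIoo,
    setIntegral_eq_zero_of_forall_eq_zero hout, add_zero]


include ha hab hb hum hu2 in
lemma tendsto_FF (hu_nn : ∀ᵐ t ∂(volume.restrict (Set.Ioo a b)), 0 ≤ u t) :
    Tendsto (fun n : ℕ => ∫ t in Set.Ioo a b, FF a b u (1/((n:ℝ)+1)) t) atTop (𝓝 0) := by
  have hηn : ∀ n : ℕ, (0:ℝ) < 1/((n:ℝ)+1) := fun n => by positivity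
  have hηn1 : ∀ n : ℕ, (1:ℝ)/((n:ℝ)+1) ≤ 1 := fun n => by
    rw [div_le_one (by positivity)]
    simp
  have hlim : ∀ᵐ t ∂(volume.restrict (Set.Ioo a b)),
      Tendsto (fun n : ℕ => FF a b u (1/((n:ℝ)+1)) t) atTop (𝓝 0) := by
    rcases eq_or_lt_of_le (hc2 (a := a) (b := b) (u := u)) with hc | hc
    · -- c2 = 0 : u = 0 a.e. on (a,b)
      have hzero : ∀ᵐ t ∂(volume.restrict (Set.Ioo a b)), (u t)^2 = 0 := by
        have hint : IntegrableOn (fun t => (u t)^2) (Set.Ioo a b) volume :=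
          hu2.mono_set (fun r hr => ⟨ha.trans hr.1.le, hr.2.le.trans hb⟩)
        have := (MeasureTheory.integral_eq_zero_iff_of_nonneg_ae
          (Filter.Eventually.of_forall (fun t => sq_nonneg (u t))) hint).mp hc.symm
        filter_upwards [this] with t h using h
      have hc0 : c0 a b u = 0 := by
        rw [c0, ← hc]
        simp
      filter_upwards [hzero] with t hz
      have : ∀ n : ℕ, FF a b u (1/((n:ℝ)+1)) t = 0 := by
        intro n
        rw [FF, hc0]
        have hu0 : u t = 0 := by nlinarith [sq_nonneg (u t)]
        rw [hu0]
        ring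
      simp only [this]
      exact tendsto_const_nhds
    · -- c2 > 0
      filter_upwards [hu_nn] with t hu
      have hba : (0:ℝ) < b - a := by linarith
      have h1 : Tendsto (fun n : ℕ => 1/((n:ℝ)+1)) atTop (𝓝 0) :=
        tendsto_one_div_add_atTop_nhds_zero_nat
      have hden : Tendsto (fun n : ℕ => c2 a b u + (1/((n:ℝ)+1))*(b-a)) atTop
          (𝓝 (c2 a b u)) := by
        have := tendsto_const_nhds (x := c2 a b u) (f := atTop (α := ℕ)) |>.add
          (h1.mul_const (b-a))
        simpa using this
      have hkk : Tendsto (fun n : ℕ => kk a b u (1/((n:ℝ)+1))) atTop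
          (𝓝 ((b-a)/(c2 a b u))) := by
        simp only [kk]
        exact (tendsto_const_nhds).div hden hc.ne'
      have harg : Tendsto (fun n : ℕ => ((u t)^2 + 1/((n:ℝ)+1)) * kk a b u (1/((n:ℝ)+1)))
          atTop (𝓝 ((u t)^2 * ((b-a)/(c2 a b u)))) := by
        have := ((tendsto_const_nhds (x := (u t)^2) (f := atTop (α := ℕ))).add h1).mul hkk
        simpa using this
      have hsqrt : Tendsto (fun n : ℕ =>
          c0 a b u * Real.sqrt (((u t)^2 + 1/((n:ℝ)+1)) * kk a b u (1/((n:ℝ)+1))) - u t)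
          atTop (𝓝 (c0 a b u * Real.sqrt ((u t)^2 * ((b-a)/(c2 a b u))) - u t)) := by
        exact (((Real.continuous_sqrt.continuousAt).tendsto.comp harg).const_mul _).sub
          tendsto_const_nhds
      have hval : c0 a b u * Real.sqrt ((u t)^2 * ((b-a)/(c2 a b u))) - u t = 0 := by
        rw [c0, ← Real.sqrt_mul (by positivity)]
        have : c2 a b u / (b - a) * ((u t)^2 * ((b-a)/(c2 a b u))) = (u t)^2 := by
          field_simp
        rw [this, Real.sqrt_sq hu]
        ring
      have := hsqrt.pow 2
      rw [hval] at this
      simp only [FF]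
      simpa using this
  have hbd : ∀ n : ℕ, ∀ᵐ t ∂(volume.restrict (Set.Ioo a b)),
      ‖FF a b u (1/((n:ℝ)+1)) t‖ ≤ 2*((u t)^2+1) + 2*(u t)^2 :=
    fun n => Filter.Eventually.of_forall (FFbound hab (hηn n) (hηn1 n))
  have := MeasureTheory.tendsto_integral_of_dominated_convergence
    (F := fun n t => FF a b u (1/((n:ℝ)+1)) t) (f := fun _ => (0:ℝ))
    (bound := fun t => 2*((u t)^2+1) + 2*(u t)^2)
    (fun n => (FFmeas hum).aestronglyMeasurable.restrict)
    (bound_int ha hab hb hum hu2) hbd hlim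
  simpa using this

include ha hab hb hum hu2 in
lemma exists_G_approx (hu_nn : ∀ᵐ t ∂(volume.restrict (Set.Ioo a b)), 0 ≤ u t)
    {ε : ℝ} (hε : 0 < ε) :
    ∃ (η : ℝ) (hη : 0 < η) (hη1 : η ≤ 1),
      L2dist (act (vflat a b u) (G a b u η ha hab hb hη hum hu2)) u < ε := by
  have htend := tendsto_FF ha hab hb hum hu2 hu_nn
  have hev : ∀ᶠ n : ℕ in atTop, ∫ t in Set.Ioo a b, FF a b u (1/((n:ℝ)+1)) t < ε^2 := by
    apply htend.eventually_lt_const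
    positivity
  obtain ⟨n, hn⟩ := hev.exists
  have hηn : (0:ℝ) < 1/((n:ℝ)+1) := by positivity
  have hηn1 : (1:ℝ)/((n:ℝ)+1) ≤ 1 := by
    rw [div_le_one (by positivity)]
    simp
  refine ⟨1/((n:ℝ)+1), hηn, hηn1, ?_⟩
  rw [L2dist_act_vflat ha hab hb hηn hum hu2 hηn1]
  exact (Real.sqrt_lt' hε).mpr hn


variable (a b u η) in
/-- The inverse of the flattening reparametrization. -/
def GinvFun : ℝ → ℝ := fun s =>
  sSup (Set.Icc (0:ℝ) 1 ∩ Gfun a b u η ⁻¹' Set.Iic (max 0 (min 1 s)))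

include ha hab hb hη hum hu2 in
lemma GinvFun_spec {s : ℝ} (hs : s ∈ Set.Icc (0:ℝ) 1) :
    GinvFun a b u η s ∈ Set.Icc (0:ℝ) 1 ∧ Gfun a b u η (GinvFun a b u η s) = s := by
  obtain ⟨v, hvI, hγv, hSeq⟩ :=
    (G a b u η ha hab hb hη hum hu2).exists_pullback hs.1 hs.2
  have hclamp : max 0 (min 1 s) = s := by
    rw [min_eq_right hs.2, max_eq_right hs.1]
  have hSeq' : Gfun a b u η ⁻¹' Set.Iic s ∩ Set.Icc (0:ℝ) 1
      = Set.Iic v ∩ Set.Icc (0:ℝ) 1 := hSeq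
  have hset : Set.Icc (0:ℝ) 1 ∩ Gfun a b u η ⁻¹' Set.Iic (max 0 (min 1 s))
      = Set.Icc (0:ℝ) v := by
    rw [hclamp, Set.inter_comm, hSeq', GammaTilde.Iic_inter_Icc hvI.2]
  have : GinvFun a b u η s = v := by
    rw [GinvFun, hset, csSup_Icc hvI.1]
  rw [this]
  exact ⟨hvI, hγv⟩

include ha hab hb hη hum hu2 in
lemma GinvFun_leftinv {t : ℝ} (ht : t ∈ Set.Icc (0:ℝ) 1) :
    GinvFun a b u η (Gfun a b u η t) = t := by
  have hsI : Gfun a b u η t ∈ Set.Icc (0:ℝ) 1 :=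
    (G a b u η ha hab hb hη hum hu2).mapsTo ht
  obtain ⟨hτI, hGτ⟩ := GinvFun_spec ha hab hb hη hum hu2 hsI
  exact (Gfun_smono hab hη hum hu2).injOn hτI ht hGτ

include ha hab hb hη hum hu2 in
lemma GinvFun_mono : Monotone (GinvFun a b u η) := by
  intro s s' hss
  apply csSup_le_csSup
  · exact ⟨1, fun t ht => ht.1.2⟩
  · refine ⟨0, ⟨by norm_num, ?_⟩⟩
    simp only [Set.mem_preimage, Set.mem_Iic]
    rw [show Gfun a b u η 0 = 0 from Gfun_low le_rfl ha]
    exact le_max_left _ _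
  · apply Set.inter_subset_inter_right
    apply Set.preimage_mono
    apply Set.Iic_subset_Iic.mpr
    exact max_le_max le_rfl (min_le_min le_rfl hss)

variable (a b u η) in
/-- Density of the inverse reparametrization. -/
def dinv (ha : 0 ≤ a) (hab : a < b) (hb : b ≤ 1) (hη : 0 < η) (hum : Measurable u)
    (hu2 : IntegrableOn (fun t => (u t)^2) (Set.Icc (0:ℝ) 1) volume) : ℝ → ℝ :=
  fun s => (D a b u η (GinvFun a b u η s))⁻¹

include hab hη in
lemma hDlb : ∀ t, min 1 (η * kk a b u η) ≤ D a b u η t := by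
  intro t
  have hk := hkpos hab hη (u := u)
  rw [D]
  split_ifs with h
  · calc min 1 (η * kk a b u η) ≤ η * kk a b u η := min_le_right _ _
      _ ≤ ((u t)^2 + η) * kk a b u η := by nlinarith [sq_nonneg (u t)]
  · exact min_le_left _ _

include ha hab hb hη hum hu2 in
lemma dinv_meas : Measurable (dinv a b u η ha hab hb hη hum hu2) :=
  ((hDmeas hum).comp (GinvFun_mono ha hab hb hη hum hu2).measurable).inv

include ha hab hb hη hum hu2 in
lemma dinv_pos : ∀ s, 0 < dinv a b u η ha hab hb hη hum hu2 s :=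
  fun s => inv_pos.mpr (hDpos hab hη _)

include ha hab hb hη hum hu2 in
lemma dinv_int : IntegrableOn (dinv a b u η ha hab hb hη hum hu2) (Set.Icc (0:ℝ) 1) volume := by
  have hk := hkpos hab hη (u := u)
  have hmpos : 0 < min 1 (η * kk a b u η) := lt_min (by norm_num) (by positivity)
  apply Integrable.mono' (g := fun _ => (min 1 (η * kk a b u η))⁻¹)
  · exact integrableOn_const (lt_top_iff_ne_top.mp (by rw [Real.volume_Icc]; exact ENNReal.ofReal_lt_top))
  · exact (dinv_meas ha hab hb hη hum hu2).aestronglyMeasurable.restrict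
  · apply Filter.Eventually.of_forall
    intro s
    rw [Real.norm_of_nonneg (dinv_pos ha hab hb hη hum hu2 s).le, dinv]
    exact inv_anti₀ hmpos (hDlb hab hη _)

include ha hab hb hη hum hu2 in
set_option maxHeartbeats 1000000 in
lemma dinv_lint {s : ℝ} (hs : s ∈ Set.Icc (0:ℝ) 1) :
    ∫⁻ r in Set.Icc 0 s, ENNReal.ofReal (dinv a b u η ha hab hb hη hum hu2 r) ∂volume
      = ENNReal.ofReal (GinvFun a b u η s) := by
  set Gt := G a b u η ha hab hb hη hum hu2 with hGt
  obtain ⟨hτI, hGτ⟩ := GinvFun_spec ha hab hb hη hum hu2 hs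
  set τ := GinvFun a b u η s with hτ
  have hgm : Measurable (fun r => ENNReal.ofReal (dinv a b u η ha hab hb hη hum hu2 r)) :=
    ENNReal.measurable_ofReal.comp (dinv_meas ha hab hb hη hum hu2)
  have hmap : volume.restrict (Set.Icc 0 s) = (Gt.dmeas.restrict (Set.Icc 0 τ)).map Gt.toFun := by
    rw [Gt.map_dmeas_restrict hτI, show Gt.toFun τ = s from hGτ]
  have haem : AEMeasurable Gt.toFun (Gt.dmeas.restrict (Set.Icc 0 τ)) :=
    (Gt.aemeasurable_toFun.mono_ac (withDensity_absolutelyContinuous μ01 _)).mono_measure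
      Measure.restrict_le_self
  rw [hmap, lintegral_map' hgm.aemeasurable haem]
  have h2 : Gt.dmeas.restrict (Set.Icc 0 τ)
      = (volume.restrict (Set.Icc 0 τ)).withDensity
        (fun t => ENNReal.ofReal (Gt.deriv' t)) := by
    rw [GammaTilde.dmeas, restrict_withDensity measurableSet_Icc, GammaTilde.restrict01 hτI]
  have hd : AEMeasurable (fun t => ENNReal.ofReal (Gt.deriv' t))
      (volume.restrict (Set.Icc 0 τ)) :=
    (ENNReal.measurable_ofReal.comp (hDmeas hum)).aemeasurable
  have hGaem : AEMeasurable Gt.toFun (volume.restrict (Set.Icc 0 τ)) :=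
    GammaTilde.restrict01 hτI ▸ Gt.aemeasurable_toFun.restrict
  have hgγ : AEMeasurable
      (fun t => ENNReal.ofReal (dinv a b u η ha hab hb hη hum hu2 (Gt.toFun t)))
      (volume.restrict (Set.Icc 0 τ)) := hgm.comp_aemeasurable hGaem
  rw [h2, lintegral_withDensity_eq_lintegral_mul₀ hd hgγ]
  have hcongr : ∫⁻ t in Set.Icc 0 τ,
      ((fun t => ENNReal.ofReal (Gt.deriv' t)) *
        fun t => ENNReal.ofReal (dinv a b u η ha hab hb hη hum hu2 (Gt.toFun t))) t ∂volume
      = ∫⁻ _ in Set.Icc 0 τ, 1 ∂volume := by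
    apply setLIntegral_congr_fun measurableSet_Icc
    intro t ht
    have htI : t ∈ Set.Icc (0:ℝ) 1 := ⟨ht.1, ht.2.trans hτI.2⟩
    have hli : GinvFun a b u η (Gfun a b u η t) = t :=
      GinvFun_leftinv ha hab hb hη hum hu2 htI
    simp only [Pi.mul_apply]
    have : dinv a b u η ha hab hb hη hum hu2 (Gt.toFun t) = (D a b u η t)⁻¹ := by
      rw [dinv]
      show (D a b u η (GinvFun a b u η (Gfun a b u η t)))⁻¹ = _
      rw [hli]
    rw [this]
    show ENNReal.ofReal (D a b u η t) * ENNReal.ofReal (D a b u η t)⁻¹ = 1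
    rw [← ENNReal.ofReal_mul (hDpos hab hη t).le,
      mul_inv_cancel₀ (hDpos hab hη t).ne', ENNReal.ofReal_one]
  rw [hcongr, setLIntegral_one, Real.volume_Icc, sub_zero]


variable (a b u η) in
/-- The inverse reparametrization as an element of `Γ̃`. -/
def Ginv (ha : 0 ≤ a) (hab : a < b) (hb : b ≤ 1) (hη : 0 < η) (hum : Measurable u)
    (hu2 : IntegrableOn (fun t => (u t)^2) (Set.Icc (0:ℝ) 1) volume) : GammaTilde where
  toFun := GinvFun a b u η
  deriv' := dinv a b u η ha hab hb hη hum hu2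
  integrableOn := dinv_int ha hab hb hη hum hu2
  nonneg := Filter.Eventually.of_forall fun s => (dinv_pos ha hab hb hη hum hu2 s).le
  map_zero := by
    have h0 : Gfun a b u η 0 = 0 := Gfun_low le_rfl ha
    have := GinvFun_leftinv ha hab hb hη hum hu2 (t := 0) (by constructor <;> norm_num)
    rwa [h0] at this
  map_one := by
    have h1 : Gfun a b u η 1 = 1 := Gfun_high hab hb le_rfl ha hb hη hum hu2
    have := GinvFun_leftinv ha hab hb hη hum hu2 (t := 1) (by constructor <;> norm_num)
    rwa [h1] at this
  eq_integral := by
    intro s hs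
    rw [intervalIntegral.integral_of_le hs.1, ← MeasureTheory.integral_Icc_eq_integral_Ioc]
    rw [MeasureTheory.integral_eq_lintegral_of_nonneg_ae
      (Filter.Eventually.of_forall (fun r => (dinv_pos ha hab hb hη hum hu2 r).le))
      (dinv_meas ha hab hb hη hum hu2).aestronglyMeasurable.restrict]
    rw [dinv_lint ha hab hb hη hum hu2 hs,
      ENNReal.toReal_ofReal (GinvFun_spec ha hab hb hη hum hu2 hs).1.1]

include ha hab hb hη hum hu2 in
lemma Ginv_isInGamma : (Ginv a b u η ha hab hb hη hum hu2).IsInGamma :=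
  Filter.Eventually.of_forall fun s => dinv_pos ha hab hb hη hum hu2 s

include ha hab hb hη hum hu2 in
lemma act_Ginv_G (f : ℝ → ℝ) :
    act f ((Ginv a b u η ha hab hb hη hum hu2).comp (G a b u η ha hab hb hη hum hu2)
      (G_isInGamma ha hab hb hη hum hu2)) =ᵐ[μ01] f := by
  have hmem : ∀ᵐ t ∂μ01, t ∈ Set.Icc (0:ℝ) 1 := ae_restrict_mem measurableSet_Icc
  filter_upwards [hmem] with t ht
  show Real.sqrt (dinv a b u η ha hab hb hη hum hu2 (Gfun a b u η t) * D a b u η t)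
      • f (GinvFun a b u η (Gfun a b u η t)) = f t
  rw [GinvFun_leftinv ha hab hb hη hum hu2 ht]
  have : dinv a b u η ha hab hb hη hum hu2 (Gfun a b u η t) = (D a b u η t)⁻¹ := by
    rw [dinv, GinvFun_leftinv ha hab hb hη hum hu2 ht]
  rw [this, inv_mul_cancel₀ (hDpos hab hη t).ne', Real.sqrt_one, one_smul]

include ha hab hb hη hum hu2 in
lemma L2dist_act_Ginv (f v' : ℝ → ℝ) (hf : AEMeasurable f μ01) (hv' : AEMeasurable v' μ01) :
    L2dist (act f (Ginv a b u η ha hab hb hη hum hu2)) v'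
      = L2dist f (act v' (G a b u η ha hab hb hη hum hu2)) := by
  set Gt := G a b u η ha hab hb hη hum hu2 with hGt
  set Iv := Ginv a b u η ha hab hb hη hum hu2 with hIv
  have hGγ : Gt.IsInGamma := G_isInGamma ha hab hb hη hum hu2
  have hIγ : Iv.IsInGamma := Ginv_isInGamma ha hab hb hη hum hu2
  have hfI : AEMeasurable (act f Iv) μ01 :=
    (aestronglyMeasurable_act Iv hIγ f hf).aemeasurable
  have h1 : L2dist (act (act f Iv) Gt) (act v' Gt) = L2dist (act f Iv) v' :=
    L2dist_act Gt hGγ _ _ hfI hv'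
  have h2 : act (act f Iv) Gt =ᵐ[μ01] f :=
    (act_comp_ae f Iv Gt hGγ).symm.trans (act_Ginv_G ha hab hb hη hum hu2 f)
  rw [← h1]
  exact L2dist_congr _ _ _ _ h2 (EventuallyEq.refl _ _)

end basic
end Flat


lemma L2dist_comm (f g : ℝ → ℝ) : L2dist f g = L2dist g f := by
  rw [L2dist, L2dist]
  congr 1
  apply MeasureTheory.integral_congr_ae
  apply Filter.Eventually.of_forall
  intro t
  show ‖f t - g t‖^2 = ‖g t - f t‖^2
  rw [norm_sub_rev]

/-- The main approximation lemma: under the hypotheses of the theorem,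
`act q γ` approximates `w` arbitrarily well with `γ ∈ Γ`. -/
lemma approx_main (a b : ℝ) (ha : 0 ≤ a) (hab : a < b) (hb : b ≤ 1)
    (q w : ℝ → ℝ) (hq : MemLp q 2 μ01) (hw : MemLp w 2 μ01)
    (h1 : ∀ᵐ t ∂(volume.restrict (Set.Ioo a b)), 0 ≤ q t ∧ 0 ≤ w t)
    (h2 : ∫ t in Set.Ioo a b, (q t)^2 = ∫ t in Set.Ioo a b, (w t)^2)
    (h3 : ∀ᵐ t ∂(volume.restrict (Set.Icc (0:ℝ) 1 \ Set.Ioo a b)), q t = w t)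
    {ε : ℝ} (hε : 0 < ε) :
    ∃ γ : GammaTilde, γ.IsInGamma ∧ L2dist (act q γ) w < ε := by
  classical
  -- measurable representatives
  obtain ⟨q', hq'm, hq'⟩ := hq.1.aemeasurable
  obtain ⟨w', hw'm, hw'⟩ := hw.1.aemeasurable
  have hsubI : Set.Ioo a b ⊆ Set.Icc (0:ℝ) 1 :=
    fun r hr => ⟨ha.trans hr.1.le, hr.2.le.trans hb⟩
  have hres : μ01.restrict (Set.Ioo a b) = volume.restrict (Set.Ioo a b) := by
    rw [show μ01 = volume.restrict (Set.Icc (0:ℝ) 1) from rfl,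
      Measure.restrict_restrict measurableSet_Ioo, Set.inter_eq_left.mpr hsubI]
  have hq'Ioo : ∀ᵐ t ∂(volume.restrict (Set.Ioo a b)), q t = q' t := by
    rw [← hres]; exact ae_restrict_of_ae hq'
  have hw'Ioo : ∀ᵐ t ∂(volume.restrict (Set.Ioo a b)), w t = w' t := by
    rw [← hres]; exact ae_restrict_of_ae hw'
  have hq'nn : ∀ᵐ t ∂(volume.restrict (Set.Ioo a b)), 0 ≤ q' t := by
    filter_upwards [h1, hq'Ioo] with t ht he
    rw [← he]; exact ht.1
  have hw'nn : ∀ᵐ t ∂(volume.restrict (Set.Ioo a b)), 0 ≤ w' t := by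
    filter_upwards [h1, hw'Ioo] with t ht he
    rw [← he]; exact ht.2
  have hq2 : IntegrableOn (fun t => (q' t)^2) (Set.Icc (0:ℝ) 1) volume := by
    have := hq.integrable_sq
    exact this.congr (by filter_upwards [hq'] with t ht; rw [ht])
  have hw2 : IntegrableOn (fun t => (w' t)^2) (Set.Icc (0:ℝ) 1) volume := by
    have := hw.integrable_sq
    exact this.congr (by filter_upwards [hw'] with t ht; rw [ht])
  -- c2 and c0 agree
  have hc2eq : Flat.c2 a b q' = Flat.c2 a b w' := by
    rw [Flat.c2, Flat.c2]
    calc ∫ s in Set.Ioo a b, (q' s)^2 = ∫ s in Set.Ioo a b, (q s)^2 :=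
          MeasureTheory.integral_congr_ae (by filter_upwards [hq'Ioo] with t ht; rw [ht])
      _ = ∫ s in Set.Ioo a b, (w s)^2 := h2
      _ = ∫ s in Set.Ioo a b, (w' s)^2 :=
          MeasureTheory.integral_congr_ae (by filter_upwards [hw'Ioo] with t ht; rw [ht])
  have hc0eq : Flat.c0 a b q' = Flat.c0 a b w' := by
    rw [Flat.c0, Flat.c0, hc2eq]
  -- the flattened functions agree a.e.
  have h3' : ∀ᵐ t ∂μ01, t ∈ Set.Icc (0:ℝ) 1 \ Set.Ioo a b → q t = w t := by
    apply ae_restrict_of_ae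
    exact (ae_restrict_iff' (measurableSet_Icc.diff measurableSet_Ioo)).mp h3
  have hmemI : ∀ᵐ t ∂μ01, t ∈ Set.Icc (0:ℝ) 1 := ae_restrict_mem measurableSet_Icc
  have hvv : Flat.vflat a b q' =ᵐ[μ01] Flat.vflat a b w' := by
    filter_upwards [h3', hq', hw', hmemI] with t h3t hqt hwt htI
    rw [Flat.vflat, Flat.vflat]
    by_cases hm : t ∈ Set.Ioo a b
    · rw [if_pos hm, if_pos hm, hc0eq]
    · rw [if_neg hm, if_neg hm, ← hqt, ← hwt]
      exact h3t ⟨htI, hm⟩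
  -- measurability and L² membership of the flattened function
  have hvqm : Measurable (Flat.vflat a b q') := by
    apply Measurable.ite measurableSet_Ioo measurable_const hq'm
  have hvqL2 : MemLp (Flat.vflat a b q') 2 μ01 := by
    rw [memLp_two_iff_integrable_sq hvqm.aestronglyMeasurable]
    apply Integrable.mono' (g := fun t => (Flat.c0 a b q')^2 + (q' t)^2)
    · exact (integrableOn_const (lt_top_iff_ne_top.mp (by
        rw [Real.volume_Icc]; exact ENNReal.ofReal_lt_top))).add hq2
    · exact (hvqm.pow_const 2).aestronglyMeasurable.restrict
    · apply Filter.Eventually.of_forall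
      intro t
      rw [Real.norm_of_nonneg (sq_nonneg _), Flat.vflat]
      split_ifs with hm
      · nlinarith [sq_nonneg (q' t)]
      · nlinarith [sq_nonneg (Flat.c0 a b q')]
  -- first approximation: act q δ₁ ≈ vflat q'
  obtain ⟨η₁, hη₁, hη₁1, happ₁⟩ :=
    Flat.exists_G_approx ha hab hb hq'm hq2 hq'nn (half_pos hε)
  set G₁ := Flat.G a b q' η₁ ha hab hb hη₁ hq'm hq2 with hG₁
  set Iv₁ := Flat.Ginv a b q' η₁ ha hab hb hη₁ hq'm hq2 with hIv₁
  have hIγ₁ : Iv₁.IsInGamma := Flat.Ginv_isInGamma ha hab hb hη₁ hq'm hq2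
  have hd₁ : L2dist (act q Iv₁) (Flat.vflat a b q') < ε/2 := by
    have hqq' : act q Iv₁ =ᵐ[μ01] act q' Iv₁ := by
      filter_upwards [Iv₁.ae_comp hIγ₁ hq'] with t ht
      show Real.sqrt (Iv₁.deriv' t) • q (Iv₁.toFun t) = Real.sqrt (Iv₁.deriv' t) • q' (Iv₁.toFun t)
      rw [ht]
    calc L2dist (act q Iv₁) (Flat.vflat a b q')
        = L2dist (act q' Iv₁) (Flat.vflat a b q') :=
          L2dist_congr _ _ _ _ hqq' (EventuallyEq.refl _ _)
      _ = L2dist q' (act (Flat.vflat a b q') G₁) :=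
          Flat.L2dist_act_Ginv ha hab hb hη₁ hq'm hq2 q' (Flat.vflat a b q')
            hq'm.aemeasurable hvqm.aemeasurable
      _ = L2dist (act (Flat.vflat a b q') G₁) q' := L2dist_comm _ _
      _ < ε/2 := happ₁
  -- second approximation: act (vflat w') G₂ ≈ w
  obtain ⟨η₂, hη₂, hη₂1, happ₂⟩ :=
    Flat.exists_G_approx ha hab hb hw'm hw2 hw'nn (half_pos hε)
  set G₂ := Flat.G a b w' η₂ ha hab hb hη₂ hw'm hw2 with hG₂
  have hGγ₂ : G₂.IsInGamma := Flat.G_isInGamma ha hab hb hη₂ hw'm hw2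
  have hd₂ : L2dist (act (Flat.vflat a b q') G₂) w < ε/2 := by
    have hvv2 : act (Flat.vflat a b q') G₂ =ᵐ[μ01] act (Flat.vflat a b w') G₂ := by
      filter_upwards [G₂.ae_comp hGγ₂ hvv] with t ht
      show Real.sqrt (G₂.deriv' t) • Flat.vflat a b q' (G₂.toFun t)
        = Real.sqrt (G₂.deriv' t) • Flat.vflat a b w' (G₂.toFun t)
      rw [ht]
    calc L2dist (act (Flat.vflat a b q') G₂) w
        = L2dist (act (Flat.vflat a b w') G₂) w :=
          L2dist_congr _ _ _ _ hvv2 (EventuallyEq.refl _ _)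
      _ = L2dist (act (Flat.vflat a b w') G₂) w' :=
          L2dist_congr _ _ _ _ (EventuallyEq.refl _ _) hw'
      _ < ε/2 := happ₂
  -- assemble
  refine ⟨Iv₁.comp G₂ hGγ₂, Iv₁.comp_isInGamma G₂ hIγ₁ hGγ₂, ?_⟩
  have hfL2 : MemLp (act q (Iv₁.comp G₂ hGγ₂)) 2 μ01 :=
    memL2_act _ (Iv₁.comp_isInGamma G₂ hIγ₁ hGγ₂) q hq
  have hgL2 : MemLp (act (Flat.vflat a b q') G₂) 2 μ01 :=
    memL2_act _ hGγ₂ _ hvqL2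
  have hfg : L2dist (act q (Iv₁.comp G₂ hGγ₂)) (act (Flat.vflat a b q') G₂)
      = L2dist (act q Iv₁) (Flat.vflat a b q') := by
    calc L2dist (act q (Iv₁.comp G₂ hGγ₂)) (act (Flat.vflat a b q') G₂)
        = L2dist (act (act q Iv₁) G₂) (act (Flat.vflat a b q') G₂) :=
          L2dist_congr _ _ _ _ (act_comp_ae q Iv₁ G₂ hGγ₂) (EventuallyEq.refl _ _)
      _ = L2dist (act q Iv₁) (Flat.vflat a b q') :=
          L2dist_act G₂ hGγ₂ _ _
            (aestronglyMeasurable_act Iv₁ hIγ₁ q hq.1.aemeasurable).aemeasurable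
            hvqm.aemeasurable
  have htri := L2dist_triangle (act q (Iv₁.comp G₂ hGγ₂)) (act (Flat.vflat a b q') G₂) w
    hfL2.1 hgL2.1 hw.1 ((hfL2.sub hgL2).2.ne) ((hgL2.sub hw).2.ne)
  calc L2dist (act q (Iv₁.comp G₂ hGγ₂)) w
      ≤ L2dist (act q (Iv₁.comp G₂ hGγ₂)) (act (Flat.vflat a b q') G₂)
        + L2dist (act (Flat.vflat a b q') G₂) w := htri
    _ < ε/2 + ε/2 := by
        rw [hfg]
        exact add_lt_add hd₁ hd₂
    _ = ε := by ring



/-- if `q, w ∈ L²(I,ℝ)` are unit vectors that are nonnegative a.e.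
on `(a,b)`, have equal square-integrals over `(a,b)`, and agree a.e. outside
`(a,b)`, then `[q] = [w]`. -/
theorem same_closed_orbit_of_local_modification (a b : ℝ)
    (ha : 0 ≤ a) (hab : a < b) (hb : b ≤ 1)
    (q w : ℝ → ℝ) (hq : MemLp q 2 μ01) (hw : MemLp w 2 μ01)
    (hqnorm : ∫ t in Set.Icc (0:ℝ) 1, (q t)^2 = 1)
    (hwnorm : ∫ t in Set.Icc (0:ℝ) 1, (w t)^2 = 1)
    (h1 : ∀ᵐ t ∂(volume.restrict (Set.Ioo a b)), 0 ≤ q t ∧ 0 ≤ w t)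
    (h2 : ∫ t in Set.Ioo a b, (q t)^2 = ∫ t in Set.Ioo a b, (w t)^2)
    (h3 : ∀ᵐ t ∂(volume.restrict (Set.Icc (0:ℝ) 1 \ Set.Ioo a b)), q t = w t) :
    orbitClosure q = orbitClosure w := by
  have h1' : ∀ᵐ t ∂(volume.restrict (Set.Ioo a b)), 0 ≤ w t ∧ 0 ≤ q t := by
    filter_upwards [h1] with t ht
    exact ⟨ht.2, ht.1⟩
  have h3' : ∀ᵐ t ∂(volume.restrict (Set.Icc (0:ℝ) 1 \ Set.Ioo a b)), w t = q t := by
    filter_upwards [h3] with t ht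
    exact ht.symm
  apply Set.Subset.antisymm
  · apply orbitClosure_subset_of_approx w q hw hq
    intro ε hε
    exact approx_main a b ha hab hb w q hw hq h1' h2.symm h3' hε
  · apply orbitClosure_subset_of_approx q w hq hw
    intro ε hε
    exact approx_main a b ha hab hb q w hq hw h1 h2 h3 hε


end
end

section
/- Suppose q, w ∈ L²(I,ℝ) are both in standard form, i.e. there are partitions I = A ∪ B and I = C ∪ D into disjoint measurable sets with q = 1 on A, q = −1 on B, w = 1 on C, w = −1 on D. If q ≠ w as L² functions (i.e. {t ∈ I : q(t) ≠ w(t)} has positive Lebesgue measure), then w ∉ [q]; in fact there is a constant c < 1, independent of γ ∈ Γ, such that ⟨q*γ, w⟩ ≤ c for all γ ∈ Γ. -/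
open MeasureTheory Set Filter

noncomputable section

variable {E : Type*} [NormedAddCommGroup E] [InnerProductSpace ℝ E]

namespace SF10
open scoped NNReal ENNReal

/-- primitive of `g` -/
def prim (g : ℝ → ℝ) : ℝ → ℝ := fun t => ∫ u in (0:ℝ)..t, g u

/-- a "nice" density: measurable, nonnegative, integrable, total mass one -/
structure Nice (g : ℝ → ℝ) : Prop where
  meas : Measurable g
  nn : ∀ s, 0 ≤ g s
  int : IntegrableOn g (Set.Icc (0:ℝ) 1) volume
  one : prim g 1 = 1

variable {g : ℝ → ℝ}

lemma prim_zero : prim g 0 = 0 := intervalIntegral.integral_same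

lemma Nice.ii (hg : Nice g) {a b : ℝ} (ha : a ∈ Icc (0:ℝ) 1) (hb : b ∈ Icc (0:ℝ) 1) :
    IntervalIntegrable g volume a b := by
  rw [intervalIntegrable_iff]
  refine hg.int.mono_set ?_
  exact (Set.uIoc_subset_uIcc).trans (Set.uIcc_subset_Icc ha hb)

lemma prim_sub (hg : Nice g) {a b : ℝ} (ha : a ∈ Icc (0:ℝ) 1) (hb : b ∈ Icc (0:ℝ) 1) :
    prim g b - prim g a = ∫ u in a..b, g u := by
  have h0 : (0:ℝ) ∈ Icc (0:ℝ) 1 := by constructor <;> norm_num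
  have := intervalIntegral.integral_add_adjacent_intervals (hg.ii h0 ha) (hg.ii ha hb)
  simp only [prim]
  linarith [this]

lemma prim_mono (hg : Nice g) {a b : ℝ} (h0 : 0 ≤ a) (hab : a ≤ b) (h1 : b ≤ 1) :
    prim g a ≤ prim g b := by
  have ha : a ∈ Icc (0:ℝ) 1 := ⟨h0, hab.trans h1⟩
  have hb : b ∈ Icc (0:ℝ) 1 := ⟨h0.trans hab, h1⟩
  have h := prim_sub hg ha hb
  have : 0 ≤ ∫ u in a..b, g u :=
    intervalIntegral.integral_nonneg hab (fun u _ => hg.nn u)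
  linarith

lemma prim_nonneg (hg : Nice g) {t : ℝ} (ht : t ∈ Icc (0:ℝ) 1) : 0 ≤ prim g t := by
  have := prim_mono hg le_rfl ht.1 ht.2
  rwa [prim_zero] at this

lemma prim_mem (hg : Nice g) {t : ℝ} (ht : t ∈ Icc (0:ℝ) 1) : prim g t ∈ Icc (0:ℝ) 1 :=
  ⟨prim_nonneg hg ht, by rw [← hg.one]; exact prim_mono hg ht.1 ht.2 le_rfl⟩

lemma prim_continuousOn (hg : Nice g) : ContinuousOn (prim g) (Icc (0:ℝ) 1) := by
  have := intervalIntegral.continuousOn_primitive_interval (μ := volume) (a := (0:ℝ)) (b := 1)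
    (f := g) (by rw [Set.uIcc_of_le zero_le_one]; exact hg.int)
  rwa [Set.uIcc_of_le zero_le_one] at this

lemma prim_eq_setIntegral {t : ℝ} (ht : 0 ≤ t) : prim g t = ∫ s in Ioc (0:ℝ) t, g s :=
  intervalIntegral.integral_of_le ht

lemma prim_aemeasurable (hg : Nice g) {S : Set ℝ} (hS : MeasurableSet S)
    (hsub : S ⊆ Icc (0:ℝ) 1) : AEMeasurable (prim g) (volume.restrict S) :=
  ((prim_continuousOn hg).mono hsub).aemeasurable hS

/-- THE key measure identity: pushing forward `g·Leb` on `(0,t]` by the primitive of `g`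
gives Lebesgue measure on `(0, prim g t]`. -/
lemma map_prim (hg : Nice g) {t : ℝ} (ht : t ∈ Icc (0:ℝ) 1) :
    Measure.map (prim g)
      ((volume.restrict (Ioc (0:ℝ) t)).withDensity (fun s => ENNReal.ofReal (g s)))
      = volume.restrict (Ioc (0:ℝ) (prim g t)) := by
  set μt := (volume.restrict (Ioc (0:ℝ) t)).withDensity (fun s => ENNReal.ofReal (g s)) with hμt
  have hsub : Ioc (0:ℝ) t ⊆ Icc (0:ℝ) 1 := fun s hs => ⟨hs.1.le, hs.2.trans ht.2⟩
  have hψae : AEMeasurable (prim g) (volume.restrict (Ioc (0:ℝ) t)) :=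
    prim_aemeasurable hg measurableSet_Ioc hsub
  have hac : μt ≪ volume.restrict (Ioc (0:ℝ) t) := withDensity_absolutelyContinuous _ _
  have hψμt : AEMeasurable (prim g) μt := hψae.mono_ac hac
  have hgiOn : ∀ {b : ℝ}, b ∈ Icc (0:ℝ) 1 → IntegrableOn g (Ioc 0 b) volume := fun hb =>
    hg.int.mono_set (fun s hs => ⟨hs.1.le, hs.2.trans hb.2⟩)
  have hcompl : μt (Ioc (0:ℝ) t)ᶜ = 0 := by
    have : (volume.restrict (Ioc (0:ℝ) t)) (Ioc (0:ℝ) t)ᶜ = 0 := by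
      rw [Measure.restrict_apply (measurableSet_Ioc.compl)]
      simp
    exact hac this
  haveI : IsFiniteMeasure μt := by
    constructor
    rw [hμt, withDensity_apply _ MeasurableSet.univ, Measure.restrict_restrict MeasurableSet.univ,
      Set.univ_inter]
    rw [← ofReal_integral_eq_lintegral_ofReal (hgiOn ht)
      (Filter.Eventually.of_forall (fun s => hg.nn s))]
    exact ENNReal.ofReal_lt_top
  -- value on Ioc 0 σ for σ ∈ [0,t]
  have hval : ∀ {σ : ℝ}, 0 ≤ σ → σ ≤ t → μt (Ioc 0 σ) = ENNReal.ofReal (prim g σ) := by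
    intro σ h0 hσt
    rw [hμt, withDensity_apply _ measurableSet_Ioc, Measure.restrict_restrict measurableSet_Ioc,
      Set.inter_eq_self_of_subset_left (Set.Ioc_subset_Ioc_right hσt)]
    rw [← ofReal_integral_eq_lintegral_ofReal (hgiOn ⟨h0, hσt.trans ht.2⟩)
      (Filter.Eventually.of_forall (fun s => hg.nn s))]
    rw [prim_eq_setIntegral h0]
  refine Measure.ext_of_Iic _ _ (fun a => ?_)
  rw [Measure.map_apply_of_aemeasurable hψμt measurableSet_Iic,
    Measure.restrict_apply measurableSet_Iic]
  rcases lt_or_ge a 0 with ha | ha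
  · -- both zero
    have h1 : prim g ⁻¹' (Iic a) ∩ Ioc 0 t = ∅ := by
      rw [Set.eq_empty_iff_forall_notMem]
      rintro s ⟨hs1, hs2⟩
      rw [Set.mem_preimage, Set.mem_Iic] at hs1
      have := prim_nonneg hg (hsub hs2)
      linarith
    have h2 : μt (prim g ⁻¹' (Iic a)) = 0 := by
      have hle : prim g ⁻¹' (Iic a) ⊆ (Ioc (0:ℝ) t)ᶜ ∪ (prim g ⁻¹' (Iic a) ∩ Ioc 0 t) := by
        intro s hs
        by_cases h : s ∈ Ioc (0:ℝ) t
        · exact Or.inr ⟨hs, h⟩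
        · exact Or.inl h
      refine measure_mono_null hle ?_
      rw [h1]
      refine measure_union_null hcompl (by simp)
    rw [h2]
    have : Iic a ∩ Ioc 0 (prim g t) = ∅ := by
      rw [Set.eq_empty_iff_forall_notMem]
      rintro s ⟨hs1, hs2⟩
      rw [Set.mem_Iic] at hs1
      have := hs2.1
      linarith
    rw [this, measure_empty]
  · -- main case
    set K := Icc (0:ℝ) t ∩ prim g ⁻¹' (Iic a) with hK
    have hKcl : IsClosed K :=
      ((prim_continuousOn hg).mono (Icc_subset_Icc le_rfl ht.2)).preimage_isClosed_of_isClosed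
        isClosed_Icc isClosed_Iic
    have hK0 : (0:ℝ) ∈ K := ⟨⟨le_rfl, ht.1⟩, by simp [Set.mem_preimage, prim_zero, ha]⟩
    have hKbdd : BddAbove K := ⟨t, fun s hs => hs.1.2⟩
    set σ := sSup K with hσ
    have hσK : σ ∈ K := hKcl.csSup_mem ⟨0, hK0⟩ hKbdd
    have hσt : σ ≤ t := hσK.1.2
    have hσ0 : 0 ≤ σ := hσK.1.1
    have hσa : prim g σ ≤ a := hσK.2
    have hset : prim g ⁻¹' (Iic a) ∩ Ioc 0 t = Ioc 0 σ := by
      ext s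
      simp only [Set.mem_inter_iff, Set.mem_preimage, Set.mem_Iic, Set.mem_Ioc]
      constructor
      · rintro ⟨hs1, hs2, hs3⟩
        exact ⟨hs2, le_csSup hKbdd ⟨⟨hs2.le, hs3⟩, hs1⟩⟩
      · rintro ⟨h1, h2⟩
        have hs1 : s ≤ t := h2.trans hσt
        exact ⟨(prim_mono hg h1.le h2 (hσt.trans ht.2)).trans hσa, h1, hs1⟩
    have h2 : μt (prim g ⁻¹' (Iic a)) = μt (Ioc 0 σ) := by
      apply measure_congr
      rw [Filter.eventuallyEq_set]
      have : ∀ s ∈ Ioc (0:ℝ) t, (s ∈ prim g ⁻¹' (Iic a) ↔ s ∈ Ioc 0 σ) := by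
        intro s hs
        rw [← hset]
        simp only [Set.mem_inter_iff, Set.mem_preimage, Set.mem_Iic]
        exact (and_iff_left hs).symm
      have h3 : ∀ᵐ s ∂μt, s ∈ Ioc (0:ℝ) t := by
        rw [MeasureTheory.ae_iff]
        exact hcompl
      filter_upwards [h3] with s hs using this s hs
    rw [h2, hval hσ0 hσt]
    -- RHS
    have hIic : Iic a ∩ Ioc 0 (prim g t) = Ioc 0 (min a (prim g t)) := by
      ext s
      simp only [Set.mem_inter_iff, Set.mem_Iic, Set.mem_Ioc, lt_min_iff, le_min_iff]
      constructor
      · rintro ⟨h1, h2, h3⟩; exact ⟨h2, h1, h3⟩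
      · rintro ⟨h1, h2, h3⟩; exact ⟨h2, h1, h3⟩
    rw [hIic, Real.volume_Ioc, sub_zero]
    congr 1
    -- prim g σ = min a (prim g t)
    rcases le_or_gt (prim g t) a with hcase | hcase
    · have : σ = t := le_antisymm hσt (le_csSup hKbdd ⟨⟨ht.1, le_rfl⟩, hcase⟩)
      rw [this, min_eq_right hcase]
    · rw [min_eq_left hcase.le]
      -- IVT on [σ, t]
      have hIcc : Icc σ t ⊆ Icc (0:ℝ) 1 := Icc_subset_Icc hσ0 ht.2
      have hIVT := intermediate_value_Icc hσt ((prim_continuousOn hg).mono hIcc)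
      have haMem : a ∈ Icc (prim g σ) (prim g t) := ⟨hσa, hcase.le⟩
      obtain ⟨s, hsmem, hsa⟩ := hIVT haMem
      have : s ∈ K := ⟨⟨hσ0.trans hsmem.1, hsmem.2⟩, by simp [Set.mem_preimage, hsa]⟩
      have hs : s ≤ σ := le_csSup hKbdd this
      have : s = σ := le_antisymm hs hsmem.1
      rw [← this, hsa]


/-- Change of variables: `∫₀ᵗ q(ψ(s)) g(s) ds = ∫₀^{ψ(t)} q` for `ψ = prim g`. -/
lemma cov (hg : Nice g) {q : ℝ → ℝ} (hqm : Measurable q) {t : ℝ} (ht : t ∈ Icc (0:ℝ) 1) :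
    ∫ s in Ioc (0:ℝ) t, q (prim g s) * g s = ∫ x in Ioc (0:ℝ) (prim g t), q x := by
  set μt := (volume.restrict (Ioc (0:ℝ) t)).withDensity (fun s => ENNReal.ofReal (g s)) with hμt
  have hsub : Ioc (0:ℝ) t ⊆ Icc (0:ℝ) 1 := fun s hs => ⟨hs.1.le, hs.2.trans ht.2⟩
  have hψae : AEMeasurable (prim g) (volume.restrict (Ioc (0:ℝ) t)) :=
    prim_aemeasurable hg measurableSet_Ioc hsub
  have hψμt : AEMeasurable (prim g) μt := hψae.mono_ac (withDensity_absolutelyContinuous _ _)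
  have h1 : ∫ x in Ioc (0:ℝ) (prim g t), q x = ∫ x, q x ∂(Measure.map (prim g) μt) := by
    rw [map_prim hg ht]
  rw [h1, integral_map hψμt hqm.aestronglyMeasurable]
  have h2 : μt = (volume.restrict (Ioc (0:ℝ) t)).withDensity
      (fun s => (((fun u => (g u).toNNReal) s : ℝ≥0) : ℝ≥0∞)) := rfl
  have hf : AEMeasurable (fun u => (g u).toNNReal) (volume.restrict (Ioc (0:ℝ) t)) :=
    (measurable_real_toNNReal.comp hg.meas).aemeasurable
  rw [h2, integral_withDensity_eq_integral_smul₀ hf (fun x => q (prim g x))]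
  refine (setIntegral_congr_fun measurableSet_Ioc (fun s _ => ?_)).symm
  rw [NNReal.smul_def, Real.coe_toNNReal _ (hg.nn s), smul_eq_mul, mul_comm]

/-- Pulling back a null set through `prim g`. -/
lemma null_pull (hg : Nice g) {N : Set ℝ} (hN : MeasurableSet N)
    (hN0 : volume (N ∩ Ioc (0:ℝ) 1) = 0) :
    ∀ᵐ s ∂(volume.restrict (Icc (0:ℝ) 1)), prim g s ∈ N → g s = 0 := by
  rw [Measure.restrict_congr_set Ioc_ae_eq_Icc.symm]
  set μ1 := (volume.restrict (Ioc (0:ℝ) 1)).withDensity (fun s => ENNReal.ofReal (g s)) with hμ1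
  have h01 : (1:ℝ) ∈ Icc (0:ℝ) 1 := ⟨zero_le_one, le_rfl⟩
  have hψae : AEMeasurable (prim g) (volume.restrict (Ioc (0:ℝ) 1)) :=
    prim_aemeasurable hg measurableSet_Ioc Ioc_subset_Icc_self
  have hac : μ1 ≪ volume.restrict (Ioc (0:ℝ) 1) := withDensity_absolutelyContinuous _ _
  have hψμ1 : AEMeasurable (prim g) μ1 := hψae.mono_ac hac
  have hmap : (Measure.map (prim g) μ1) N = 0 := by
    rw [map_prim hg h01, hg.one, Measure.restrict_apply hN]
    exact hN0
  set p := hψae.mk (prim g) with hp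
  have hpm : Measurable p := hψae.measurable_mk
  have hpe : prim g =ᵐ[volume.restrict (Ioc (0:ℝ) 1)] p := hψae.ae_eq_mk
  have hpe1 : prim g =ᵐ[μ1] p := hpe.filter_mono hac.ae_le
  have hmap2 : μ1 (p ⁻¹' N) = 0 := by
    rw [Measure.map_congr hpe1] at hmap
    rwa [Measure.map_apply hpm hN] at hmap
  rw [hμ1, withDensity_apply _ (hpm hN)] at hmap2
  have h3 := (setLIntegral_eq_zero_iff (hpm hN)
    (ENNReal.measurable_ofReal.comp hg.meas)).mp hmap2
  filter_upwards [h3, hpe] with s hs1 hs2 hsN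
  have h4 : ENNReal.ofReal (g s) = 0 := hs1 (by rw [Set.mem_preimage, ← hs2]; exact hsN)
  exact le_antisymm (ENNReal.ofReal_eq_zero.mp h4) (hg.nn s)

/-- If all primitives of a bounded measurable function vanish on `[0,1]`,
the function is a.e. zero on `[0,1]`. -/
lemma vanish {h : ℝ → ℝ} (hm : Measurable h) (hb : ∀ x, |h x| ≤ 2)
    (h0 : ∀ t ∈ Icc (0:ℝ) 1, ∫ s in Ioc (0:ℝ) t, h s = 0) :
    ∀ᵐ s ∂(volume.restrict (Icc (0:ℝ) 1)), h s = 0 := by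
  rw [Measure.restrict_congr_set Ioc_ae_eq_Icc.symm]
  have hfin : ∀ (f : ℝ → ℝ), (∀ x, |f x| ≤ 2) → ∀ {m : ℝ},
      ∫⁻ s in Ioc (0:ℝ) m, ENNReal.ofReal (f s) ∂volume ≠ ⊤ := by
    intro f hf m
    have hb' : ∀ s, ENNReal.ofReal (f s) ≤ ENNReal.ofReal 2 := fun s =>
      ENNReal.ofReal_le_ofReal (le_trans (le_abs_self _) (hf s))
    refine ne_of_lt (lt_of_le_of_lt (lintegral_mono hb') ?_)
    rw [lintegral_const, Measure.restrict_apply MeasurableSet.univ, Set.univ_inter]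
    exact ENNReal.mul_lt_top ENNReal.ofReal_lt_top measure_Ioc_lt_top
  have hInt : ∀ {m : ℝ}, IntegrableOn h (Ioc (0:ℝ) m) volume := by
    intro m
    refine Integrable.mono' (integrable_const 2) hm.aestronglyMeasurable ?_
    exact ae_of_all _ (fun x => by simpa using hb x)
  set ν1 := (volume.restrict (Ioc (0:ℝ) 1)).withDensity (fun s => ENNReal.ofReal (h s)) with hν1
  set ν2 := (volume.restrict (Ioc (0:ℝ) 1)).withDensity
    (fun s => ENNReal.ofReal (- h s)) with hν2
  have hν1' : ∀ {S : Set ℝ}, MeasurableSet S →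
      ν1 S = ∫⁻ s in S ∩ Ioc (0:ℝ) 1, ENNReal.ofReal (h s) ∂volume := by
    intro S hS
    rw [hν1, withDensity_apply _ hS, Measure.restrict_restrict hS]
  have hν2' : ∀ {S : Set ℝ}, MeasurableSet S →
      ν2 S = ∫⁻ s in S ∩ Ioc (0:ℝ) 1, ENNReal.ofReal (- h s) ∂volume := by
    intro S hS
    rw [hν2, withDensity_apply _ hS, Measure.restrict_restrict hS]
  haveI : IsFiniteMeasure ν1 := by
    constructor
    rw [hν1' MeasurableSet.univ, Set.univ_inter]
    exact lt_top_iff_ne_top.2 (hfin h hb)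
  have key : ν1 = ν2 := by
    refine Measure.ext_of_Iic _ _ (fun a => ?_)
    rw [hν1' measurableSet_Iic, hν2' measurableSet_Iic]
    rcases le_or_gt a 0 with ha | ha
    · have hempty : Iic a ∩ Ioc (0:ℝ) 1 = ∅ := by
        rw [Set.eq_empty_iff_forall_notMem]
        rintro s ⟨hs1, hs2⟩
        rw [Set.mem_Iic] at hs1
        have := hs2.1
        linarith
      rw [hempty]
      simp
    · have hIic : Iic a ∩ Ioc (0:ℝ) 1 = Ioc 0 (min a 1) := by
        ext s
        simp only [Set.mem_inter_iff, Set.mem_Iic, Set.mem_Ioc, lt_min_iff, le_min_iff]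
        constructor
        · rintro ⟨h1, h2, h3⟩; exact ⟨h2, h1, h3⟩
        · rintro ⟨h1, h2, h3⟩; exact ⟨h2, h1, h3⟩
      rw [hIic]
      have hmem : min a 1 ∈ Icc (0:ℝ) 1 := ⟨le_min ha.le zero_le_one, min_le_right _ _⟩
      have h00 := h0 (min a 1) hmem
      rw [integral_eq_lintegral_pos_part_sub_lintegral_neg_part hInt] at h00
      have hX := hfin h hb (m := min a 1)
      have hY := hfin (fun x => - h x) (fun x => by rw [abs_neg]; exact hb x) (m := min a 1)
      refine (ENNReal.toReal_eq_toReal_iff' hX hY).mp ?_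
      linarith
  have hple : ∀ᵐ s ∂(volume.restrict (Ioc (0:ℝ) 1)), ¬ (0 < h s) := by
    have hS : MeasurableSet {s : ℝ | 0 < h s} := measurableSet_lt measurable_const hm
    have h2 : ν2 {s : ℝ | 0 < h s} = 0 := by
      rw [hν2, withDensity_apply _ hS]
      have hzero : ∀ᵐ s ∂(volume.restrict (Ioc (0:ℝ) 1)),
          s ∈ {s : ℝ | 0 < h s} → ENNReal.ofReal (- h s) = (fun _ => (0:ℝ≥0∞)) s := by
        refine ae_of_all _ (fun s hs => ?_)
        rw [Set.mem_setOf_eq] at hs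
        rw [ENNReal.ofReal_eq_zero]
        linarith
      rw [setLIntegral_congr_fun_ae hS hzero]
      simp
    have h1 : ν1 {s : ℝ | 0 < h s} = 0 := by rw [key]; exact h2
    rw [hν1, withDensity_apply _ hS] at h1
    have := (setLIntegral_eq_zero_iff hS (ENNReal.measurable_ofReal.comp hm)).mp h1
    filter_upwards [this] with s hs hpos
    have := ENNReal.ofReal_eq_zero.mp (hs hpos)
    linarith
  have hnge : ∀ᵐ s ∂(volume.restrict (Ioc (0:ℝ) 1)), ¬ (h s < 0) := by
    have hS : MeasurableSet {s : ℝ | h s < 0} := measurableSet_lt hm measurable_const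
    have h1 : ν1 {s : ℝ | h s < 0} = 0 := by
      rw [hν1, withDensity_apply _ hS]
      have hzero : ∀ᵐ s ∂(volume.restrict (Ioc (0:ℝ) 1)),
          s ∈ {s : ℝ | h s < 0} → ENNReal.ofReal (h s) = (fun _ => (0:ℝ≥0∞)) s := by
        refine ae_of_all _ (fun s hs => ?_)
        rw [Set.mem_setOf_eq] at hs
        rw [ENNReal.ofReal_eq_zero]
        linarith
      rw [setLIntegral_congr_fun_ae hS hzero]
      simp
    have h2 : ν2 {s : ℝ | h s < 0} = 0 := by rw [← key]; exact h1
    rw [hν2, withDensity_apply _ hS] at h2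
    have := (setLIntegral_eq_zero_iff hS
      (ENNReal.measurable_ofReal.comp hm.neg)).mp h2
    filter_upwards [this] with s hs hneg
    have h5 : -h s ≤ 0 := ENNReal.ofReal_eq_zero.mp (hs hneg)
    linarith
  filter_upwards [hple, hnge] with s h1 h2
  linarith [not_lt.mp h1, not_lt.mp h2]


lemma mu01_def : μ01 = volume.restrict (Set.Icc (0:ℝ) 1) := rfl

lemma exists_nice (γ : GammaTilde) :
    ∃ g : ℝ → ℝ, Nice g ∧ g =ᵐ[μ01] γ.deriv' ∧ ∀ t ∈ Icc (0:ℝ) 1, prim g t = γ.toFun t := by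
  have hsm : AEMeasurable γ.deriv' μ01 := γ.integrableOn.aemeasurable
  set g0 := hsm.mk γ.deriv' with hg0
  set g : ℝ → ℝ := fun s => max (g0 s) 0 with hgdef
  have hmeas : Measurable g := hsm.measurable_mk.max measurable_const
  have hnn : ∀ s, 0 ≤ g s := fun s => le_max_right _ _
  have hae : g =ᵐ[μ01] γ.deriv' := by
    filter_upwards [hsm.ae_eq_mk, γ.nonneg] with s h1 h2
    have h3 : g0 s = γ.deriv' s := h1.symm
    simp only [hgdef]
    rw [h3, max_eq_left h2]
  have hint : IntegrableOn g (Set.Icc (0:ℝ) 1) volume := γ.integrableOn.congr hae.symm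
  have heq : ∀ t ∈ Icc (0:ℝ) 1, prim g t = γ.toFun t := by
    intro t ht
    rw [γ.eq_integral t ht, prim]
    rw [intervalIntegral.integral_of_le ht.1, intervalIntegral.integral_of_le ht.1]
    refine integral_congr_ae ?_
    have hsub : Ioc (0:ℝ) t ⊆ Icc (0:ℝ) 1 := fun s hs => ⟨hs.1.le, hs.2.trans ht.2⟩
    exact ae_restrict_of_ae_restrict_of_subset hsub hae
  have hone : prim g 1 = 1 := by rw [heq 1 ⟨zero_le_one, le_rfl⟩, γ.map_one]
  exact ⟨g, ⟨hmeas, hnn, hint, hone⟩, hae, heq⟩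

lemma act_congr {q q' : ℝ → ℝ} (hq'm : Measurable q') (hqq : q =ᵐ[μ01] q') (γ : GammaTilde) :
    act q γ =ᵐ[μ01] act q' γ := by
  obtain ⟨g, hg, gae, geq⟩ := exists_nice γ
  set N := toMeasurable volume ({x | ¬ q x = q' x} ∩ Icc (0:ℝ) 1) with hN
  have hNmeas : MeasurableSet N := measurableSet_toMeasurable _ _
  have hN0 : volume N = 0 := by
    rw [hN, measure_toMeasurable]
    have h1 : μ01 {x | ¬ q x = q' x} = 0 := ae_iff.mp hqq
    rw [mu01_def, Measure.restrict_apply' measurableSet_Icc] at h1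
    exact h1
  have hpull := null_pull hg hNmeas (measure_mono_null Set.inter_subset_left hN0)
  rw [mu01_def]
  have gae' : g =ᵐ[volume.restrict (Icc (0:ℝ) 1)] γ.deriv' := gae
  filter_upwards [hpull, gae', ae_restrict_mem measurableSet_Icc] with s h1 h2 h3
  simp only [act, smul_eq_mul]
  have htf : γ.toFun s = prim g s := (geq s h3).symm
  rw [htf, ← h2]
  by_cases hc : prim g s ∈ N
  · rw [h1 hc]
    simp
  · have hnotin : prim g s ∉ ({x | ¬ q x = q' x} ∩ Icc (0:ℝ) 1) :=
      fun hmem => hc (subset_toMeasurable _ _ hmem)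
    have hin : prim g s ∈ Icc (0:ℝ) 1 := prim_mem hg h3
    have heqq : q (prim g s) = q' (prim g s) := by
      by_contra hne
      exact hnotin ⟨hne, hin⟩
    rw [heqq]

set_option maxHeartbeats 2000000 in
/-- The main quantitative estimate for a single `γ`. -/
lemma main_est (q w : ℝ → ℝ) (hqm : Measurable q) (hwm : Measurable w)
    (hq1 : ∀ x, q x = 1 ∨ q x = -1) (hw1 : ∀ x, w x = 1 ∨ w x = -1) (γ : GammaTilde) :
    (∫ s in Icc (0:ℝ) 1, act q γ s * w s
        = 1 - (∫ s in Icc (0:ℝ) 1, (act q γ s - w s)^2)/2)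
    ∧ ∀ D : ℝ, 0 < D → (∫ s in Icc (0:ℝ) 1, (act q γ s - w s)^2) ≤ D →
      ∀ t ∈ Icc (0:ℝ) 1, |∫ x in Ioc (0:ℝ) t, (q x - w x)| ≤ 2*D + 5*Real.sqrt D := by
  obtain ⟨g, hg, gae, geq⟩ := exists_nice γ
  have gae' : g =ᵐ[volume.restrict (Icc (0:ℝ) 1)] γ.deriv' := gae
  set B : ℝ → ℝ := fun s => Real.sqrt (g s) * q (prim g s) with hBdef
  have hAB : ∀ᵐ s ∂(volume.restrict (Icc (0:ℝ) 1)), act q γ s = B s := by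
    filter_upwards [gae', ae_restrict_mem measurableSet_Icc] with s h1 h2
    simp only [act, smul_eq_mul, hBdef]
    have h3 : γ.toFun s = prim g s := (geq s h2).symm
    rw [h3, ← h1]
  -- pointwise algebra
  have hq2 : ∀ x, q x ^ 2 = 1 := fun x => by rcases hq1 x with h|h <;> rw [h] <;> norm_num
  have hw2 : ∀ x, w x ^ 2 = 1 := fun x => by rcases hw1 x with h|h <;> rw [h] <;> norm_num
  have habsq : ∀ x, |q x| = 1 := fun x => by rcases hq1 x with h|h <;> rw [h] <;> norm_num
  have habsw : ∀ x, |w x| = 1 := fun x => by rcases hw1 x with h|h <;> rw [h] <;> norm_num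
  have hB2 : ∀ s, B s ^ 2 = g s := fun s => by
    rw [hBdef]
    simp only
    rw [mul_pow, Real.sq_sqrt (hg.nn s), hq2, mul_one]
  have habsB : ∀ s, |B s| = Real.sqrt (g s) := fun s => by
    rw [hBdef]
    simp only
    rw [abs_mul, habsq, mul_one, abs_of_nonneg (Real.sqrt_nonneg _)]
  have hBw : ∀ s, (B s - w s)^2 = g s + 1 - 2*(B s * w s) := fun s => by
    have h1 := hB2 s
    have h2 := hw2 s
    nlinarith [h1, h2]
  -- measurability
  have hprimae : AEMeasurable (prim g) (volume.restrict (Icc (0:ℝ) 1)) :=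
    prim_aemeasurable hg measurableSet_Icc subset_rfl
  have hqp : AEMeasurable (fun s => q (prim g s)) (volume.restrict (Icc (0:ℝ) 1)) :=
    hqm.comp_aemeasurable hprimae
  have hsqrtm : Measurable (fun s => Real.sqrt (g s)) :=
    Real.continuous_sqrt.measurable.comp hg.meas
  have hBae : AEStronglyMeasurable B (volume.restrict (Icc (0:ℝ) 1)) :=
    (hsqrtm.aemeasurable.mul hqp).aestronglyMeasurable
  -- integrability
  have hIg : Integrable g (volume.restrict (Icc (0:ℝ) 1)) := hg.int
  have hI1 : Integrable (fun _ : ℝ => (1:ℝ)) (volume.restrict (Icc (0:ℝ) 1)) := integrable_const 1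
  have hIhalf : Integrable (fun s => (1 + g s)/2) (volume.restrict (Icc (0:ℝ) 1)) :=
    (hI1.add hIg).div_const 2
  have hIg1 : Integrable (fun s => g s + 1) (volume.restrict (Icc (0:ℝ) 1)) := hIg.add hI1
  have hI1g : Integrable (fun s => 1 + g s) (volume.restrict (Icc (0:ℝ) 1)) := hI1.add hIg
  have hsqrtle : ∀ s, Real.sqrt (g s) ≤ (1 + g s)/2 := fun s => by
    nlinarith [sq_nonneg (Real.sqrt (g s) - 1), Real.sq_sqrt (hg.nn s), Real.sqrt_nonneg (g s)]
  have hIsqrt : Integrable (fun s => Real.sqrt (g s)) (volume.restrict (Icc (0:ℝ) 1)) := by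
    refine Integrable.mono' hIhalf hsqrtm.aestronglyMeasurable (ae_of_all _ (fun s => ?_))
    rw [Real.norm_eq_abs, abs_of_nonneg (Real.sqrt_nonneg _)]
    exact hsqrtle s
  have hIBw : Integrable (fun s => B s * w s) (volume.restrict (Icc (0:ℝ) 1)) := by
    refine Integrable.mono' hIsqrt (hBae.mul hwm.aestronglyMeasurable)
      (ae_of_all _ (fun s => ?_))
    rw [Real.norm_eq_abs, abs_mul, habsB, habsw, mul_one]
  have hIBsq : Integrable (fun s => (B s - w s)^2) (volume.restrict (Icc (0:ℝ) 1)) := by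
    have hfe : (fun s => (B s - w s)^2) = fun s => g s + 1 - 2*(B s * w s) := funext hBw
    rw [hfe]
    exact (hIg.add hI1).sub (hIBw.const_mul 2)
  have hsq1e : (fun s => (Real.sqrt (g s) - 1)^2) = fun s => g s + 1 - 2*Real.sqrt (g s) := by
    funext s
    nlinarith [Real.sq_sqrt (hg.nn s)]
  have hIsq1 : Integrable (fun s => (Real.sqrt (g s) - 1)^2) (volume.restrict (Icc (0:ℝ) 1)) := by
    rw [hsq1e]
    exact (hIg.add hI1).sub (hIsqrt.const_mul 2)
  have hpluse : (fun s => (Real.sqrt (g s) + 1)^2) = fun s => g s + 1 + 2*Real.sqrt (g s) := by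
    funext s
    nlinarith [Real.sq_sqrt (hg.nn s)]
  have hIplus : Integrable (fun s => (Real.sqrt (g s) + 1)^2) (volume.restrict (Icc (0:ℝ) 1)) := by
    rw [hpluse]
    exact (hIg.add hI1).add (hIsqrt.const_mul 2)
  have hIqpw : Integrable (fun s => q (prim g s) - w s) (volume.restrict (Icc (0:ℝ) 1)) := by
    refine Integrable.mono' (integrable_const 2) ((hqp.sub hwm.aemeasurable).aestronglyMeasurable)
      (ae_of_all _ (fun s => ?_))
    rw [Real.norm_eq_abs]
    calc |q (prim g s) - w s| ≤ |q (prim g s)| + |w s| := abs_sub _ _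
    _ = 2 := by rw [habsq, habsw]; norm_num
  have hIabsqpw : Integrable (fun s => |q (prim g s) - w s|) (volume.restrict (Icc (0:ℝ) 1)) :=
    hIqpw.abs
  have hIabsg1 : Integrable (fun s => |g s - 1|) (volume.restrict (Icc (0:ℝ) 1)) :=
    (hIg.sub hI1).abs
  -- integral values
  have hVg : ∫ s in Icc (0:ℝ) 1, g s = 1 := by
    rw [integral_Icc_eq_integral_Ioc, ← prim_eq_setIntegral zero_le_one, hg.one]
  have hV1 : ∫ _ in Icc (0:ℝ) 1, (1:ℝ) = 1 := by
    rw [setIntegral_const, measureReal_def, Real.volume_Icc, smul_eq_mul, mul_one, sub_zero,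
      ENNReal.toReal_ofReal zero_le_one]
  have hVsqrt : ∫ s in Icc (0:ℝ) 1, Real.sqrt (g s) ≤ 1 := by
    have h1 : ∫ s in Icc (0:ℝ) 1, Real.sqrt (g s) ≤ ∫ s in Icc (0:ℝ) 1, (1 + g s)/2 :=
      integral_mono hIsqrt hIhalf hsqrtle
    have h2 : ∫ s in Icc (0:ℝ) 1, (1 + g s)/2 = 1 := by
      rw [integral_div, integral_add hI1 hIg, hV1, hVg]
      norm_num
    linarith
  have hVplus : ∫ s in Icc (0:ℝ) 1, (Real.sqrt (g s) + 1)^2 ≤ 4 := by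
    rw [hpluse, integral_add hIg1 (hIsqrt.const_mul 2), integral_add hIg hI1,
      integral_const_mul, hVg, hV1]
    linarith [hVsqrt]
  -- congruences
  have hIw : ∫ s in Icc (0:ℝ) 1, act q γ s * w s = ∫ s in Icc (0:ℝ) 1, B s * w s := by
    refine integral_congr_ae ?_
    filter_upwards [hAB] with s hs
    rw [hs]
  have hIsq : ∫ s in Icc (0:ℝ) 1, (act q γ s - w s)^2 = ∫ s in Icc (0:ℝ) 1, (B s - w s)^2 := by
    refine integral_congr_ae ?_
    filter_upwards [hAB] with s hs
    rw [hs]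
  constructor
  · rw [hIw, hIsq]
    have hsplit : ∫ s in Icc (0:ℝ) 1, (B s - w s)^2
        = (∫ s in Icc (0:ℝ) 1, (g s + 1)) - 2 * ∫ s in Icc (0:ℝ) 1, B s * w s := by
      have hfe : (fun s => (B s - w s)^2) = fun s => (g s + 1) - 2*(B s * w s) := by
        funext s
        rw [hBw s]
      rw [hfe, integral_sub hIg1 (hIBw.const_mul 2), integral_const_mul]
    have hgp1 : ∫ s in Icc (0:ℝ) 1, (g s + 1) = 2 := by
      rw [integral_add hIg hI1, hVg, hV1]
      norm_num
    rw [hsplit, hgp1]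
    ring
  · intro D hD0 hD t ht
    rw [hIsq] at hD
    set E := ∫ s in Icc (0:ℝ) 1, (B s - w s)^2 with hE
    have hE0 : 0 ≤ E := integral_nonneg (fun s => sq_nonneg _)
    -- Bound 1
    have hBnd1 : ∫ s in Icc (0:ℝ) 1, (Real.sqrt (g s) - 1)^2 ≤ D := by
      refine le_trans (integral_mono hIsq1 hIBsq (fun s => ?_)) hD
      rcases hq1 (prim g s) with h|h <;> rcases hw1 s with h'|h' <;>
        simp only [hBdef, h, h', mul_one, mul_neg_one] <;>
        nlinarith [Real.sqrt_nonneg (g s)]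
    -- Bound 2
    have hBnd2 : ∫ s in Icc (0:ℝ) 1, |q (prim g s) - w s| ≤ 2*D := by
      have h1 : ∫ s in Icc (0:ℝ) 1, |q (prim g s) - w s|
          ≤ ∫ s in Icc (0:ℝ) 1, 2*(B s - w s)^2 := by
        refine integral_mono hIabsqpw (hIBsq.const_mul 2) (fun s => ?_)
        have hx0 : 0 ≤ Real.sqrt (g s) := Real.sqrt_nonneg _
        rcases hq1 (prim g s) with h|h <;> rcases hw1 s with h'|h' <;>
          simp only [hBdef, h, h', mul_one, mul_neg_one]
        · rw [sub_self, abs_zero]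
          positivity
        · rw [show ((1:ℝ) - -1) = 2 by norm_num, abs_two]
          nlinarith [hx0]
        · rw [show ((-1:ℝ) - 1) = -2 by norm_num, abs_neg, abs_two]
          nlinarith [hx0]
        · rw [sub_self, abs_zero]
          positivity
      rw [integral_const_mul] at h1
      linarith
    -- Bound 3
    have hsD : 0 < Real.sqrt D := Real.sqrt_pos.mpr hD0
    have hBnd3 : ∫ s in Icc (0:ℝ) 1, |g s - 1| ≤ 5/2 * Real.sqrt D := by
      have hpt : ∀ s, 2*Real.sqrt D * |g s - 1|
          ≤ (Real.sqrt (g s) - 1)^2 + D*(Real.sqrt (g s) + 1)^2 := by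
        intro s
        set x := Real.sqrt (g s) with hx
        have hx0 : 0 ≤ x := Real.sqrt_nonneg _
        have hx2 : x^2 = g s := Real.sq_sqrt (hg.nn s)
        have h1 : |g s - 1| = |x - 1| * (x + 1) := by
          have hfact : g s - 1 = (x-1)*(x+1) := by rw [← hx2]; ring
          rw [hfact, abs_mul, abs_of_nonneg (by linarith : (0:ℝ) ≤ x + 1)]
        rw [h1]
        have hD2 : Real.sqrt D ^ 2 = D := Real.sq_sqrt hD0.le
        nlinarith [sq_nonneg (|x - 1| - Real.sqrt D * (x+1)), sq_abs (x-1),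
          Real.sqrt_nonneg D, abs_nonneg (x-1)]
      have hint : ∫ s in Icc (0:ℝ) 1, 2*Real.sqrt D * |g s - 1|
          ≤ ∫ s in Icc (0:ℝ) 1, ((Real.sqrt (g s) - 1)^2 + D*(Real.sqrt (g s) + 1)^2) :=
        integral_mono (hIabsg1.const_mul _) (hIsq1.add (hIplus.const_mul D)) hpt
      rw [integral_const_mul, integral_add hIsq1 (hIplus.const_mul D), integral_const_mul] at hint
      have h5D : 2*Real.sqrt D * ∫ s in Icc (0:ℝ) 1, |g s - 1| ≤ 5*D := by
        nlinarith [hBnd1, hVplus, hD0.le]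
      have hDD : D = Real.sqrt D * Real.sqrt D := (Real.mul_self_sqrt hD0.le).symm
      nlinarith [hsD]
    -- per-t quantities
    have hsub : Ioc (0:ℝ) t ⊆ Icc (0:ℝ) 1 := fun s hs => ⟨hs.1.le, hs.2.trans ht.2⟩
    set ψt := prim g t with hψt
    have hψmem : ψt ∈ Icc (0:ℝ) 1 := prim_mem hg ht
    have hIg' : IntegrableOn g (Ioc (0:ℝ) t) volume := hg.int.mono_set hsub
    have habsmono : ∀ (f : ℝ → ℝ), Integrable f (volume.restrict (Icc (0:ℝ) 1)) →
        |∫ s in Ioc (0:ℝ) t, f s| ≤ ∫ s in Icc (0:ℝ) 1, |f s| := by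
      intro f hf
      have h1 : |∫ s in Ioc (0:ℝ) t, f s| ≤ ∫ s in Ioc (0:ℝ) t, |f s| := by
        have := norm_integral_le_integral_norm (μ := volume.restrict (Ioc (0:ℝ) t)) f
        simpa [Real.norm_eq_abs] using this
      refine h1.trans (setIntegral_mono_set hf.abs (ae_of_all _ (fun s => abs_nonneg _)) ?_)
      exact HasSubset.Subset.eventuallyLE hsub
    -- T1
    have hT1 : |ψt - t| ≤ 5/2 * Real.sqrt D := by
      have ht' : ∫ _ in Ioc (0:ℝ) t, (1:ℝ) = t := by
        rw [setIntegral_const, measureReal_def, Real.volume_Ioc, smul_eq_mul, mul_one, sub_zero,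
          ENNReal.toReal_ofReal ht.1]
      have h1 : ψt - t = ∫ s in Ioc (0:ℝ) t, (g s - 1) := by
        rw [integral_sub hIg' (integrable_const 1), ht', hψt, prim_eq_setIntegral ht.1]
      rw [h1]
      exact (habsmono _ (hIg.sub hI1)).trans hBnd3
    -- T2
    have hT2 : |∫ s in Ioc (0:ℝ) t, (q (prim g s) - w s)| ≤ 2*D :=
      (habsmono _ hIqpw).trans hBnd2
    -- T3
    have hqp' : AEMeasurable (fun s => q (prim g s)) (volume.restrict (Ioc (0:ℝ) t)) :=
      hqm.comp_aemeasurable (prim_aemeasurable hg measurableSet_Ioc hsub)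
    have hT3 : |∫ s in Ioc (0:ℝ) t, q (prim g s) * (1 - g s)| ≤ 5/2 * Real.sqrt D := by
      have heqabs : ∀ s, |q (prim g s) * (1 - g s)| = |g s - 1| := by
        intro s
        rw [abs_mul, habsq, one_mul, abs_sub_comm]
      have hIint : Integrable (fun s => q (prim g s) * (1 - g s))
          (volume.restrict (Icc (0:ℝ) 1)) := by
        refine Integrable.mono' hIabsg1 ((hqp.mul ((aemeasurable_const (b := (1:ℝ))).sub
          hIg.aemeasurable)).aestronglyMeasurable) (ae_of_all _ (fun s => ?_))
        rw [Real.norm_eq_abs, heqabs s]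
      have h1 := habsmono _ hIint
      refine h1.trans ?_
      have h2 : ∫ s in Icc (0:ℝ) 1, |q (prim g s) * (1 - g s)| = ∫ s in Icc (0:ℝ) 1, |g s - 1| :=
        integral_congr_ae (ae_of_all _ heqabs)
      rw [h2]
      exact hBnd3
    -- T4 (change of variables)
    have hT4 : ∫ s in Ioc (0:ℝ) t, q (prim g s) * g s = ∫ x in Ioc (0:ℝ) ψt, q x :=
      cov hg hqm ht
    -- T5
    have hqii : ∀ a b : ℝ, IntervalIntegrable q volume a b := by
      intro a b
      rw [intervalIntegrable_iff]
      haveI : IsFiniteMeasure (volume.restrict (Set.uIoc a b)) := by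
        constructor
        rw [Measure.restrict_apply MeasurableSet.univ, Set.univ_inter]
        exact measure_Ioc_lt_top
      refine Integrable.mono' (integrable_const 1) hqm.aestronglyMeasurable
        (ae_of_all _ (fun x => ?_))
      rw [Real.norm_eq_abs, habsq]
    have hT5 : |(∫ x in Ioc (0:ℝ) ψt, q x) - ∫ x in Ioc (0:ℝ) t, q x| ≤ |ψt - t| := by
      rw [← intervalIntegral.integral_of_le hψmem.1, ← intervalIntegral.integral_of_le ht.1,
        intervalIntegral.integral_interval_sub_left (hqii 0 ψt) (hqii 0 t)]
      have := intervalIntegral.norm_integral_le_of_norm_le_const (C := 1) (a := t) (b := ψt)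
        (f := q) (fun x _ => by rw [Real.norm_eq_abs, habsq])
      rw [Real.norm_eq_abs] at this
      linarith [this]
    -- assembly
    have hIw' : IntegrableOn w (Ioc (0:ℝ) t) volume := by
      refine Integrable.mono' (integrable_const 1) hwm.aestronglyMeasurable
        (ae_of_all _ (fun x => ?_))
      rw [Real.norm_eq_abs, habsw]
    have hIq' : IntegrableOn q (Ioc (0:ℝ) t) volume := by
      refine Integrable.mono' (integrable_const 1) hqm.aestronglyMeasurable
        (ae_of_all _ (fun x => ?_))
      rw [Real.norm_eq_abs, habsq]
    have hIqp2 : Integrable (fun s => q (prim g s)) (volume.restrict (Ioc (0:ℝ) t)) := by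
      refine Integrable.mono' (integrable_const 1) hqp'.aestronglyMeasurable
        (ae_of_all _ (fun x => ?_))
      rw [Real.norm_eq_abs, habsq]
    have hIqpg : Integrable (fun s => q (prim g s) * g s) (volume.restrict (Ioc (0:ℝ) t)) := by
      refine Integrable.mono' hIg' (hqp'.mul hIg'.aemeasurable).aestronglyMeasurable
        (ae_of_all _ (fun s => ?_))
      rw [Real.norm_eq_abs, abs_mul, habsq, one_mul, abs_of_nonneg (hg.nn s)]
    set a := ∫ x in Ioc (0:ℝ) t, q x with ha
    set b := ∫ x in Ioc (0:ℝ) ψt, q x with hb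
    set c := ∫ s in Ioc (0:ℝ) t, q (prim g s) * g s with hc
    set d := ∫ s in Ioc (0:ℝ) t, q (prim g s) with hd
    set e := ∫ x in Ioc (0:ℝ) t, w x with he
    have hsplit1 : ∫ x in Ioc (0:ℝ) t, (q x - w x) = a - e := integral_sub hIq' hIw'
    have hsplit2 : ∫ s in Ioc (0:ℝ) t, (q (prim g s) - w s) = d - e := integral_sub hIqp2 hIw'
    have hsplit3 : ∫ s in Ioc (0:ℝ) t, q (prim g s) * (1 - g s) = d - c := by
      have hfe : (fun s => q (prim g s) * (1 - g s))
          = fun s => q (prim g s) - q (prim g s) * g s := by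
        funext s
        ring
      rw [hfe, integral_sub hIqp2 hIqpg]
    rw [hsplit1]
    rw [hsplit2] at hT2
    rw [hsplit3] at hT3
    have hbc : c = b := hT4
    have h1 := abs_le.mp hT1
    have h2 := abs_le.mp hT2
    have h3 := abs_le.mp hT3
    have h5 := abs_le.mp hT5
    rw [abs_le]
    constructor <;> nlinarith [hsD]

/-- Uniform positive gap between `act q γ` and `w`. -/
lemma gap (q w : ℝ → ℝ) (hqm : Measurable q) (hwm : Measurable w)
    (hq1 : ∀ x, q x = 1 ∨ q x = -1) (hw1 : ∀ x, w x = 1 ∨ w x = -1)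
    (hne : 0 < μ01 {x | ¬ q x = w x}) :
    ∃ δ : ℝ, 0 < δ ∧ ∀ γ : GammaTilde, δ ≤ ∫ s in Icc (0:ℝ) 1, (act q γ s - w s)^2 := by
  by_contra hcon
  push_neg at hcon
  have hcon' : ∀ δ : ℝ, 0 < δ → ∃ γ : GammaTilde,
      ∫ s in Icc (0:ℝ) 1, (act q γ s - w s)^2 < δ := by
    intro δ hδ
    obtain ⟨γ, hγ⟩ := hcon δ hδ
    exact ⟨γ, hγ⟩
  have hzero : ∀ t ∈ Icc (0:ℝ) 1, ∫ s in Ioc (0:ℝ) t, (q s - w s) = 0 := by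
    intro t ht
    by_contra hne0
    set ε := |∫ s in Ioc (0:ℝ) t, (q s - w s)| with hε
    have hε0 : 0 < ε := abs_pos.mpr hne0
    set δ := min (ε/8) ((ε/20)^2) with hδ
    have hδ0 : 0 < δ := lt_min (by linarith) (by positivity)
    obtain ⟨γ, hγ⟩ := hcon' δ hδ0
    have hest := (main_est q w hqm hwm hq1 hw1 γ).2 δ hδ0 hγ.le t ht
    have h1 : Real.sqrt δ ≤ ε/20 := by
      refine le_trans (Real.sqrt_le_sqrt (min_le_right _ _)) ?_
      rw [Real.sqrt_sq (by linarith : (0:ℝ) ≤ ε/20)]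
    have h2 : δ ≤ ε/8 := min_le_left _ _
    linarith
  have hbd : ∀ x, |q x - w x| ≤ 2 := by
    intro x
    rcases hq1 x with h|h <;> rcases hw1 x with h'|h' <;> rw [h, h'] <;> norm_num
  have hvan := vanish (hqm.sub hwm) hbd hzero
  have hqw : ∀ᵐ s ∂μ01, q s = w s := by
    rw [mu01_def]
    filter_upwards [hvan] with s hs
    linarith [show q s - w s = 0 from hs]
  exact absurd (ae_iff.mp hqw) hne.ne'

end SF10

/-- if `q, w ∈ L²(I,ℝ)` are in standard form (each takes only the
values `±1` on `I`) and differ on a set of positive measure, then `w ∉ [q]`;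
indeed there is a constant `c < 1`, independent of `γ ∈ Γ`, with
`⟨q*γ, w⟩ ≤ c` for all `γ ∈ Γ`. -/
theorem standard_forms_in_distinct_orbits (q w : ℝ → ℝ)
    (hq : MemLp q 2 μ01) (hw : MemLp w 2 μ01)
    (hqsf : ∀ t ∈ Set.Icc (0:ℝ) 1, q t = 1 ∨ q t = -1)
    (hwsf : ∀ t ∈ Set.Icc (0:ℝ) 1, w t = 1 ∨ w t = -1)
    (hne : 0 < volume {t ∈ Set.Icc (0:ℝ) 1 | q t ≠ w t}) :
    w ∉ orbitClosure q ∧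
    ∃ c : ℝ, c < 1 ∧ ∀ γ : GammaTilde, γ.IsInGamma → L2inner (act q γ) w ≤ c := by
  classical
  have hmem01 : ∀ᵐ x ∂μ01, x ∈ Set.Icc (0:ℝ) 1 := by
    rw [SF10.mu01_def]
    exact ae_restrict_mem measurableSet_Icc
  -- measurable ±1-valued representatives
  have hqae : AEMeasurable q μ01 := hq.aestronglyMeasurable.aemeasurable
  have hwae : AEMeasurable w μ01 := hw.aestronglyMeasurable.aemeasurable
  set q1 : ℝ → ℝ := fun x => if hqae.mk q x = 1 then (1:ℝ) else -1 with hq1def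
  set w1 : ℝ → ℝ := fun x => if hwae.mk w x = 1 then (1:ℝ) else -1 with hw1def
  have hq1m : Measurable q1 :=
    Measurable.ite (hqae.measurable_mk (measurableSet_singleton 1))
      measurable_const measurable_const
  have hw1m : Measurable w1 :=
    Measurable.ite (hwae.measurable_mk (measurableSet_singleton 1))
      measurable_const measurable_const
  have hq1v : ∀ x, q1 x = 1 ∨ q1 x = -1 := fun x => by
    by_cases h : hqae.mk q x = 1 <;> simp [hq1def, h]
  have hw1v : ∀ x, w1 x = 1 ∨ w1 x = -1 := fun x => by
    by_cases h : hwae.mk w x = 1 <;> simp [hw1def, h]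
  have hq1e : q =ᵐ[μ01] q1 := by
    filter_upwards [hqae.ae_eq_mk, hmem01] with x h1 h2
    rcases hqsf x h2 with h|h
    · simp [hq1def, ← h1, h]
    · simp only [hq1def]
      rw [if_neg (by rw [← h1, h]; norm_num), h]
  have hw1e : w =ᵐ[μ01] w1 := by
    filter_upwards [hwae.ae_eq_mk, hmem01] with x h1 h2
    rcases hwsf x h2 with h|h
    · simp [hw1def, ← h1, h]
    · simp only [hw1def]
      rw [if_neg (by rw [← h1, h]; norm_num), h]
  -- transfer the positivity of the difference set
  have hq0 : μ01 {x | ¬ q x = q1 x} = 0 := ae_iff.mp hq1e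
  have hw0 : μ01 {x | ¬ w x = w1 x} = 0 := ae_iff.mp hw1e
  have hne1 : 0 < μ01 {x | ¬ q1 x = w1 x} := by
    by_contra hz
    push_neg at hz
    have hz0 : μ01 {x | ¬ q1 x = w1 x} = 0 := le_antisymm hz (by simp)
    have hsub2 : {t : ℝ | t ∈ Set.Icc (0:ℝ) 1 ∧ q t ≠ w t}
        ⊆ {x | ¬ q x = q1 x} ∪ ({x | ¬ w x = w1 x} ∪ {x | ¬ q1 x = w1 x}) := by
      intro x hx
      by_cases h1 : q x = q1 x
      · by_cases h2 : w x = w1 x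
        · exact Or.inr (Or.inr (fun hc => hx.2 (h1.trans (hc.trans h2.symm))))
        · exact Or.inr (Or.inl h2)
      · exact Or.inl h1
    have hv : μ01 {t : ℝ | t ∈ Set.Icc (0:ℝ) 1 ∧ q t ≠ w t} = 0 :=
      measure_mono_null hsub2
        (measure_union_null hq0 (measure_union_null hw0 hz0))
    rw [SF10.mu01_def, Measure.restrict_apply' measurableSet_Icc] at hv
    have hinter : {t : ℝ | t ∈ Set.Icc (0:ℝ) 1 ∧ q t ≠ w t} ∩ Set.Icc (0:ℝ) 1
        = {t : ℝ | t ∈ Set.Icc (0:ℝ) 1 ∧ q t ≠ w t} :=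
      Set.inter_eq_left.mpr (fun x hx => hx.1)
    rw [hinter] at hv
    have hne' : 0 < volume {t : ℝ | t ∈ Set.Icc (0:ℝ) 1 ∧ q t ≠ w t} := hne
    rw [hv] at hne'
    exact lt_irrefl _ hne'
  -- the uniform gap
  obtain ⟨δ, hδ0, hδ⟩ := SF10.gap q1 w1 hq1m hw1m hq1v hw1v hne1
  -- transfer integrals from (q, w) to (q1, w1)
  have hactw : ∀ γ : GammaTilde,
      (∀ᵐ s ∂(volume.restrict (Set.Icc (0:ℝ) 1)), act q γ s = act q1 γ s ∧ w s = w1 s) := by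
    intro γ
    have h1 := SF10.act_congr hq1m hq1e γ
    rw [SF10.mu01_def] at h1
    have h2 : w =ᵐ[volume.restrict (Set.Icc (0:ℝ) 1)] w1 := hw1e
    filter_upwards [h1, h2] with s hs1 hs2
    exact ⟨hs1, hs2⟩
  have hEeq : ∀ γ : GammaTilde,
      ∫ s in Set.Icc (0:ℝ) 1, (act q γ s - w s)^2
        = ∫ s in Set.Icc (0:ℝ) 1, (act q1 γ s - w1 s)^2 := by
    intro γ
    refine integral_congr_ae ?_
    filter_upwards [hactw γ] with s hs
    rw [hs.1, hs.2]
  have hInner : ∀ γ : GammaTilde,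
      L2inner (act q γ) w = 1 - (∫ s in Set.Icc (0:ℝ) 1, (act q1 γ s - w1 s)^2)/2 := by
    intro γ
    have h0 : L2inner (act q γ) w = ∫ s in Set.Icc (0:ℝ) 1, act q γ s * w s := by
        unfold L2inner; refine integral_congr_ae (ae_of_all _ fun s => ?_); simp [mul_comm]
    rw [h0]
    have h1 : ∫ s in Set.Icc (0:ℝ) 1, act q γ s * w s
        = ∫ s in Set.Icc (0:ℝ) 1, act q1 γ s * w1 s := by
      refine integral_congr_ae ?_
      filter_upwards [hactw γ] with s hs
      rw [hs.1, hs.2]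
    rw [h1, (SF10.main_est q1 w1 hq1m hw1m hq1v hw1v γ).1]
  constructor
  · rintro ⟨hmem, hclose⟩
    obtain ⟨r, ⟨γ, hγΓ, hre⟩, hdist⟩ := hclose (Real.sqrt δ) (Real.sqrt_pos.mpr hδ0)
    have hre' : r =ᵐ[volume.restrict (Set.Icc (0:ℝ) 1)] act q γ := hre
    have hint : ∫ s in Set.Icc (0:ℝ) 1, ‖r s - w s‖^2
        = ∫ s in Set.Icc (0:ℝ) 1, (act q1 γ s - w1 s)^2 := by
      refine integral_congr_ae ?_
      filter_upwards [hre', hactw γ] with s hs1 hs2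
      rw [Real.norm_eq_abs, sq_abs, hs1, hs2.1, hs2.2]
    have hge : Real.sqrt δ ≤ L2dist r w := by
      have : L2dist r w = Real.sqrt (∫ s in Set.Icc (0:ℝ) 1, ‖r s - w s‖^2) := rfl
      rw [this, hint]
      exact Real.sqrt_le_sqrt (hδ γ)
    linarith
  · refine ⟨1 - δ/2, by linarith, fun γ _ => ?_⟩
    rw [hInner γ]
    linarith [hδ γ]

end
end
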